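/- arXiv:math/9507205 — 5 statements merged into one kernel-verified Lean document; each statement's English description precedes it below -/
import Mathlib

section
/- For every integer n ≥ 2 there is a group homomorphism d_n : PL_n(ℝ) → ℤ/(n−1)ℤ such that for every f ∈ PL_n(ℝ) and every x ∈ ℤ[1/n], φ_n(f(x)) = φ_n(x) + d_n(f); in particular the quantity φ_n(f(x)) − φ_n(x) is independent of the choice of x ∈ ℤ[1/n]. -/
noncomputable section

/-- `ℤ[1/n]` realized as a subset of `ℝ`: all reals of the form `a * n^b` with `a b : ℤ`. -/
def zpows (n : ℕ) : Set ℝ := {x : ℝ | ∃ a b : ℤ, x = (a : ℝ) * (n : ℝ) ^ b}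

/-- The defining properties of the (unique) ring homomorphism `φₙ : ℤ[1/n] → ℤ/(n-1)ℤ`,
expressed for a function `φ : ℝ → ZMod (n-1)` restricted to the subset `zpows n`. -/
def IsPhi (n : ℕ) (φ : ℝ → ZMod (n - 1)) : Prop :=
  (∀ x ∈ zpows n, ∀ y ∈ zpows n, φ (x + y) = φ x + φ y) ∧
  (∀ x ∈ zpows n, ∀ y ∈ zpows n, φ (x * y) = φ x * φ y) ∧
  φ 1 = 1

/-- `B` is a discrete subset of `ℝ`: every point of `ℝ` has a neighborhood containing
at most one point of `B`. -/
def LocDiscrete (B : Set ℝ) : Prop := ∀ x : ℝ, ∃ ε > 0, ∀ y ∈ B, |y - x| < ε → y = x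

/-- Membership in `PLₙ(ℝ)`: an orientation-preserving homeomorphism of `ℝ`
(equivalently, a strictly monotone surjection), piecewise linear with breaks in a
discrete subset of `ℤ[1/n]`, all slopes integral powers of `n`, and mapping `ℤ[1/n]`
into itself. -/
def MemPL (n : ℕ) (f : ℝ → ℝ) : Prop :=
  StrictMono f ∧ Function.Surjective f ∧
  (∃ B : Set ℝ, B ⊆ zpows n ∧ LocDiscrete B ∧
    ∀ x ∉ B, ∃ (k : ℤ) (c : ℝ), ∃ ε > 0, ∀ y : ℝ, |y - x| < ε → f y = (n : ℝ) ^ k * y + c) ∧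
  (∀ q ∈ zpows n, f q ∈ zpows n)

/-- Membership in `BPLₙ(ℝ)`: elements of `PLₙ(ℝ)` with bounded support. -/
def MemBPL (n : ℕ) (f : ℝ → ℝ) : Prop :=
  MemPL n f ∧ ∃ M : ℝ, ∀ x : ℝ, M < |x| → f x = x

namespace PLAux

variable {n : ℕ}

lemma nR_pos (hn : 2 ≤ n) : (0:ℝ) < n := by
  have : 0 < n := by omega
  exact_mod_cast this
lemma nR_ne (hn : 2 ≤ n) : (n:ℝ) ≠ 0 := ne_of_gt (nR_pos hn)

lemma intCast_mem (m : ℤ) : (m : ℝ) ∈ zpows n := ⟨m, 0, by simp⟩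

lemma zero_mem : (0:ℝ) ∈ zpows n := ⟨0, 0, by simp⟩

lemma one_mem : (1:ℝ) ∈ zpows n := ⟨1, 0, by simp⟩

lemma zpow_mem (k : ℤ) : (n:ℝ) ^ k ∈ zpows n := ⟨1, k, by simp⟩

lemma neg_mem {x : ℝ} (hx : x ∈ zpows n) : -x ∈ zpows n := by
  obtain ⟨a, b, rfl⟩ := hx
  exact ⟨-a, b, by push_cast; ring⟩

lemma add_mem (hn : 2 ≤ n) {x y : ℝ} (hx : x ∈ zpows n) (hy : y ∈ zpows n) :
    x + y ∈ zpows n := by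
  have hn0 : (n:ℝ) ≠ 0 := nR_ne hn
  have key : ∀ (a b a' b' : ℤ), b ≤ b' →
      (a:ℝ) * (n:ℝ) ^ b + (a':ℝ) * (n:ℝ) ^ b' ∈ zpows n := by
    intro a b a' b' hbb
    refine ⟨a + a' * (n:ℤ) ^ (b' - b).toNat, b, ?_⟩
    have h1 : ((b' - b).toNat : ℤ) = b' - b := Int.toNat_of_nonneg (by omega)
    have h2 : (n:ℝ) ^ b' = (n:ℝ) ^ ((b' - b).toNat : ℤ) * (n:ℝ) ^ b := by
      rw [h1, ← zpow_add₀ hn0]; ring_nf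
    push_cast
    rw [h2, zpow_natCast]
    ring
  obtain ⟨a, b, rfl⟩ := hx
  obtain ⟨a', b', rfl⟩ := hy
  rcases le_total b b' with h | h
  · exact key a b a' b' h
  · have := key a' b' a b h
    simpa [add_comm] using this

lemma sub_mem (hn : 2 ≤ n) {x y : ℝ} (hx : x ∈ zpows n) (hy : y ∈ zpows n) :
    x - y ∈ zpows n := by
  rw [sub_eq_add_neg]; exact add_mem hn hx (neg_mem hy)

lemma mul_mem (hn : 2 ≤ n) {x y : ℝ} (hx : x ∈ zpows n) (hy : y ∈ zpows n) :
    x * y ∈ zpows n := by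
  have hn0 : (n:ℝ) ≠ 0 := nR_ne hn
  obtain ⟨a, b, rfl⟩ := hx
  obtain ⟨a', b', rfl⟩ := hy
  exact ⟨a * a', b + b', by push_cast; rw [zpow_add₀ hn0]; ring⟩

lemma dense' (hn : 2 ≤ n) (x ε : ℝ) (hε : 0 < ε) : ∃ y ∈ zpows n, |y - x| < ε := by
  have h1 : (1:ℝ) < n := by exact_mod_cast hn
  obtain ⟨b, hb⟩ := pow_unbounded_of_one_lt (1/ε) (by linarith : (1:ℝ) < n)
  set N : ℝ := (n:ℝ) ^ b with hN
  have hNpos : 0 < N := by positivity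
  refine ⟨(⌊x * N⌋ : ℝ) * (n:ℝ) ^ (-(b:ℤ)), ⟨⌊x * N⌋, -(b:ℤ), rfl⟩, ?_⟩
  have hinv : (n:ℝ) ^ (-(b:ℤ)) = N⁻¹ := by
    rw [zpow_neg, zpow_natCast]
  rw [hinv]
  have hf1 : (⌊x * N⌋ : ℝ) ≤ x * N := Int.floor_le _
  have hf2 : x * N < ⌊x * N⌋ + 1 := Int.lt_floor_add_one _
  have hNε : 1 / ε < N := hb
  have h1N : 1 / N < ε := by
    rw [div_lt_iff₀ hNpos]
    rw [div_lt_iff₀ hε] at hNε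
    linarith
  rw [abs_lt]
  constructor
  · have : (⌊x * N⌋ : ℝ) * N⁻¹ - x = ((⌊x * N⌋ : ℝ) - x * N) / N := by
      field_simp
    rw [this]
    have h4 : (-1 : ℝ) / N < ((⌊x * N⌋ : ℝ) - x * N) / N :=
      div_lt_div_of_pos_right (by linarith) hNpos
    have h5 : (-1 : ℝ) / N = -(1 / N) := by ring
    linarith
  · have : (⌊x * N⌋ : ℝ) * N⁻¹ - x = ((⌊x * N⌋ : ℝ) - x * N) / N := by
      field_simp
    rw [this]
    have h3 : ((⌊x * N⌋ : ℝ) - x * N) / N < 1 / N :=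
      div_lt_div_of_pos_right (by linarith) hNpos
    linarith

end PLAux

namespace PLAux

variable {n : ℕ} {φ : ℝ → ZMod (n - 1)}

lemma phi_zero (hφ : IsPhi n φ) : φ 0 = 0 := by
  have := hφ.1 0 zero_mem 0 zero_mem
  simp at this
  exact this

lemma phi_neg (hφ : IsPhi n φ) {x : ℝ} (hx : x ∈ zpows n) : φ (-x) = -φ x := by
  have := hφ.1 x hx (-x) (neg_mem hx)
  simp [phi_zero hφ] at this
  linear_combination -this

lemma phi_sub (hn : 2 ≤ n) (hφ : IsPhi n φ) {x y : ℝ} (hx : x ∈ zpows n)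
    (hy : y ∈ zpows n) : φ (x - y) = φ x - φ y := by
  rw [sub_eq_add_neg, hφ.1 x hx (-y) (neg_mem hy), phi_neg hφ hy]; ring

lemma phi_nat (hφ : IsPhi n φ) (m : ℕ) : φ (m : ℝ) = (m : ZMod (n - 1)) := by
  induction m with
  | zero => simpa using phi_zero hφ
  | succ k ih =>
    have hk : ((k : ℕ) : ℝ) ∈ zpows n := ⟨(k:ℤ), 0, by push_cast; simp⟩
    have h1 : ((k+1 : ℕ) : ℝ) = ((k:ℕ) : ℝ) + 1 := by push_cast; ring
    rw [h1, hφ.1 _ hk 1 one_mem, ih, hφ.2.2]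
    push_cast; ring

lemma phi_n (hn : 2 ≤ n) (hφ : IsPhi n φ) : φ (n : ℝ) = 1 := by
  rw [phi_nat hφ n]
  have h1 : n = (n - 1) + 1 := by omega
  rw [h1]
  push_cast [ZMod.natCast_self]
  ring

lemma npow_mem (m : ℕ) : (n:ℝ) ^ m ∈ zpows n := ⟨(n:ℤ)^m, 0, by push_cast; simp⟩

lemma natCast_mem (m : ℕ) : (m : ℝ) ∈ zpows n := ⟨(m:ℤ), 0, by push_cast; simp⟩

lemma phi_npow (hn : 2 ≤ n) (hφ : IsPhi n φ) (m : ℕ) : φ ((n : ℝ) ^ m) = 1 := by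
  induction m with
  | zero => simpa using hφ.2.2
  | succ k ih =>
    rw [pow_succ, hφ.2.1 _ (npow_mem k) _ (natCast_mem n), ih, phi_n hn hφ, mul_one]

lemma phi_zpow (hn : 2 ≤ n) (hφ : IsPhi n φ) (k : ℤ) : φ ((n : ℝ) ^ k) = 1 := by
  have hn0 : (n:ℝ) ≠ 0 := nR_ne hn
  rcases le_or_gt 0 k with h | h
  · lift k to ℕ using h
    rw [zpow_natCast]; exact phi_npow hn hφ k
  · set m := (-k).toNat with hm
    have hmk : (m : ℤ) = -k := Int.toNat_of_nonneg (by omega)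
    have hmul : (n:ℝ) ^ k * (n:ℝ) ^ m = 1 := by
      rw [← zpow_natCast (n:ℝ) m, hmk, ← zpow_add₀ hn0]
      simp
    have := hφ.2.1 _ (zpow_mem k) _ (npow_mem m)
    rw [hmul, hφ.2.2, phi_npow hn hφ m, mul_one] at this
    exact this.symm

lemma isOpen_ballProp (p : ℝ → Prop) :
    IsOpen {y : ℝ | ∃ δ > 0, ∀ z : ℝ, |z - y| < δ → p z} := by
  rw [Metric.isOpen_iff]
  rintro y ⟨δ, hδ, h⟩
  refine ⟨δ, hδ, fun y' hy' => ?_⟩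
  rw [Metric.mem_ball, Real.dist_eq] at hy'
  refine ⟨δ - |y' - y|, by linarith, fun z hz => h z ?_⟩
  have := abs_sub_le z y' y
  linarith

lemma affine_params_eq {s c s' c' u v : ℝ} (huv : u < v)
    (h : ∀ w ∈ Set.Ioo u v, s * w + c = s' * w + c') : s = s' ∧ c = c' := by
  have h1 := h (u + (v - u) / 3) ⟨by linarith, by linarith⟩
  have h2 := h (u + (v - u) / 2) ⟨by linarith, by linarith⟩
  have h4 : s * ((v - u) / 6) = s' * ((v - u) / 6) := by linear_combination h2 - h1
  have hne : (v - u) / 6 ≠ 0 := ne_of_gt (by linarith)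
  have hs : s = s' := mul_right_cancel₀ hne h4
  exact ⟨hs, by linear_combination h1 - (u + (v - u) / 3) * hs⟩

end PLAux

namespace PLAux

open Set

lemma affine_Ioo {f : ℝ → ℝ} {Sl : Set ℝ} {a b : ℝ} (hab : a < b)
    (h : ∀ y ∈ Set.Ioo a b, ∃ s ∈ Sl, ∃ c : ℝ, ∃ ε > 0, ∀ z, |z - y| < ε → f z = s * z + c) :
    ∃ s ∈ Sl, ∃ c : ℝ, ∀ z ∈ Set.Ioo a b, f z = s * z + c := by
  have hm : (a + b) / 2 ∈ Ioo a b := ⟨by linarith, by linarith⟩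
  obtain ⟨s₀, hs₀, c₀, ε₀, hε₀, hm0⟩ := h _ hm
  set U := {y : ℝ | ∃ δ > 0, ∀ z, |z - y| < δ → f z = s₀ * z + c₀} with hU
  have overlap : ∀ (s c y ε : ℝ), 0 < ε → (∀ z, |z - y| < ε → f z = s * z + c) →
      ∀ z', z' ∈ U → |z' - y| < ε → y ∈ U := by
    rintro s c y ε hε hp z' ⟨δ, hδ, hz'⟩ hd
    set r := min δ (ε - |z' - y|) with hr
    have hrpos : 0 < r := lt_min hδ (by linarith)
    have hag : ∀ w ∈ Ioo z' (z' + r), s * w + c = s₀ * w + c₀ := by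
      intro w hw
      have hr1 : r ≤ δ := min_le_left _ _
      have hr2 : r ≤ ε - |z' - y| := min_le_right _ _
      have h1 : |w - z'| < δ := by
        rw [abs_lt]; exact ⟨by linarith [hw.1], by linarith [hw.2]⟩
      have h2 : |w - y| < ε := by
        have t1 := abs_sub_le w z' y
        have t2 : |w - z'| < r := by
          rw [abs_lt]; exact ⟨by linarith [hw.1], by linarith [hw.2]⟩
        linarith
      rw [← hp w h2, hz' w h1]
    obtain ⟨hs, hc⟩ := affine_params_eq (by linarith : z' < z' + r) hag
    exact ⟨ε, hε, fun z hz => by rw [hp z hz, hs, hc]⟩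
  have hUopen : IsOpen U := isOpen_ballProp _
  set V := {y : ℝ | ∃ δ > 0, ∀ z, |z - y| < δ → z ∉ U} with hV
  have hVopen : IsOpen V := isOpen_ballProp _
  have hcover : Ioo a b ⊆ U ∪ V := by
    intro y hy
    by_cases hyU : y ∈ U
    · exact Or.inl hyU
    · right
      obtain ⟨s, hs, c, ε, hε, hp⟩ := h y hy
      refine ⟨ε / 2, by linarith, fun z hz hzU => hyU ?_⟩
      exact overlap s c y ε hε hp z hzU (by linarith)
  have hdisj : ∀ y, y ∈ U → y ∈ V → False := by
    rintro y hyU ⟨δ, hδ, hyV⟩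
    exact hyV y (by simpa using hδ) hyU
  have hIU : (Ioo a b ∩ U).Nonempty := ⟨(a + b) / 2, hm, ⟨ε₀, hε₀, hm0⟩⟩
  have hsubU : Ioo a b ⊆ U := by
    intro y hy
    rcases hcover hy with hyU | hyV
    · exact hyU
    · exfalso
      have hne : (Ioo a b ∩ V).Nonempty := ⟨y, hy, hyV⟩
      obtain ⟨z, hz1, hz2, hz3⟩ := isPreconnected_Ioo U V hUopen hVopen hcover hIU hne
      exact hdisj z hz2 hz3
  refine ⟨s₀, hs₀, c₀, fun z hz => ?_⟩
  obtain ⟨δ, hδ, hp⟩ := hsubU hz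
  exact hp z (by simpa using hδ)

end PLAux

namespace PLAux

open Set

variable {n : ℕ} {φ : ℝ → ZMod (n - 1)}

/-- Local constancy of `x ↦ φ (f x) - φ x` on `zpows n`, at every real point. -/
lemma locconst (hn : 2 ≤ n) (hφ : IsPhi n φ) {f : ℝ → ℝ} (hf : MemPL n f) (x : ℝ) :
    ∃ ε > 0, ∃ w : ZMod (n - 1), ∀ y ∈ zpows n, |y - x| < ε → φ (f y) - φ y = w := by
  obtain ⟨hmono, hsurj, ⟨B, hBsub, hBdisc, hpiece⟩, hmap⟩ := hf
  -- key computation on a linear piece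
  have hpsi : ∀ (k : ℤ) (c : ℝ), c ∈ zpows n → ∀ y ∈ zpows n,
      f y = (n:ℝ) ^ k * y + c → φ (f y) - φ y = φ c := by
    intro k c hc y hy hfy
    rw [hfy, hφ.1 _ (mul_mem hn (zpow_mem k) hy) _ hc,
      hφ.2.1 _ (zpow_mem k) _ hy, phi_zpow hn hφ k, one_mul]
    ring
  by_cases hxB : x ∈ B
  · -- break point
    obtain ⟨ε, hε, hB⟩ := hBdisc x
    have hxz : x ∈ zpows n := hBsub hxB
    have hcont : Continuous f := by
      have := Monotone.continuous_of_surjective hmono.monotone hsurj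
      exact this
    set Sl : Set ℝ := {s | ∃ k : ℤ, s = (n:ℝ) ^ k} with hSl
    have hLaff : ∃ s ∈ Sl, ∃ c : ℝ, ∀ z ∈ Ioo (x - ε) x, f z = s * z + c := by
      apply affine_Ioo (by linarith)
      intro y hy
      have hyB : y ∉ B := by
        intro hmem
        have := hB y hmem (by rw [abs_lt]; exact ⟨by linarith [hy.1], by linarith [hy.2]⟩)
        linarith [hy.2, this.ge]
      obtain ⟨k, c, ε', hε', hp⟩ := hpiece y hyB
      exact ⟨(n:ℝ)^k, ⟨k, rfl⟩, c, ε', hε', hp⟩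
    have hRaff : ∃ s ∈ Sl, ∃ c : ℝ, ∀ z ∈ Ioo x (x + ε), f z = s * z + c := by
      apply affine_Ioo (by linarith)
      intro y hy
      have hyB : y ∉ B := by
        intro hmem
        have := hB y hmem (by rw [abs_lt]; exact ⟨by linarith [hy.1], by linarith [hy.2]⟩)
        linarith [hy.1, this.le]
      obtain ⟨k, c, ε', hε', hp⟩ := hpiece y hyB
      exact ⟨(n:ℝ)^k, ⟨k, rfl⟩, c, ε', hε', hp⟩
    obtain ⟨sL, ⟨k, rfl⟩, c0, hL⟩ := hLaff
    obtain ⟨sR, ⟨k', rfl⟩, c1, hR⟩ := hRaff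
    -- continuity at x gives the matching conditions
    have hfxL : f x = (n:ℝ) ^ k * x + c0 := by
      have heq : Set.EqOn f (fun z => (n:ℝ) ^ k * z + c0) (Ioo (x - ε) x) := fun z hz => hL z hz
      have hcl := heq.closure hcont (by exact (continuous_const.mul continuous_id).add continuous_const)
      have hx' : x ∈ closure (Ioo (x - ε) x) := by
        rw [closure_Ioo (by linarith : x - ε ≠ x)]
        exact ⟨by linarith, le_refl x⟩
      exact hcl hx'
    have hfxR : f x = (n:ℝ) ^ k' * x + c1 := by
      have heq : Set.EqOn f (fun z => (n:ℝ) ^ k' * z + c1) (Ioo x (x + ε)) := fun z hz => hR z hz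
      have hcl := heq.closure hcont (by exact (continuous_const.mul continuous_id).add continuous_const)
      have hx' : x ∈ closure (Ioo x (x + ε)) := by
        rw [closure_Ioo (by linarith : x ≠ x + ε)]
        exact ⟨le_refl x, by linarith⟩
      exact hcl hx'
    -- c0 lies in zpows
    obtain ⟨y₀, hy₀m, hy₀d⟩ := dense' hn (x - ε / 2) (ε / 2) (by linarith)
    have hy₀I : y₀ ∈ Ioo (x - ε) x := by
      rw [abs_lt] at hy₀d; exact ⟨by linarith [hy₀d.1], by linarith [hy₀d.2]⟩
    have hc0 : c0 ∈ zpows n := by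
      have h1 : c0 = f y₀ - (n:ℝ) ^ k * y₀ := by linarith [hL y₀ hy₀I]
      rw [h1]
      exact sub_mem hn (hmap y₀ hy₀m) (mul_mem hn (zpow_mem k) hy₀m)
    have hc1eq : c1 = (n:ℝ) ^ k * x + c0 - (n:ℝ) ^ k' * x := by linarith
    have hc1 : c1 ∈ zpows n :=
      hc1eq ▸ sub_mem hn (add_mem hn (mul_mem hn (zpow_mem k) hxz) hc0)
        (mul_mem hn (zpow_mem k') hxz)
    have hφc1 : φ c1 = φ c0 := by
      rw [hc1eq, phi_sub hn hφ (add_mem hn (mul_mem hn (zpow_mem k) hxz) hc0)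
          (mul_mem hn (zpow_mem k') hxz),
        hφ.1 _ (mul_mem hn (zpow_mem k) hxz) _ hc0,
        hφ.2.1 _ (zpow_mem k) _ hxz, hφ.2.1 _ (zpow_mem k') _ hxz,
        phi_zpow hn hφ k, phi_zpow hn hφ k']
      ring
    refine ⟨ε, hε, φ c0, fun y hy hyd => ?_⟩
    rw [abs_lt] at hyd
    rcases lt_trichotomy y x with h | h | h
    · exact hpsi k c0 hc0 y hy (hL y ⟨by linarith [hyd.1], h⟩)
    · subst h; exact hpsi k c0 hc0 y hy hfxL
    · rw [hpsi k' c1 hc1 y hy (hR y ⟨h, by linarith [hyd.2]⟩), hφc1]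
  · -- non-break point
    obtain ⟨k, c, ε, hε, hp⟩ := hpiece x hxB
    obtain ⟨y₀, hy₀m, hy₀d⟩ := dense' hn x ε hε
    have hc : c ∈ zpows n := by
      have h1 : c = f y₀ - (n:ℝ) ^ k * y₀ := by linarith [hp y₀ hy₀d]
      rw [h1]
      exact sub_mem hn (hmap y₀ hy₀m) (mul_mem hn (zpow_mem k) hy₀m)
    exact ⟨ε, hε, φ c, fun y hy hyd => hpsi k c hc y hy (hp y hyd)⟩

/-- Global constancy of `x ↦ φ (f x) - φ x` on `zpows n`. -/
lemma psi_const (hn : 2 ≤ n) (hφ : IsPhi n φ) {f : ℝ → ℝ} (hf : MemPL n f) :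
    ∀ x ∈ zpows n, ∀ y ∈ zpows n, φ (f x) - φ x = φ (f y) - φ y := by
  set v := φ (f 0) - φ 0 with hv
  suffices h : ∀ y ∈ zpows n, φ (f y) - φ y = v by
    intro x hx y hy; rw [h x hx, h y hy]
  set T := {x : ℝ | ∃ δ > 0, ∀ z : ℝ, |z - x| < δ → z ∈ zpows n → φ (f z) - φ z = v} with hT
  have hTopen : IsOpen T :=
    isOpen_ballProp (fun z => z ∈ zpows n → φ (f z) - φ z = v)
  have h0T : (0:ℝ) ∈ T := by
    obtain ⟨ε, hε, w, hw⟩ := locconst hn hφ hf 0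
    have hwv : w = v := by
      rw [hv, ← hw 0 zero_mem (by simpa using hε)]
    exact ⟨ε, hε, fun z hz hzm => by rw [hw z hzm hz, hwv]⟩
  have hTclosed : IsClosed T := by
    rw [← isOpen_compl_iff, Metric.isOpen_iff]
    intro x hx
    obtain ⟨ε, hε, w, hw⟩ := locconst hn hφ hf x
    have hwv : w ≠ v := by
      intro h
      exact hx ⟨ε, hε, fun z hz hzm => by rw [hw z hzm hz, h]⟩
    refine ⟨ε, hε, fun z hz => ?_⟩
    rw [Metric.mem_ball, Real.dist_eq] at hz
    rintro ⟨δ, hδ, hTz⟩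
    obtain ⟨y, hym, hyd⟩ := dense' hn z (min δ (ε - |z - x|)) (lt_min hδ (by linarith))
    have h1 : φ (f y) - φ y = v :=
      hTz y (lt_of_lt_of_le hyd (min_le_left _ _)) hym
    have h2 : φ (f y) - φ y = w := by
      apply hw y hym
      have t1 := abs_sub_le y z x
      have t2 := lt_of_lt_of_le hyd (min_le_right _ _)
      linarith
    exact hwv (h2.symm.trans h1)
  have hTuniv : T = Set.univ := IsClopen.eq_univ ⟨hTclosed, hTopen⟩ ⟨0, h0T⟩
  intro y hy
  have hyT : y ∈ T := hTuniv ▸ Set.mem_univ y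
  obtain ⟨δ, hδ, h⟩ := hyT
  exact h y (by simpa using hδ) hy

end PLAux

/-- For every integer `n ≥ 2` there is a group homomorphism
`dₙ : PLₙ(ℝ) → ℤ/(n-1)ℤ` with `φₙ(f x) = φₙ x + dₙ f` for all `f ∈ PLₙ(ℝ)` and
`x ∈ ℤ[1/n]`; in particular `φₙ(f x) - φₙ x` is independent of `x ∈ ℤ[1/n]`. -/
theorem stmt_1 (n : ℕ) (hn : 2 ≤ n) (φ : ℝ → ZMod (n - 1)) (hφ : IsPhi n φ) :
    ∃ d : (ℝ → ℝ) → ZMod (n - 1),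
      (∀ f g : ℝ → ℝ, MemPL n f → MemPL n g → d (f ∘ g) = d f + d g) ∧
      (∀ f : ℝ → ℝ, MemPL n f → ∀ x ∈ zpows n, φ (f x) = φ x + d f) ∧
      (∀ f : ℝ → ℝ, MemPL n f → ∀ x ∈ zpows n, ∀ y ∈ zpows n,
        φ (f x) - φ x = φ (f y) - φ y) := by
  refine ⟨fun f => φ (f 0) - φ 0, ?_, ?_, ?_⟩
  · intro f g hf hg
    obtain ⟨_, _, _, hgmap⟩ := hg
    have hg0 : g 0 ∈ zpows n := hgmap 0 PLAux.zero_mem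
    have h1 := PLAux.psi_const hn hφ hf (g 0) hg0 0 PLAux.zero_mem
    simp only [Function.comp_apply]
    linear_combination h1
  · intro f hf x hx
    have h1 := PLAux.psi_const hn hφ hf x hx 0 PLAux.zero_mem
    linear_combination h1
  · intro f hf x hx y hy
    exact PLAux.psi_const hn hφ hf x hx y hy
end
end

section
/- For every integer n ≥ 2 and every f ∈ F_n one has φ_n(f(x)) = φ_n(x) for all x ∈ ℤ[1/n]; consequently every element of F_n (and hence every element of BPL_n(ℝ)) maps each coset of Δ_n in ℤ[1/n] onto itself. -/
noncomputable section

/-- Membership in `Fₙ`: elements of `PLₙ(ℝ)` that are translation by `i(n-1)` near `+∞`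
and by `j(n-1)` near `-∞`. -/
def MemF (n : ℕ) (f : ℝ → ℝ) : Prop :=
  MemPL n f ∧ ∃ (i j : ℤ) (M : ℝ),
    (∀ x : ℝ, M < x → f x = x + (i : ℝ) * ((n : ℝ) - 1)) ∧
    (∀ x : ℝ, x < -M → f x = x + (j : ℝ) * ((n : ℝ) - 1))

set_option linter.unusedSectionVars false

section zp
variable {n : ℕ}

lemma nne (hn : 2 ≤ n) : (n:ℝ) ≠ 0 := by
  have : (0:ℝ) < n := by exact_mod_cast Nat.lt_of_lt_of_le (by norm_num) hn
  linarith

lemma int_mem_zpows (a : ℤ) : (a:ℝ) ∈ zpows n := ⟨a, 0, by simp⟩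

lemma zpow_mem_zpows (k : ℤ) : (n:ℝ) ^ k ∈ zpows n := ⟨1, k, by simp⟩

lemma zpows_add (hn : 2 ≤ n) {x y : ℝ} (hx : x ∈ zpows n) (hy : y ∈ zpows n) :
    x + y ∈ zpows n := by
  obtain ⟨a1, b1, rfl⟩ := hx
  obtain ⟨a2, b2, rfl⟩ := hy
  refine ⟨a1 * (n:ℤ) ^ (b1 - min b1 b2).toNat + a2 * (n:ℤ) ^ (b2 - min b1 b2).toNat, min b1 b2, ?_⟩
  have h1 : ((b1 - min b1 b2).toNat : ℤ) = b1 - min b1 b2 := Int.toNat_of_nonneg (by omega)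
  have h2 : ((b2 - min b1 b2).toNat : ℤ) = b2 - min b1 b2 := Int.toNat_of_nonneg (by omega)
  have hne := nne hn
  push_cast
  rw [add_mul, mul_assoc, mul_assoc, ← zpow_natCast (n:ℝ), ← zpow_natCast (n:ℝ), ← zpow_add₀ hne, ← zpow_add₀ hne, h1, h2]
  ring_nf

lemma zpows_neg {x : ℝ} (hx : x ∈ zpows n) : -x ∈ zpows n := by
  obtain ⟨a, b, rfl⟩ := hx; exact ⟨-a, b, by push_cast; ring⟩

lemma zpows_sub (hn : 2 ≤ n) {x y : ℝ} (hx : x ∈ zpows n) (hy : y ∈ zpows n) :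
    x - y ∈ zpows n := by
  rw [sub_eq_add_neg]; exact zpows_add hn hx (zpows_neg hy)

lemma zpows_mul (hn : 2 ≤ n) {x y : ℝ} (hx : x ∈ zpows n) (hy : y ∈ zpows n) :
    x * y ∈ zpows n := by
  obtain ⟨a1, b1, rfl⟩ := hx
  obtain ⟨a2, b2, rfl⟩ := hy
  exact ⟨a1 * a2, b1 + b2, by push_cast; rw [zpow_add₀ (nne hn)]; ring⟩

lemma zpows_dense (hn : 2 ≤ n) (x : ℝ) {ε : ℝ} (hε : 0 < ε) :
    ∃ q ∈ zpows n, |q - x| < ε := by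
  have h1 : (1:ℝ) < n := by exact_mod_cast Nat.lt_of_lt_of_le (by norm_num) hn
  obtain ⟨b, hb⟩ := pow_unbounded_of_one_lt (1/ε) h1
  refine ⟨(⌊x * (n:ℝ)^b⌋ : ℝ) * (n:ℝ) ^ (-(b:ℤ)), ⟨⌊x * (n:ℝ)^b⌋, -(b:ℤ), rfl⟩, ?_⟩
  have hp : (0:ℝ) < (n:ℝ)^b := by positivity
  rw [zpow_neg, zpow_natCast, abs_lt]
  set p : ℝ := (n:ℝ)^b with hpdef
  have h2 : x * p - 1 < (⌊x * p⌋ : ℝ) := Int.sub_one_lt_floor _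
  have h3 : (⌊x * p⌋ : ℝ) ≤ x * p := Int.floor_le _
  have hpe : 1/p < ε := by
    rw [div_lt_iff₀ hp]
    rw [div_lt_iff₀ hε] at hb
    linarith
  have hq : (⌊x*p⌋:ℝ) * p⁻¹ - x = ((⌊x*p⌋:ℝ) - x*p) * p⁻¹ := by field_simp
  have hub : ((⌊x*p⌋:ℝ) - x*p) * p⁻¹ ≤ 0 :=
    mul_nonpos_iff.2 (Or.inr ⟨by linarith, (inv_pos.2 hp).le⟩)
  have hlb : (-1) * p⁻¹ < ((⌊x*p⌋:ℝ) - x*p) * p⁻¹ :=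
    mul_lt_mul_of_pos_right (by linarith) (inv_pos.2 hp)
  have hip : -p⁻¹ = -(1/p) := by ring
  constructor <;> nlinarith [inv_pos.2 hp]


section phi
variable {n : ℕ} {φ : ℝ → ZMod (n - 1)} (hn : 2 ≤ n) (hφ : IsPhi n φ)
include hn hφ

omit hn hφ in
lemma zero_mem_zpows : (0:ℝ) ∈ zpows n := ⟨0, 0, by simp⟩
omit hn hφ in
lemma one_mem_zpows : (1:ℝ) ∈ zpows n := ⟨1, 0, by simp⟩

lemma phi_zero : φ 0 = 0 := by
  have := hφ.1 0 zero_mem_zpows 0 zero_mem_zpows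
  simp at this
  exact this

lemma phi_int (a : ℤ) : φ (a : ℝ) = (a : ZMod (n-1)) := by
  induction a using Int.induction_on with
  | zero => simpa using phi_zero hn hφ
  | succ k ih =>
      have := hφ.1 (k:ℝ) (int_mem_zpows k) 1 one_mem_zpows
      push_cast at *
      rw [this, ih, hφ.2.2]
  | pred k ih =>
      have := hφ.1 ((-k:ℤ) - 1 : ℝ) (by exact_mod_cast int_mem_zpows (-k-1)) 1 one_mem_zpows
      push_cast at *
      rw [show (-(k:ℝ) - 1) + 1 = -k by ring] at this
      rw [ih] at this
      linear_combination -this - hφ.2.2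

lemma phi_n : φ (n : ℝ) = 1 := by
  have h1 : φ ((n:ℤ) : ℝ) = ((n:ℤ) : ZMod (n-1)) := phi_int hn hφ (n:ℤ)
  push_cast at h1
  rw [h1]
  have : ((n - 1 : ℕ) : ZMod (n-1)) = 0 := ZMod.natCast_self _
  have hn1 : n = (n-1) + 1 := by omega
  calc (n : ZMod (n-1)) = ((n-1)+1 : ℕ) := by rw [← hn1]
  _ = 1 := by push_cast [this]; ring

lemma phi_zpow (k : ℤ) : φ ((n:ℝ) ^ k) = 1 := by
  have base : ∀ m : ℕ, φ ((n:ℝ) ^ (m:ℤ)) = 1 := by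
    intro m
    induction m with
    | zero => simpa using hφ.2.2
    | succ m ih =>
        have := hφ.2.2
        have h := hφ.2.1 ((n:ℝ)^(m:ℤ)) (zpow_mem_zpows _) (n:ℝ) (by exact_mod_cast int_mem_zpows (n:ℤ))
        rw [show ((n:ℝ)^(m:ℤ) * n) = (n:ℝ)^((m+1 : ℕ):ℤ) by push_cast; rw [zpow_add₀ (nne hn)]; simp] at h
        rw [h, ih, phi_n hn hφ, one_mul]
  rcases le_or_gt 0 k with hk | hk
  · obtain ⟨m, rfl⟩ := Int.eq_ofNat_of_zero_le hk
    exact base m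
  · have h := hφ.2.1 ((n:ℝ)^k) (zpow_mem_zpows _) ((n:ℝ)^(-k)) (zpow_mem_zpows _)
    rw [← zpow_add₀ (nne hn), add_neg_cancel] at h
    obtain ⟨m, hm⟩ := Int.eq_ofNat_of_zero_le (by omega : (0:ℤ) ≤ -k)
    rw [hm, base m, show ((n:ℝ)^(0:ℤ)) = 1 by simp, hφ.2.2, mul_one] at h
    exact h.symm

lemma phi_diff {x y : ℝ} (hx : x ∈ zpows n) (hy : y ∈ zpows n) :
    φ y - φ x = φ (y - x) := by
  have h := hφ.1 x hx (y - x) (zpows_sub hn hy hx)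
  rw [show x + (y - x) = y by ring] at h
  linear_combination h

lemma phi_zpow_mul {x : ℝ} (hx : x ∈ zpows n) (k : ℤ) :
    φ ((n:ℝ)^k * x) = φ x := by
  rw [hφ.2.1 _ (zpow_mem_zpows _) _ hx, phi_zpow hn hφ, one_mul]

end phi

section analytic
variable {n : ℕ} {f : ℝ → ℝ} {B : Set ℝ}

lemma f_cont (hmono : StrictMono f) (hsurj : Function.Surjective f) : Continuous f :=
  (StrictMono.orderIsoOfSurjective f hmono hsurj).continuous

lemma affine_line {k k' : ℤ} {c c' w1 w2 : ℝ} (hw : w1 ≠ w2)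
    (h1 : (n:ℝ)^k * w1 + c = (n:ℝ)^k' * w1 + c')
    (h2 : (n:ℝ)^k * w2 + c = (n:ℝ)^k' * w2 + c') :
    ∀ w : ℝ, (n:ℝ)^k * w + c = (n:ℝ)^k' * w + c' := by
  intro w
  have hs : (n:ℝ)^k = (n:ℝ)^k' := by
    have : ((n:ℝ)^k - (n:ℝ)^k') * (w1 - w2) = 0 := by linarith
    rcases mul_eq_zero.1 this with h | h
    · linarith
    · exact absurd (by linarith : w1 = w2) hw
  have hc : c = c' := by rw [hs] at h1; linarith
  rw [hs, hc]

lemma affine_on (hf : Continuous f)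
    (haff : ∀ x ∉ B, ∃ (k : ℤ) (c : ℝ), ∃ ε > 0, ∀ y : ℝ, |y - x| < ε → f y = (n : ℝ) ^ k * y + c)
    {u v : ℝ} (huv : u < v) (hB : ∀ z ∈ B, z ∉ Set.Ioo u v) :
    ∃ (k : ℤ) (c : ℝ), ∀ z ∈ Set.Icc u v, f z = (n:ℝ)^k * z + c := by
  have hz0 : (u+v)/2 ∈ Set.Ioo u v := ⟨by linarith, by linarith⟩
  obtain ⟨k, c, ε, hε, hkc⟩ := haff ((u+v)/2) (fun h => hB _ h hz0)
  refine ⟨k, c, ?_⟩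
  set g : ℝ → ℝ := fun w => (n:ℝ)^k * w + c with hg
  set A : Set ℝ := {z | ∃ δ > 0, ∀ w, |w - z| < δ → f w = g w} with hA
  have hAopen : IsOpen A := by
    rw [Metric.isOpen_iff]
    rintro z ⟨δ, hδ, hz⟩
    refine ⟨δ/2, by linarith, fun w hw => ⟨δ/2, by linarith, fun y hy => hz y ?_⟩⟩
    rw [Metric.mem_ball, Real.dist_eq] at hw
    have : |y - z| ≤ |y - w| + |w - z| := abs_sub_le _ _ _
    linarith
  have hsub : Set.Ioo u v ⊆ A := by
    apply isPreconnected_Ioo.subset_of_closure_inter_subset hAopen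
      ⟨(u+v)/2, hz0, ⟨ε, hε, hkc⟩⟩
    rintro z ⟨hzc, hzI⟩
    obtain ⟨k', c', ε', hε', hkc'⟩ := haff z (fun h => hB _ h hzI)
    obtain ⟨a, ha, haz⟩ := Metric.mem_closure_iff.1 hzc (ε'/2) (by linarith)
    obtain ⟨δa, hδa, hfa⟩ := ha
    rw [Real.dist_eq, abs_sub_comm] at haz
    set δ := min δa (ε'/2) with hδdef
    have hδpos : 0 < δ := lt_min hδa (by linarith)
    have hboth : ∀ w, |w - a| < δ → g w = (n:ℝ)^k' * w + c' := by
      intro w hw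
      have h1 : |w - a| < δa := lt_of_lt_of_le hw (min_le_left _ _)
      have h2 : |w - z| < ε' := by
        have : |w - z| ≤ |w - a| + |a - z| := abs_sub_le _ _ _
        have : |w - a| < ε'/2 := lt_of_lt_of_le hw (min_le_right _ _)
        linarith [abs_sub_le w a z, lt_of_lt_of_le hw (min_le_right _ _ : δ ≤ ε'/2)]
      rw [← hfa w h1, hkc' w h2]
    have he1 := hboth a (by simpa using hδpos)
    have he2 := hboth (a + δ/2) (by rw [show a + δ/2 - a = δ/2 by ring, abs_of_pos (by linarith)]; linarith)
    have hall := affine_line (by intro h; nlinarith : a ≠ a + δ/2) he1 he2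
    exact ⟨ε', hε', fun w hw => by rw [hkc' w hw, ← hall w]⟩
  have heq : Set.EqOn f g (Set.Ioo u v) := by
    intro z hz
    obtain ⟨δ, hδ, h⟩ := hsub hz
    exact h z (by simpa using hδ)
  have hcl : Set.EqOn f g (Set.Icc u v) := by
    rw [← closure_Ioo (ne_of_lt huv)]
    exact heq.closure hf (by fun_prop)
  exact fun z hz => hcl hz

lemma breaks_finite (hBdisc : ∀ x : ℝ, ∃ ε > 0, ∀ y ∈ B, |y - x| < ε → y = x)
    (x y : ℝ) : (B ∩ Set.Icc x y).Finite := by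
  choose ε hε h1 using hBdisc
  obtain ⟨t, _, ht⟩ := isCompact_Icc.elim_nhds_subcover (fun z => Metric.ball z (ε z))
    (fun z _ => Metric.ball_mem_nhds z (hε z))
  have hsub : B ∩ Set.Icc x y ⊆ ⋃ z ∈ t, ({z} : Set ℝ) := by
    rintro w ⟨hwB, hwI⟩
    obtain ⟨z, hz, hwz⟩ := Set.mem_iUnion₂.1 (ht hwI)
    rw [Metric.mem_ball, Real.dist_eq] at hwz
    exact Set.mem_iUnion₂.2 ⟨z, hz, h1 z w hwB hwz⟩
  exact Set.Finite.subset (t.finite_toSet.biUnion (fun z _ => Set.finite_singleton z)) hsub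

end analytic

section chain
variable {n : ℕ} {φ : ℝ → ZMod (n - 1)} {f : ℝ → ℝ} {B : Set ℝ}
  (hn : 2 ≤ n) (hφ : IsPhi n φ)
  (hf : Continuous f)
  (hBzp : B ⊆ zpows n)
  (hBdisc : ∀ x : ℝ, ∃ ε > 0, ∀ y ∈ B, |y - x| < ε → y = x)
  (haff : ∀ x ∉ B, ∃ (k : ℤ) (c : ℝ), ∃ ε > 0, ∀ y : ℝ, |y - x| < ε → f y = (n : ℝ) ^ k * y + c)
  (hmaps : ∀ q ∈ zpows n, f q ∈ zpows n)

include hn hφ hf haff hmaps in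
lemma psi_step {x y : ℝ} (hx : x ∈ zpows n) (hy : y ∈ zpows n) (hxy : x < y)
    (hno : ∀ z ∈ B, z ∉ Set.Ioo x y) :
    φ (f y) - φ y = φ (f x) - φ x := by
  obtain ⟨k, c, hkc⟩ := affine_on hf haff hxy hno
  have hfx := hkc x ⟨le_refl x, le_of_lt hxy⟩
  have hfy := hkc y ⟨le_of_lt hxy, le_refl y⟩
  have hd : f y = f x + (n:ℝ)^k * (y - x) := by rw [hfx, hfy]; ring
  have h1 : φ (f y) - φ (f x) = φ (f y - f x) := phi_diff hn hφ (hmaps x hx) (hmaps y hy)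
  have h2 : f y - f x = (n:ℝ)^k * (y - x) := by rw [hd]; ring
  rw [h2, phi_zpow_mul hn hφ (zpows_sub hn hy hx), ← phi_diff hn hφ hx hy] at h1
  linear_combination h1

include hn hφ hf hBzp haff hmaps in
lemma psi_chain (m : ℕ) : ∀ x y : ℝ, x ∈ zpows n → y ∈ zpows n → x < y →
    ∀ (hfin : (B ∩ Set.Ioo x y).Finite), hfin.toFinset.card ≤ m →
    φ (f y) - φ y = φ (f x) - φ x := by
  induction m with
  | zero =>
      intro x y hx hy hxy hfin hcard
      have hempty : B ∩ Set.Ioo x y = ∅ := by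
        have := Finset.card_eq_zero.1 (Nat.le_zero.1 hcard)
        rwa [Set.Finite.toFinset_eq_empty] at this
      exact psi_step hn hφ hf haff hmaps hx hy hxy
        (fun z hz hzI => Set.eq_empty_iff_forall_notMem.1 hempty z ⟨hz, hzI⟩)
  | succ m ih =>
      intro x y hx hy hxy hfin hcard
      rcases Set.eq_empty_or_nonempty (B ∩ Set.Ioo x y) with hempty | ⟨z, hzB, hzI⟩
      · exact psi_step hn hφ hf haff hmaps hx hy hxy
          (fun w hw hwI => Set.eq_empty_iff_forall_notMem.1 hempty w ⟨hw, hwI⟩)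
      · have hz : z ∈ zpows n := hBzp hzB
        have hzt : z ∈ hfin.toFinset := by rw [Set.Finite.mem_toFinset]; exact ⟨hzB, hzI⟩
        have hsub1 : B ∩ Set.Ioo x z ⊆ ↑(hfin.toFinset.erase z) := by
          rintro w ⟨hw, hwI⟩
          simp only [Finset.coe_erase, Set.mem_diff, Set.Finite.coe_toFinset]
          exact ⟨⟨hw, ⟨hwI.1, lt_trans hwI.2 hzI.2⟩⟩, by
            simp only [Set.mem_singleton_iff]; intro h; exact absurd (h ▸ hwI.2) (lt_irrefl z)⟩
        have hsub2 : B ∩ Set.Ioo z y ⊆ ↑(hfin.toFinset.erase z) := by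
          rintro w ⟨hw, hwI⟩
          simp only [Finset.coe_erase, Set.mem_diff, Set.Finite.coe_toFinset]
          exact ⟨⟨hw, ⟨lt_trans hzI.1 hwI.1, hwI.2⟩⟩, by
            simp only [Set.mem_singleton_iff]; intro h; exact absurd (h ▸ hwI.1) (lt_irrefl z)⟩
        have hfin1 : (B ∩ Set.Ioo x z).Finite := Set.Finite.subset (hfin.toFinset.erase z).finite_toSet hsub1
        have hfin2 : (B ∩ Set.Ioo z y).Finite := Set.Finite.subset (hfin.toFinset.erase z).finite_toSet hsub2
        have hce : (hfin.toFinset.erase z).card ≤ m := by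
          rw [Finset.card_erase_of_mem hzt]
          omega
        have hc1 : hfin1.toFinset.card ≤ m :=
          le_trans (Finset.card_le_card (by rw [Set.Finite.toFinset_subset]; exact hsub1)) hce
        have hc2 : hfin2.toFinset.card ≤ m :=
          le_trans (Finset.card_le_card (by rw [Set.Finite.toFinset_subset]; exact hsub2)) hce
        calc φ (f y) - φ y = φ (f z) - φ z := ih z y hz hy hzI.2 hfin2 hc2
        _ = φ (f x) - φ x := ih x z hx hz hzI.1 hfin1 hc1

end chain

section main
variable {n : ℕ} {φ : ℝ → ZMod (n - 1)} {f : ℝ → ℝ} {B : Set ℝ}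

lemma preimage_zpows (hn : 2 ≤ n) (hsurj : Function.Surjective f) (hBzp : B ⊆ zpows n)
    (haff : ∀ x ∉ B, ∃ (k : ℤ) (c : ℝ), ∃ ε > 0, ∀ y : ℝ, |y - x| < ε → f y = (n : ℝ) ^ k * y + c)
    (hmaps : ∀ q ∈ zpows n, f q ∈ zpows n)
    {y : ℝ} (hy : y ∈ zpows n) : ∃ x ∈ zpows n, f x = y := by
  obtain ⟨x, rfl⟩ := hsurj y
  by_cases hxB : x ∈ B
  · exact ⟨x, hBzp hxB, rfl⟩
  obtain ⟨k, c, ε, hε, hkc⟩ := haff x hxB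
  obtain ⟨q, hq, hqx⟩ := zpows_dense hn x hε
  have hc : c = f q - (n:ℝ)^k * q := by rw [hkc q hqx]; ring
  have hcz : c ∈ zpows n := hc ▸ zpows_sub hn (hmaps q hq) (zpows_mul hn (zpow_mem_zpows k) hq)
  have hfx : f x = (n:ℝ)^k * x + c := hkc x (by simpa using hε)
  have hxz : x = (n:ℝ)^(-k) * (f x - c) := by
    rw [hfx, show (n:ℝ)^k * x + c - c = (n:ℝ)^k * x by ring, ← mul_assoc,
      ← zpow_add₀ (nne hn)]
    simp
  exact ⟨x, hxz ▸ zpows_mul hn (zpow_mem_zpows _) (zpows_sub hn hy hcz), rfl⟩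

theorem main (hn : 2 ≤ n) (hφ : IsPhi n φ)
    (hmono : StrictMono f) (hsurj : Function.Surjective f)
    (hBzp : B ⊆ zpows n)
    (hBdisc : ∀ x : ℝ, ∃ ε > 0, ∀ y ∈ B, |y - x| < ε → y = x)
    (haff : ∀ x ∉ B, ∃ (k : ℤ) (c : ℝ), ∃ ε > 0, ∀ y : ℝ, |y - x| < ε → f y = (n : ℝ) ^ k * y + c)
    (hmaps : ∀ q ∈ zpows n, f q ∈ zpows n)
    (i : ℤ) (M : ℝ) (hMr : ∀ x : ℝ, M < x → f x = x + (i : ℝ) * ((n : ℝ) - 1)) :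
    (∀ x ∈ zpows n, φ (f x) = φ x) ∧
    (∀ c : ZMod (n - 1),
      f '' {x : ℝ | x ∈ zpows n ∧ φ x = c} = {x : ℝ | x ∈ zpows n ∧ φ x = c}) := by
  have hcont := f_cont hmono hsurj
  have hnZ : ((n:ℕ) : ZMod (n-1)) = 1 := by
    have h1 := phi_n hn hφ
    have h2 : ((n:ℕ):ℝ) = (((n:ℕ):ℤ):ℝ) := by push_cast; ring
    rw [h2, phi_int hn hφ] at h1
    exact_mod_cast h1
  have key : ∀ x ∈ zpows n, φ (f x) = φ x := by
    intro x hx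
    obtain ⟨N, hN⟩ := exists_nat_gt (max M x)
    have hxN : x < N := lt_of_le_of_lt (le_max_right _ _) hN
    have hMN : M < N := lt_of_le_of_lt (le_max_left _ _) hN
    have hNz : ((N:ℕ):ℝ) ∈ zpows n := by exact_mod_cast int_mem_zpows (N:ℤ)
    have hfin : (B ∩ Set.Ioo x N).Finite :=
      (breaks_finite hBdisc x N).subset (Set.inter_subset_inter_right _ Set.Ioo_subset_Icc_self)
    have hch := psi_chain hn hφ hcont hBzp haff hmaps hfin.toFinset.card x (N:ℝ) hx hNz hxN hfin le_rfl
    have hiz : ((i:ℝ)*((n:ℝ)-1)) ∈ zpows n := by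
      have := int_mem_zpows (n := n) (i*((n:ℤ)-1))
      push_cast at this
      exact this
    have hphiN : φ (f (N:ℝ)) = φ (N:ℝ) := by
      rw [hMr (N:ℝ) hMN, hφ.1 (N:ℝ) hNz ((i:ℝ)*((n:ℝ)-1)) hiz]
      have hcast : ((i:ℝ)*((n:ℝ)-1)) = (((i*((n:ℤ)-1) : ℤ)):ℝ) := by push_cast; ring
      rw [hcast, phi_int hn hφ]
      push_cast
      rw [hnZ]
      ring
    rw [hphiN] at hch
    linear_combination -hch
  refine ⟨key, fun c => ?_⟩
  ext y
  constructor
  · rintro ⟨x, ⟨hxz, hxc⟩, rfl⟩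
    exact ⟨hmaps x hxz, by rw [key x hxz]; exact hxc⟩
  · rintro ⟨hyz, hyc⟩
    obtain ⟨x, hxz, hfx⟩ := preimage_zpows hn hsurj hBzp haff hmaps hyz
    exact ⟨x, ⟨hxz, by rw [← key x hxz, hfx]; exact hyc⟩, hfx⟩

end main

/-- For every integer `n ≥ 2`, every element `f` of `Fₙ` (and hence every
element of `BPLₙ(ℝ)`) satisfies `φₙ(f x) = φₙ x` for all `x ∈ ℤ[1/n]`; consequently `f`
maps each coset of `Δₙ = ker φₙ` in `ℤ[1/n]` onto itself. -/
theorem stmt_2 (n : ℕ) (hn : 2 ≤ n) (φ : ℝ → ZMod (n - 1)) (hφ : IsPhi n φ)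
    (f : ℝ → ℝ) (hf : MemF n f ∨ MemBPL n f) :
    (∀ x ∈ zpows n, φ (f x) = φ x) ∧
    (∀ c : ZMod (n - 1),
      f '' {x : ℝ | x ∈ zpows n ∧ φ x = c} = {x : ℝ | x ∈ zpows n ∧ φ x = c}) := by
  have hF : MemF n f := by
    rcases hf with h | ⟨hPL, M, hM⟩
    · exact h
    · refine ⟨hPL, 0, 0, |M|, fun x hx => ?_, fun x hx => ?_⟩
      · rw [hM x (lt_of_le_of_lt (le_abs_self M) (lt_of_lt_of_le hx (le_abs_self x)))]
        push_cast; ring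
      · have hx0 : x < 0 := lt_of_lt_of_le hx (by simpa using neg_nonpos_of_nonneg (abs_nonneg M))
        have : M < |x| := lt_of_le_of_lt (le_abs_self M)
          (by rw [abs_of_neg hx0]; linarith)
        rw [hM x this]; push_cast; ring
  obtain ⟨⟨hmono, hsurj, ⟨B, hBzp, hBdisc, haff⟩, hmaps⟩, i, j, M, hMr, hMl⟩ := hF
  exact main hn hφ hmono hsurj hBzp hBdisc haff hmaps i M hMr
end zp
end
end

section
/- For every integer n ≥ 2 and every k ≥ 1: given x₁ < x₂ < ⋯ < x_k and y₁ < y₂ < ⋯ < y_k all lying in Δ_n, there exists f ∈ BPL_n(ℝ) with f(xᵢ) = yᵢ for all 1 ≤ i ≤ k. (That is, BPL_n(ℝ) acts order k-transitively on Δ_n for every k.) -/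
noncomputable section

namespace Pf

variable {n : ℕ}

lemma nR_pos (hn : 2 ≤ n) : (0:ℝ) < (n:ℝ) := by
  have : 0 < n := by omega
  exact_mod_cast this

lemma nR_ne (hn : 2 ≤ n) : (n:ℝ) ≠ 0 := ne_of_gt (nR_pos hn)

lemma zpows_intCast (n : ℕ) (a : ℤ) : (a:ℝ) ∈ zpows n := ⟨a, 0, by simp⟩

lemma zpows_natCast (n : ℕ) (a : ℕ) : (a:ℝ) ∈ zpows n := by
  exact_mod_cast zpows_intCast n a

lemma zpows_zero (n : ℕ) : (0:ℝ) ∈ zpows n := by exact_mod_cast zpows_intCast n 0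

lemma zpows_one (n : ℕ) : (1:ℝ) ∈ zpows n := by exact_mod_cast zpows_intCast n 1

lemma zpows_zpow (hn : 2 ≤ n) (p : ℤ) : ((n:ℝ) ^ p) ∈ zpows n := ⟨1, p, by simp⟩

lemma zpows_add (hn : 2 ≤ n) {x y : ℝ} (hx : x ∈ zpows n) (hy : y ∈ zpows n) :
    x + y ∈ zpows n := by
  obtain ⟨a, b, rfl⟩ := hx
  obtain ⟨a', b', rfl⟩ := hy
  refine ⟨a * n ^ (b - min b b').toNat + a' * n ^ (b' - min b b').toNat, min b b', ?_⟩
  have h1 : ((b - min b b').toNat : ℤ) = b - min b b' := by omega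
  have h2 : ((b' - min b b').toNat : ℤ) = b' - min b b' := by omega
  have hne := nR_ne hn
  push_cast
  rw [← zpow_natCast (n:ℝ) (b - min b b').toNat, ← zpow_natCast (n:ℝ) (b' - min b b').toNat,
    h1, h2, add_mul, mul_assoc, mul_assoc, ← zpow_add₀ hne, ← zpow_add₀ hne]
  ring_nf

lemma zpows_neg (n : ℕ) {x : ℝ} (hx : x ∈ zpows n) : -x ∈ zpows n := by
  obtain ⟨a, b, rfl⟩ := hx
  exact ⟨-a, b, by push_cast; ring⟩

lemma zpows_sub (hn : 2 ≤ n) {x y : ℝ} (hx : x ∈ zpows n) (hy : y ∈ zpows n) :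
    x - y ∈ zpows n := by
  rw [sub_eq_add_neg]; exact zpows_add hn hx (zpows_neg n hy)

lemma zpows_mul (hn : 2 ≤ n) {x y : ℝ} (hx : x ∈ zpows n) (hy : y ∈ zpows n) :
    x * y ∈ zpows n := by
  obtain ⟨a, b, rfl⟩ := hx
  obtain ⟨a', b', rfl⟩ := hy
  exact ⟨a * a', b + b', by push_cast; rw [zpow_add₀ (nR_ne hn)]; ring⟩

section Phi

variable {φ : ℝ → ZMod (n - 1)} (hn : 2 ≤ n) (hφ : IsPhi n φ)
include hn hφ

lemma phi_zero : φ 0 = 0 := by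
  have := hφ.1 0 (zpows_zero n) 0 (zpows_zero n)
  simp at this
  linear_combination this

lemma phi_add {x y : ℝ} (hx : x ∈ zpows n) (hy : y ∈ zpows n) : φ (x + y) = φ x + φ y :=
  hφ.1 x hx y hy

lemma phi_neg {x : ℝ} (hx : x ∈ zpows n) : φ (-x) = - φ x := by
  have := hφ.1 x hx (-x) (zpows_neg n hx)
  simp at this
  rw [phi_zero hn hφ] at this
  linear_combination -this

lemma phi_sub {x y : ℝ} (hx : x ∈ zpows n) (hy : y ∈ zpows n) : φ (x - y) = φ x - φ y := by
  rw [sub_eq_add_neg, phi_add hn hφ hx (zpows_neg n hy), phi_neg hn hφ hy, sub_eq_add_neg]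

lemma phi_natCast (a : ℕ) : φ (a : ℝ) = (a : ZMod (n - 1)) := by
  induction a with
  | zero => simpa using phi_zero hn hφ
  | succ a ih =>
    push_cast
    rw [phi_add hn hφ (zpows_natCast n a) (zpows_one n), ih, hφ.2.2]

lemma phi_intCast (a : ℤ) : φ (a : ℝ) = (a : ZMod (n - 1)) := by
  rcases a with a | a
  · simpa using phi_natCast hn hφ a
  · have h : (Int.negSucc a : ℝ) = -((a+1 : ℕ) : ℝ) := by push_cast; ring
    rw [h, phi_neg hn hφ (zpows_natCast n (a+1)), phi_natCast hn hφ]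
    push_cast
    ring

lemma phi_n : φ (n : ℝ) = 1 := by
  rw [phi_natCast hn hφ]
  have : n = (n - 1) + 1 := by omega
  rw [this]
  push_cast
  simp [ZMod.natCast_self]

lemma phi_npow (p : ℤ) : φ ((n:ℝ) ^ p) = 1 := by
  have hpow : ∀ a : ℕ, φ ((n:ℝ) ^ (a:ℤ)) = 1 := by
    intro a
    induction a with
    | zero => simpa using hφ.2.2
    | succ a ih =>
      have : ((n:ℝ) ^ ((a:ℤ)+1)) = (n:ℝ) ^ (a:ℤ) * (n:ℝ) := by
        rw [zpow_add₀ (nR_ne hn)]; simp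
      rw [show ((a+1 : ℕ):ℤ) = (a:ℤ)+1 by push_cast; ring, this,
        hφ.2.1 _ (zpows_zpow hn a) _ (by exact_mod_cast zpows_natCast n n), ih,
        phi_n hn hφ, one_mul]
  rcases le_or_gt 0 p with hp | hp
  · obtain ⟨a, rfl⟩ : ∃ a : ℕ, p = (a:ℤ) := ⟨p.toNat, by omega⟩
    exact hpow a
  · have h1 : (n:ℝ) ^ p * (n:ℝ) ^ (-p) = 1 := by
      rw [← zpow_add₀ (nR_ne hn)]; simp
    have := hφ.2.1 _ (zpows_zpow hn p) _ (zpows_zpow hn (-p))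
    rw [h1, hφ.2.2] at this
    obtain ⟨a, ha⟩ : ∃ a : ℕ, -p = (a:ℤ) := ⟨(-p).toNat, by omega⟩
    rw [ha, hpow a, mul_one] at this
    exact this.symm

end Phi

lemma locDiscrete_finite (S : Finset ℝ) : LocDiscrete ↑S := by
  classical
  intro x
  set T : Finset ℝ := S.filter (· ≠ x) with hT
  rcases T.eq_empty_or_nonempty with hTe | hTne
  · refine ⟨1, one_pos, fun y hy _ => ?_⟩
    by_contra hne
    have hyS : y ∈ S := Finset.mem_coe.1 hy
    have : y ∈ T := by simp [hT, hne, hyS]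
    simp [hTe] at this
  · have hne' : (T.image fun t => |t - x|).Nonempty := hTne.image _
    refine ⟨(T.image fun t => |t - x|).min' hne', ?_, ?_⟩
    · obtain ⟨t, ht, hmin⟩ := Finset.mem_image.1 ((T.image fun t => |t - x|).min'_mem hne')
      rw [← hmin]
      have htx : t ≠ x := (Finset.mem_filter.1 ht).2
      have : t - x ≠ 0 := sub_ne_zero.2 htx
      exact abs_pos.2 this
    · intro y hy hlt
      by_contra hne
      have hyS : y ∈ S := Finset.mem_coe.1 hy
      have hyT : y ∈ T := by simp [hT, hne, hyS]
      have : (T.image fun t => |t - x|).min' hne' ≤ |y - x| :=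
        Finset.min'_le _ _ (Finset.mem_image_of_mem _ hyT)
      linarith

section Grid

lemma steps_mono {m : ℕ} {A : ℕ → ℝ} (hstep : ∀ j < m, A j < A (j+1)) :
    ∀ {i j}, i ≤ j → j ≤ m → A i ≤ A j := by
  intro i j hij hjm
  induction j with
  | zero => simp_all
  | succ j ih =>
    rcases Nat.eq_or_lt_of_le hij with h | h
    · rw [h]
    · have h1 : A i ≤ A j := ih (by omega) (by omega)
      have h2 : A j < A (j+1) := hstep j (by omega)
      linarith

lemma steps_strict {m : ℕ} {A : ℕ → ℝ} (hstep : ∀ j < m, A j < A (j+1)) :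
    ∀ {i j}, i < j → j ≤ m → A i < A j := by
  intro i j hij hjm
  obtain ⟨j', rfl⟩ : ∃ j', j = j' + 1 := ⟨j - 1, by omega⟩
  have h1 : A i ≤ A j' := steps_mono hstep (by omega) (by omega)
  have h2 : A j' < A (j'+1) := hstep j' (by omega)
  linarith

lemma exists_between_index (m : ℕ) (A : ℕ → ℝ) (hstep : ∀ j < m, A j < A (j+1))
    {x : ℝ} (h0 : A 0 ≤ x) (hm : x < A m) : ∃ j, j < m ∧ A j ≤ x ∧ x < A (j+1) := by
  classical
  let P : ℕ → Prop := fun j => A j ≤ x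
  have h0' : P 0 := h0
  set j0 := Nat.findGreatest P m with hj0
  have hj0le : j0 ≤ m := Nat.findGreatest_le m
  have hspec : A j0 ≤ x := Nat.findGreatest_spec (Nat.zero_le m) h0'
  have hj0lt : j0 < m := by
    rcases Nat.eq_or_lt_of_le hj0le with h | h
    · exfalso; rw [h] at hspec; linarith
    · exact h
  refine ⟨j0, hj0lt, hspec, ?_⟩
  by_contra hcon
  push_neg at hcon
  have hcon' : P (j0 + 1) := hcon
  have := Nat.le_findGreatest (by omega : j0 + 1 ≤ m) hcon'
  omega

lemma term_mono {d c x y : ℝ} (hdc : d ≤ c) (hxy : x ≤ y) :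
    min x c - min x d ≤ min y c - min y d := by
  simp only [min_def]
  split_ifs <;> linarith

lemma grid (hn : 2 ≤ n) (m : ℕ) (A B : ℕ → ℝ)
    (hA : ∀ j < m, ∃ p : ℤ, A (j+1) - A j = (n:ℝ) ^ p)
    (hB : ∀ j < m, ∃ q : ℤ, B (j+1) - B j = (n:ℝ) ^ q)
    (h0 : A 0 = B 0) (hm : A m = B m)
    (hz : ∀ j ≤ m, A j ∈ zpows n ∧ B j ∈ zpows n) :
    ∃ f : ℝ → ℝ, MemBPL n f ∧ ∀ j ≤ m, f (A j) = B j := by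
  classical
  have hN0 : (0:ℝ) < n := nR_pos hn
  have hNe : (n:ℝ) ≠ 0 := nR_ne hn
  set r : ℕ → ℝ := fun j => (B (j+1) - B j) / (A (j+1) - A j) with hrdef
  have hstepA : ∀ j < m, A j < A (j+1) := by
    intro j hj; obtain ⟨p, hp⟩ := hA j hj
    have h2 : (0:ℝ) < (n:ℝ)^p := zpow_pos hN0 p
    linarith [hp ▸ h2]
  have hstepB : ∀ j < m, B j < B (j+1) := by
    intro j hj; obtain ⟨q, hq⟩ := hB j hj
    have h2 : (0:ℝ) < (n:ℝ)^q := zpow_pos hN0 q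
    linarith [hq ▸ h2]
  have hr : ∀ j < m, (∃ s : ℤ, r j = (n:ℝ) ^ s) ∧ 0 < r j ∧
      B (j+1) = B j + r j * (A (j+1) - A j) := by
    intro j hj
    obtain ⟨p, hp⟩ := hA j hj
    obtain ⟨q, hq⟩ := hB j hj
    have hAne : A (j+1) - A j ≠ 0 := by rw [hp]; exact (zpow_pos hN0 p).ne'
    refine ⟨⟨q - p, ?_⟩, ?_, ?_⟩
    · rw [hrdef]; simp only; rw [hp, hq, ← zpow_sub₀ hNe]
    · rw [hrdef]; simp only; rw [hp, hq]; positivity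
    · rw [hrdef]; simp only; rw [div_mul_cancel₀ _ hAne]; ring
  have hAle : ∀ {i j}, i ≤ j → j ≤ m → A i ≤ A j := fun hij hjm => steps_mono hstepA hij hjm
  set g : ℝ → ℝ := fun t => B 0 + ∑ j ∈ Finset.range m, r j * (min t (A (j+1)) - min t (A j))
    with hgdef
  have hB0 : ∀ j, j ≤ m → B 0 + ∑ i ∈ Finset.range j, r i * (A (i+1) - A i) = B j := by
    intro j
    induction j with
    | zero => intro _; simp
    | succ j ih =>
      intro hj
      have h1 := ih (by omega)
      have h2 := (hr j (by omega)).2.2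
      rw [Finset.sum_range_succ]
      linarith
  have hgloc : ∀ j < m, ∀ t, A j ≤ t → t ≤ A (j+1) → g t = B j + r j * (t - A j) := by
    intro j hj t ht1 ht2
    have hsub : Finset.range (j+1) ⊆ Finset.range m := by
      intro i hi; simp only [Finset.mem_range] at *; omega
    have h1 : ∀ i ∈ Finset.range m, i ∉ Finset.range (j+1) →
        r i * (min t (A (i+1)) - min t (A i)) = 0 := by
      intro i hi hni
      simp only [Finset.mem_range] at hi hni
      have hji : j + 1 ≤ i := by omega
      have hti : t ≤ A i := le_trans ht2 (hAle hji (by omega))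
      have hti1 : t ≤ A (i+1) := le_trans hti (hAle (Nat.le_succ i) (by omega))
      rw [min_eq_left hti, min_eq_left hti1]
      ring
    have h2 : ∀ i ∈ Finset.range j, r i * (min t (A (i+1)) - min t (A i))
        = r i * (A (i+1) - A i) := by
      intro i hi
      simp only [Finset.mem_range] at hi
      have hi1 : A (i+1) ≤ t := le_trans (hAle (by omega : i+1 ≤ j) (by omega)) ht1
      have hi0 : A i ≤ t := le_trans (hAle (Nat.le_succ i) (by omega : i + 1 ≤ m)) hi1
      rw [min_eq_right hi1, min_eq_right hi0]
    have hBj := hB0 j (le_of_lt hj)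
    rw [hgdef]
    simp only
    rw [← Finset.sum_subset hsub h1, Finset.sum_range_succ, Finset.sum_congr rfl h2,
      min_eq_left ht2, min_eq_right ht1]
    linarith
  have hgA : ∀ i ≤ m, g (A i) = B i := by
    intro i him
    rcases Nat.eq_or_lt_of_le him with h | h
    · subst h
      rcases Nat.eq_zero_or_pos i with h0' | h0'
      · subst h0'; rw [hgdef]; simp
      · obtain ⟨j, rfl⟩ : ∃ j, i = j + 1 := ⟨i - 1, by omega⟩
        rw [hgloc j (by omega) (A (j+1)) (hstepA j (by omega)).le le_rfl]
        have := (hr j (by omega)).2.2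
        linarith
    · rw [hgloc i h (A i) le_rfl (hstepA i h).le]
      ring
  have hgmono : Monotone g := by
    intro s t hst
    apply add_le_add le_rfl
    apply Finset.sum_le_sum
    intro i hi
    simp only [Finset.mem_range] at hi
    have hdc : A i ≤ A (i+1) := (hstepA i hi).le
    exact mul_le_mul_of_nonneg_left (term_mono hdc hst) (hr i hi).2.1.le
  have hgstrict : ∀ s t, A 0 ≤ s → s < t → t ≤ A m → g s < g t := by
    intro s t hs hst htm
    obtain ⟨j, hjm, hjs, hsj⟩ := exists_between_index m A hstepA hs (lt_of_lt_of_le hst htm)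
    have key : ∀ i ∈ Finset.range m, 0 ≤ r i *
        ((min t (A (i+1)) - min t (A i)) - (min s (A (i+1)) - min s (A i))) := by
      intro i hi
      simp only [Finset.mem_range] at hi
      exact mul_nonneg (hr i hi).2.1.le
        (sub_nonneg.2 (term_mono (hstepA i hi).le hst.le))
    have hj_in : j ∈ Finset.range m := Finset.mem_range.2 hjm
    have hsingle := Finset.single_le_sum key hj_in
    have hsum : g t - g s = ∑ i ∈ Finset.range m, r i *
        ((min t (A (i+1)) - min t (A i)) - (min s (A (i+1)) - min s (A i))) := by
      have hterm : ∀ i, r i * ((min t (A (i+1)) - min t (A i)) - (min s (A (i+1)) - min s (A i)))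
          = r i * (min t (A (i+1)) - min t (A i)) - r i * (min s (A (i+1)) - min s (A i)) :=
        fun i => by ring
      simp only [hgdef, hterm, Finset.sum_sub_distrib]
      ring
    have e1 : min s (A (j+1)) = s := min_eq_left hsj.le
    have e2 : min s (A j) = A j := min_eq_right hjs
    have e3 : min t (A j) = A j := min_eq_right (le_trans hjs hst.le)
    have e4 : s < min t (A (j+1)) := lt_min hst hsj
    have hpos : 0 < r j * ((min t (A (j+1)) - min t (A j)) - (min s (A (j+1)) - min s (A j))) := by
      rw [e1, e2, e3]
      apply mul_pos (hr j hjm).2.1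
      linarith
    linarith
  have hgc : Continuous g := by
    apply Continuous.add continuous_const
    apply continuous_finset_sum
    intro i _
    exact continuous_const.mul ((continuous_id.min continuous_const).sub
      (continuous_id.min continuous_const))
  set f : ℝ → ℝ := fun t => if t < A 0 ∨ A m < t then t else g t with hfdef
  have hA0m : A 0 ≤ A m := hAle (Nat.zero_le m) le_rfl
  have hgA0 : g (A 0) = A 0 := by rw [hgA 0 (Nat.zero_le m), ← h0]
  have hgAm : g (A m) = A m := by rw [hgA m le_rfl, ← hm]
  have hfid : ∀ t, (t < A 0 ∨ A m < t) → f t = t := by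
    intro t ht; rw [hfdef]; simp only [if_pos ht]
  have hfg : ∀ t, A 0 ≤ t → t ≤ A m → f t = g t := by
    intro t ht1 ht2
    have hcond : ¬(t < A 0 ∨ A m < t) := by push_neg; exact ⟨ht1, ht2⟩
    rw [hfdef]; simp only [if_neg hcond]
  have hmonof : StrictMono f := by
    intro s t hst
    rcases lt_or_ge s (A 0) with hs | hs
    · rcases lt_or_ge t (A 0) with ht | ht
      · rw [hfid s (Or.inl hs), hfid t (Or.inl ht)]; exact hst
      · rcases le_or_gt t (A m) with ht2 | ht2
        · rw [hfid s (Or.inl hs), hfg t ht ht2]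
          have h3 := hgmono ht
          rw [hgA0] at h3
          linarith
        · rw [hfid s (Or.inl hs), hfid t (Or.inr ht2)]; exact hst
    · rcases le_or_gt s (A m) with hs2 | hs2
      · rcases le_or_gt t (A m) with ht2 | ht2
        · rw [hfg s hs hs2, hfg t (le_trans hs hst.le) ht2]
          exact hgstrict s t hs hst ht2
        · rw [hfg s hs hs2, hfid t (Or.inr ht2)]
          have h3 := hgmono hs2
          rw [hgAm] at h3
          linarith
      · rw [hfid s (Or.inr hs2), hfid t (Or.inr (lt_trans hs2 hst))]; exact hst
  have hsurj : Function.Surjective f := by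
    intro z
    rcases lt_or_ge z (A 0) with hz1 | hz1
    · exact ⟨z, hfid z (Or.inl hz1)⟩
    rcases le_or_gt z (A m) with hz2 | hz2
    · have hmem : z ∈ Set.Icc (g (A 0)) (g (A m)) := by rw [hgA0, hgAm]; exact ⟨hz1, hz2⟩
      obtain ⟨w, hw, hgw⟩ := intermediate_value_Icc hA0m hgc.continuousOn hmem
      exact ⟨w, by rw [hfg w hw.1 hw.2]; exact hgw⟩
    · exact ⟨z, hfid z (Or.inr hz2)⟩
  refine ⟨f, ⟨⟨hmonof, hsurj, ?_, ?_⟩, ?_⟩, ?_⟩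
  · -- breaks
    refine ⟨↑((Finset.range (m+1)).image A), ?_, locDiscrete_finite _, ?_⟩
    · intro t ht
      obtain ⟨j, hj, rfl⟩ := Finset.mem_image.1 ht
      simp only [Finset.mem_range] at hj
      exact (hz j (by omega)).1
    · intro t htS
      have htne : ∀ j ≤ m, A j ≠ t := by
        intro j hj hcon
        exact htS (Finset.mem_coe.2 (Finset.mem_image.2 ⟨j, Finset.mem_range.2 (by omega), hcon⟩))
      rcases lt_or_ge t (A 0) with h1 | h1
      · refine ⟨0, 0, A 0 - t, by linarith, fun u hu => ?_⟩
        have habs := abs_lt.1 hu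
        rw [hfid u (Or.inl (by linarith [habs.2]))]
        norm_num
      rcases lt_or_ge (A m) t with h2 | h2
      · refine ⟨0, 0, t - A m, by linarith, fun u hu => ?_⟩
        have habs := abs_lt.1 hu
        rw [hfid u (Or.inr (by linarith [habs.1]))]
        norm_num
      · have ht0 : A 0 < t := lt_of_le_of_ne h1 (htne 0 (Nat.zero_le m))
        have htm : t < A m := lt_of_le_of_ne h2 (htne m le_rfl).symm
        obtain ⟨j, hjm, hjs, hsj⟩ := exists_between_index m A hstepA h1 htm
        have hjt : A j < t := lt_of_le_of_ne hjs (htne j (le_of_lt hjm))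
        obtain ⟨⟨s, hs⟩, hrpos, _⟩ := hr j hjm
        refine ⟨s, B j - r j * A j, min (t - A j) (A (j+1) - t), ?_, fun u hu => ?_⟩
        · simp only [lt_min_iff]; constructor <;> linarith
        · have habs := abs_lt.1 hu
          have hm1 : min (t - A j) (A (j+1) - t) ≤ t - A j := min_le_left _ _
          have hm2 : min (t - A j) (A (j+1) - t) ≤ A (j+1) - t := min_le_right _ _
          have hu1 : A j < u := by linarith [habs.1]
          have hu2 : u < A (j+1) := by linarith [habs.2]
          have hfu : f u = g u := hfg u (le_trans (hAle (Nat.zero_le j) (by omega)) hu1.le)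
            (le_trans hu2.le (hAle (by omega : j + 1 ≤ m) le_rfl))
          rw [hfu, hgloc j hjm u hu1.le hu2.le, ← hs]
          ring
  · -- zpows preserved
    intro q hq
    rcases lt_or_ge q (A 0) with h1 | h1
    · rw [hfid q (Or.inl h1)]; exact hq
    rcases lt_or_ge (A m) q with h2 | h2
    · rw [hfid q (Or.inr h2)]; exact hq
    · rcases lt_or_eq_of_le h2 with hlt | heq
      · obtain ⟨j, hjm, hjs, hsj⟩ := exists_between_index m A hstepA h1 hlt
        rw [hfg q h1 h2, hgloc j hjm q hjs hsj.le]
        obtain ⟨⟨s, hs⟩, _, _⟩ := hr j hjm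
        refine zpows_add hn (hz j hjm.le).2 (zpows_mul hn ?_ (zpows_sub hn hq (hz j hjm.le).1))
        rw [hs]; exact zpows_zpow hn s
      · rw [hfg q h1 h2, heq, hgAm, ← heq]
        exact hq
  · -- bounded support
    refine ⟨max |A 0| |A m|, fun t ht => ?_⟩
    rcases lt_abs.1 ht with h | h
    · exact hfid t (Or.inr (lt_of_le_of_lt (le_trans (le_abs_self _) (le_max_right _ _)) h))
    · refine hfid t (Or.inl ?_)
      have h1 : -|A 0| ≤ A 0 := neg_abs_le _
      have h2 : |A 0| ≤ max |A 0| |A m| := le_max_left _ _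
      linarith
  · -- hits
    intro j hj
    rw [hfg (A j) (hAle (Nat.zero_le j) hj) (hAle hj le_rfl), hgA j hj]

end Grid

section Decomp

def sumPow (n : ℕ) (ℓ : List ℤ) : ℝ := (ℓ.map fun e => (n:ℝ) ^ e).sum

def SA (L : List (ℝ × ℝ)) : ℝ := (L.map Prod.fst).sum
def SB (L : List (ℝ × ℝ)) : ℝ := (L.map Prod.snd).sum

def Good (n : ℕ) (L : List (ℝ × ℝ)) : Prop :=
  ∀ p ∈ L, (∃ i : ℤ, p.1 = (n:ℝ) ^ i) ∧ (∃ j : ℤ, p.2 = (n:ℝ) ^ j)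

lemma SA_append (L₁ L₂ : List (ℝ × ℝ)) : SA (L₁ ++ L₂) = SA L₁ + SA L₂ := by
  simp [SA]

lemma SB_append (L₁ L₂ : List (ℝ × ℝ)) : SB (L₁ ++ L₂) = SB L₁ + SB L₂ := by
  simp [SB]

lemma split_one (hn : 2 ≤ n) (ℓ : List ℤ) (hne : 0 < ℓ.length) :
    ∃ ℓ' : List ℤ, ℓ'.length = ℓ.length + (n - 1) ∧ sumPow n ℓ' = sumPow n ℓ := by
  obtain ⟨e, rest, rfl⟩ := List.exists_cons_of_ne_nil (List.ne_nil_of_length_pos hne)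
  refine ⟨List.replicate n (e - 1) ++ rest, ?_, ?_⟩
  · simp only [List.length_append, List.length_replicate, List.length_cons]; omega
  · have hpow : (n:ℕ) • (n:ℝ) ^ (e - 1) = (n:ℝ) ^ e := by
      rw [nsmul_eq_mul]
      rw [show (n:ℝ) ^ e = (n:ℝ) ^ ((e - 1) + 1) by norm_num, zpow_add_one₀ (nR_ne hn)]
      ring
    simp only [sumPow, List.map_append, List.sum_append, List.map_replicate,
      List.sum_replicate, List.map_cons, List.sum_cons, hpow]

lemma decomp_iter (hn : 2 ≤ n) (t : ℕ) : ∀ ℓ : List ℤ, 0 < ℓ.length →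
    ∃ ℓ' : List ℤ, ℓ'.length = ℓ.length + t * (n - 1) ∧ sumPow n ℓ' = sumPow n ℓ := by
  induction t with
  | zero => exact fun ℓ _ => ⟨ℓ, by simp, rfl⟩
  | succ t ih =>
    intro ℓ h
    obtain ⟨ℓ₁, h1, h2⟩ := ih ℓ h
    obtain ⟨ℓ₂, h3, h4⟩ := split_one hn ℓ₁ (by omega)
    exact ⟨ℓ₂, by rw [h3, h1]; ring, by rw [h4, h2]⟩

lemma exists_base (hn : 2 ≤ n) {u : ℝ} (hu : u ∈ zpows n) (hupos : 0 < u) :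
    ∃ (a b : ℕ), 0 < a ∧ u = (a : ℝ) * (n:ℝ) ^ (-(b:ℤ)) := by
  obtain ⟨a₀, b₀, rfl⟩ := hu
  have hNe := nR_ne hn
  set b : ℕ := b₀.natAbs with hbdef
  have hb : (0:ℤ) ≤ b₀ + b := by simp only [hbdef]; omega
  set A : ℤ := a₀ * (n:ℤ) ^ (b₀ + (b:ℤ)).toNat with hAdef
  have hA : (A:ℝ) = (a₀:ℝ) * (n:ℝ) ^ (b₀ + (b:ℤ)) := by
    rw [hAdef]
    push_cast
    rw [← zpow_natCast (n:ℝ) (b₀ + (b:ℤ)).toNat, Int.toNat_of_nonneg hb]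
  have hid : (a₀:ℝ) * (n:ℝ) ^ b₀ = (A:ℝ) * (n:ℝ) ^ (-(b:ℤ)) := by
    rw [hA, mul_assoc, ← zpow_add₀ hNe]
    norm_num
  have hApos : 0 < A := by
    have h1 : (0:ℝ) < (A:ℝ) * (n:ℝ) ^ (-(b:ℤ)) := hid ▸ hupos
    have h2 : (0:ℝ) < (n:ℝ) ^ (-(b:ℤ)) := zpow_pos (nR_pos hn) _
    have h3 : (0:ℝ) < (A:ℝ) := by
      by_contra hc
      push_neg at hc
      nlinarith
    exact_mod_cast h3
  refine ⟨A.toNat, b, by omega, ?_⟩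
  rw [hid]
  congr 1
  rw [show ((A.toNat : ℕ) : ℝ) = ((A.toNat : ℤ) : ℝ) by push_cast; ring, Int.toNat_of_nonneg hApos.le]

end Decomp

section Seg

variable {φ : ℝ → ZMod (n - 1)}

lemma decomp_all (hn : 2 ≤ n) (hφ : IsPhi n φ) {u : ℝ} (hu : u ∈ zpows n) (hupos : 0 < u) :
    ∃ a : ℕ, 0 < a ∧ φ u = (a : ZMod (n - 1)) ∧
      ∀ t : ℕ, ∃ ℓ : List ℤ, ℓ.length = a + t * (n - 1) ∧ sumPow n ℓ = u := by
  obtain ⟨a, b, hapos, hue⟩ := exists_base hn hu hupos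
  have hbase : sumPow n (List.replicate a (-(b:ℤ))) = u := by
    rw [hue]
    simp [sumPow, List.map_replicate, List.sum_replicate, nsmul_eq_mul]
  refine ⟨a, hapos, ?_, ?_⟩
  · rw [hue, hφ.2.1 _ (zpows_natCast n a) _ (zpows_zpow hn _), phi_natCast hn hφ,
      phi_npow hn hφ, mul_one]
  · intro t
    obtain ⟨ℓ, h1, h2⟩ := decomp_iter hn t (List.replicate a (-(b:ℤ)))
      (by simp [List.length_replicate]; omega)
    exact ⟨ℓ, by rw [h1, List.length_replicate], by rw [h2, hbase]⟩

lemma segment (hn : 2 ≤ n) (hφ : IsPhi n φ) {u v : ℝ} (hu : u ∈ zpows n) (hv : v ∈ zpows n)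
    (hupos : 0 < u) (hvpos : 0 < v) (he : φ u = φ v) :
    ∃ ℓ ℓ' : List ℤ, ℓ.length = ℓ'.length ∧ sumPow n ℓ = u ∧ sumPow n ℓ' = v := by
  obtain ⟨a, hapos, hpa, Fa⟩ := decomp_all hn hφ hu hupos
  obtain ⟨a', hapos', hpa', Fa'⟩ := decomp_all hn hφ hv hvpos
  have hcast : (a : ZMod (n-1)) = (a' : ZMod (n-1)) := by rw [← hpa, ← hpa', he]
  have hmod : a ≡ a' [MOD n-1] := (ZMod.natCast_eq_natCast_iff a a' (n-1)).1 hcast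
  rcases le_total a a' with hle | hle
  · obtain ⟨t, ht⟩ := (Nat.modEq_iff_dvd' hle).1 hmod
    have ht2 : a' = (n-1) * t + a := (Nat.sub_eq_iff_eq_add hle).1 ht
    obtain ⟨ℓ, h1, h2⟩ := Fa t
    obtain ⟨ℓ', h1', h2'⟩ := Fa' 0
    refine ⟨ℓ, ℓ', ?_, h2, h2'⟩
    rw [h1, h1', ht2]; ring
  · obtain ⟨t, ht⟩ := (Nat.modEq_iff_dvd' hle).1 hmod.symm
    have ht2 : a = (n-1) * t + a' := (Nat.sub_eq_iff_eq_add hle).1 ht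
    obtain ⟨ℓ, h1, h2⟩ := Fa 0
    obtain ⟨ℓ', h1', h2'⟩ := Fa' t
    refine ⟨ℓ, ℓ', ?_, h2, h2'⟩
    rw [h1, h1', ht2]; ring

lemma segment_pairs (hn : 2 ≤ n) (hφ : IsPhi n φ) {u v : ℝ} (hu : u ∈ zpows n) (hv : v ∈ zpows n)
    (hupos : 0 < u) (hvpos : 0 < v) (he : φ u = φ v) :
    ∃ L : List (ℝ × ℝ), Good n L ∧ SA L = u ∧ SB L = v := by
  obtain ⟨ℓ, ℓ', hlen, h1, h2⟩ := segment hn hφ hu hv hupos hvpos he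
  refine ⟨List.zip (ℓ.map fun e => (n:ℝ) ^ e) (ℓ'.map fun e => (n:ℝ) ^ e), ?_, ?_, ?_⟩
  · rintro ⟨p1, p2⟩ hp
    obtain ⟨hm1, hm2⟩ := List.of_mem_zip hp
    obtain ⟨e1, _, he1⟩ := List.mem_map.1 hm1
    obtain ⟨e2, _, he2⟩ := List.mem_map.1 hm2
    exact ⟨⟨e1, he1.symm⟩, ⟨e2, he2.symm⟩⟩
  · rw [SA, List.map_fst_zip (by simp [hlen])]
    exact h1
  · rw [SB, List.map_snd_zip (by simp [hlen])]
    exact h2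

lemma dense_delta (hn : 2 ≤ n) (hφ : IsPhi n φ) {p q : ℝ} (hpq : p < q) :
    ∃ z, z ∈ zpows n ∧ φ z = 0 ∧ p < z ∧ z < q := by
  have hN1 : (1:ℝ) < n := by exact_mod_cast hn.trans_lt' one_lt_two
  have hNe := nR_ne hn
  obtain ⟨e, he⟩ := pow_unbounded_of_one_lt (((n:ℝ) - 1) / (q - p)) hN1
  set δ : ℝ := ((n:ℝ) - 1) * ((n:ℝ) ^ (e:ℕ))⁻¹ with hδdef
  have hpe : (0:ℝ) < (n:ℝ) ^ (e:ℕ) := by positivity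
  have hδpos : 0 < δ := by
    rw [hδdef]
    have : (0:ℝ) < (n:ℝ) - 1 := by linarith
    positivity
  have hδlt : δ < q - p := by
    rw [div_lt_iff₀ (by linarith : (0:ℝ) < q - p)] at he
    rw [mul_comm] at he
    have h4 : δ * (n:ℝ)^e = (n:ℝ) - 1 := by rw [hδdef]; field_simp
    have h5 : δ * (n:ℝ)^e < (q - p) * (n:ℝ)^e := by rw [h4]; linarith
    exact lt_of_mul_lt_mul_right h5 hpe.le
  set c : ℤ := ⌊p / δ⌋ + 1 with hcdef
  have h1 : p < c * δ := by
    have := Int.lt_floor_add_one (p / δ)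
    have h2 : p / δ < (c:ℝ) := by rw [hcdef]; push_cast; linarith
    calc p = (p / δ) * δ := by field_simp
    _ < c * δ := by exact mul_lt_mul_of_pos_right h2 hδpos
  have h2 : c * δ < q := by
    have hfl : (⌊p / δ⌋ : ℝ) ≤ p / δ := Int.floor_le _
    have : (c:ℝ) * δ ≤ (p / δ + 1) * δ := by
      apply mul_le_mul_of_nonneg_right _ hδpos.le
      rw [hcdef]; push_cast; linarith
    have heq : (p / δ + 1) * δ = p + δ := by field_simp
    linarith
  have hzd : (c:ℝ) * δ = ((c * ((n:ℤ) - 1) : ℤ) : ℝ) * (n:ℝ) ^ (-(e:ℤ)) := by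
    rw [hδdef]
    push_cast
    rw [zpow_neg, ← zpow_natCast (n:ℝ) e]
    ring
  refine ⟨(c:ℝ) * δ, ?_, ?_, h1, h2⟩
  · rw [hzd]; exact ⟨c * ((n:ℤ) - 1), -(e:ℤ), rfl⟩
  · rw [hzd, hφ.2.1 _ (zpows_intCast n _) _ (zpows_zpow hn _), phi_intCast hn hφ,
      phi_npow hn hφ, mul_one]
    have : ((n:ℤ) - 1 : ℤ) = ((n - 1 : ℕ) : ℤ) := by omega
    rw [this]
    push_cast
    simp [ZMod.natCast_self]

lemma join (hn : 2 ≤ n) (c d : ℕ → ℝ) (m : ℕ)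
    (hseg : ∀ j < m, ∃ L : List (ℝ × ℝ), Good n L ∧ SA L = c (j+1) - c j ∧ SB L = d (j+1) - d j) :
    ∃ L : List (ℝ × ℝ), Good n L ∧ SA L = c m - c 0 ∧ SB L = d m - d 0 ∧
      ∀ j ≤ m, ∃ t ≤ L.length, SA (L.take t) = c j - c 0 ∧ SB (L.take t) = d j - d 0 := by
  induction m with
  | zero =>
    refine ⟨[], by intro p hp; simp at hp, by simp [SA], by simp [SB], ?_⟩
    intro j hj
    have : j = 0 := by omega
    subst this
    exact ⟨0, by simp, by simp [SA], by simp [SB]⟩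
  | succ m ih =>
    obtain ⟨L, hG, hA, hB, hhits⟩ := ih (fun j hj => hseg j (by omega))
    obtain ⟨L₂, hG2, hA2, hB2⟩ := hseg m (by omega)
    refine ⟨L ++ L₂, ?_, ?_, ?_, ?_⟩
    · intro p hp
      rcases List.mem_append.1 hp with h | h
      exacts [hG p h, hG2 p h]
    · rw [SA_append]; linarith
    · rw [SB_append]; linarith
    · intro j hj
      rcases Nat.lt_or_ge j (m+1) with h | h
      · obtain ⟨t, ht, h1, h2⟩ := hhits j (by omega)
        refine ⟨t, by simp only [List.length_append]; omega, ?_, ?_⟩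
        · rw [List.take_append_of_le_length ht, h1]
        · rw [List.take_append_of_le_length ht, h2]
      · have hj' : j = m + 1 := by omega
        subst hj'
        refine ⟨(L ++ L₂).length, le_rfl, ?_, ?_⟩
        · rw [List.take_length, SA_append]; linarith
        · rw [List.take_length, SB_append]; linarith

end Seg

end Pf

/-- `BPLₙ(ℝ)` acts order `k`-transitively on `Δₙ = ker φₙ` for every
`k ≥ 1`: any increasing `k`-tuple in `Δₙ` can be carried to any other increasing
`k`-tuple in `Δₙ` by an element of `BPLₙ(ℝ)`. -/
theorem stmt_3 (n : ℕ) (hn : 2 ≤ n) (φ : ℝ → ZMod (n - 1)) (hφ : IsPhi n φ)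
    (k : ℕ) (hk : 1 ≤ k) (x y : Fin k → ℝ)
    (hx : StrictMono x) (hy : StrictMono y)
    (hxΔ : ∀ i, x i ∈ zpows n ∧ φ (x i) = 0)
    (hyΔ : ∀ i, y i ∈ zpows n ∧ φ (y i) = 0) :
    ∃ f : ℝ → ℝ, MemBPL n f ∧ ∀ i, f (x i) = y i := by
  classical
  set x' : ℕ → ℝ := fun i => if h : i < k then x ⟨i, h⟩ else 0 with hx'def
  set y' : ℕ → ℝ := fun i => if h : i < k then y ⟨i, h⟩ else 0 with hy'def
  have hx'val : ∀ (i) (h : i < k), x' i = x ⟨i, h⟩ := fun i h => by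
    simp only [hx'def]; rw [dif_pos h]
  have hy'val : ∀ (i) (h : i < k), y' i = y ⟨i, h⟩ := fun i h => by
    simp only [hy'def]; rw [dif_pos h]
  have hx'mono : ∀ i j, i < j → j < k → x' i < x' j := by
    intro i j hij hjk
    rw [hx'val i (by omega), hx'val j hjk]
    exact hx (Fin.mk_lt_mk.2 hij)
  have hy'mono : ∀ i j, i < j → j < k → y' i < y' j := by
    intro i j hij hjk
    rw [hy'val i (by omega), hy'val j hjk]
    exact hy (Fin.mk_lt_mk.2 hij)
  have hx'z : ∀ i < k, x' i ∈ zpows n ∧ φ (x' i) = 0 := fun i h => by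
    rw [hx'val i h]; exact hxΔ _
  have hy'z : ∀ i < k, y' i ∈ zpows n ∧ φ (y' i) = 0 := fun i h => by
    rw [hy'val i h]; exact hyΔ _
  -- bounds for the x-side checkpoints w
  set loc : ℕ → ℝ := fun i => if i = 0 then min (x' 0) (y' 0) - 1
    else if i < k then x' (i-1) else max (x' (k-1)) (y' (k-1)) with hlocdef
  set hic : ℕ → ℝ := fun i => if i = 0 then min (x' 0) (y' 0)
    else if i < k then x' i else loc i + 1 with hicdef
  have hic0 : hic 0 = min (x' 0) (y' 0) := by simp only [hicdef]; norm_num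
  have hicmid : ∀ i, i ≠ 0 → i < k → hic i = x' i := by
    intro i h0 hik; simp only [hicdef]; rw [if_neg h0, if_pos hik]
  have hloc0 : loc 0 = min (x' 0) (y' 0) - 1 := by simp only [hlocdef]; norm_num
  have hlocmid : ∀ i, i ≠ 0 → i < k → loc i = x' (i-1) := by
    intro i h0 hik; simp only [hlocdef]; rw [if_neg h0, if_pos hik]
  have hlock : ∀ i, i ≠ 0 → ¬ i < k → loc i = max (x' (k-1)) (y' (k-1)) := by
    intro i h0 hik; simp only [hlocdef]; rw [if_neg h0, if_neg hik]
  have hlochic : ∀ i, loc i < hic i := by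
    intro i
    by_cases h0 : i = 0
    · subst h0; rw [hic0, hloc0]; linarith
    by_cases hik : i < k
    · rw [hicmid i h0 hik, hlocmid i h0 hik]
      exact hx'mono (i-1) i (by omega) hik
    · simp only [hicdef]; rw [if_neg h0, if_neg hik]; linarith
  choose w hwz hwφ hwlo hwhi using fun i => Pf.dense_delta hn hφ (hlochic i)
  -- bounds for the y-side interior checkpoints u
  set lod : ℕ → ℝ := fun i => if i = 0 ∨ k ≤ i then (0:ℝ) else y' (i-1) with hloddef
  set hid : ℕ → ℝ := fun i => if i = 0 ∨ k ≤ i then (1:ℝ) else y' i with hhiddef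
  have hlodhid : ∀ i, lod i < hid i := by
    intro i
    by_cases h : i = 0 ∨ k ≤ i
    · simp only [hloddef, hhiddef]; rw [if_pos h, if_pos h]; norm_num
    · push_neg at h
      simp only [hloddef, hhiddef]
      rw [if_neg (by push_neg; exact h), if_neg (by push_neg; exact h)]
      exact hy'mono (i-1) i (by omega) (by omega)
  choose u huz huφ hulo huhi using fun i => Pf.dense_delta hn hφ (hlodhid i)
  set v : ℕ → ℝ := fun i => if i = 0 ∨ k ≤ i then w i else u i with hvdef
  have hvz : ∀ i, v i ∈ zpows n := by
    intro i; simp only [hvdef]; split_ifs; exacts [hwz i, huz i]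
  have hvφ : ∀ i, φ (v i) = 0 := by
    intro i; simp only [hvdef]; split_ifs; exacts [hwφ i, huφ i]
  have hv0 : v 0 = w 0 := by simp only [hvdef]; norm_num
  have hvk : v k = w k := by simp only [hvdef]; norm_num
  have hvmid : ∀ i, i ≠ 0 → i < k → v i = u i := by
    intro i h0 hik; simp only [hvdef]; rw [if_neg (by push_neg; omega)]
  -- checkpoints
  set c : ℕ → ℝ := fun j => if j % 2 = 0 then w (j / 2) else x' (j / 2) with hcdef
  set d : ℕ → ℝ := fun j => if j % 2 = 0 then v (j / 2) else y' (j / 2) with hddef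
  have hceven : ∀ i, c (2*i) = w i := fun i => by
    simp only [hcdef]; rw [if_pos (by omega)]
    congr 1; omega
  have hcodd : ∀ i, c (2*i+1) = x' i := fun i => by
    simp only [hcdef]; rw [if_neg (by omega)]
    congr 1; omega
  have hdeven : ∀ i, d (2*i) = v i := fun i => by
    simp only [hddef]; rw [if_pos (by omega)]
    congr 1; omega
  have hdodd : ∀ i, d (2*i+1) = y' i := fun i => by
    simp only [hddef]; rw [if_neg (by omega)]
    congr 1; omega
  have hcz : ∀ j ≤ 2*k, c j ∈ zpows n ∧ φ (c j) = 0 := by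
    intro j hj
    rcases Nat.even_or_odd j with ⟨i, rfl⟩ | ⟨i, rfl⟩
    · rw [show i + i = 2*i by ring, hceven]; exact ⟨hwz i, hwφ i⟩
    · rw [hcodd]; exact hx'z i (by omega)
  have hdz : ∀ j ≤ 2*k, d j ∈ zpows n ∧ φ (d j) = 0 := by
    intro j hj
    rcases Nat.even_or_odd j with ⟨i, rfl⟩ | ⟨i, rfl⟩
    · rw [show i + i = 2*i by ring, hdeven]; exact ⟨hvz i, hvφ i⟩
    · rw [hdodd]; exact hy'z i (by omega)
  have hclt : ∀ j < 2*k, c j < c (j+1) := by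
    intro j hj
    rcases Nat.even_or_odd j with ⟨i, rfl⟩ | ⟨i, rfl⟩
    · rw [show i + i = 2*i by ring, hceven, hcodd]
      have hik : i < k := by omega
      have hhi := hwhi i
      by_cases h0 : i = 0
      · subst h0
        rw [hic0] at hhi
        exact lt_of_lt_of_le hhi (min_le_left _ _)
      · rw [hicmid i h0 hik] at hhi; exact hhi
    · rw [show 2*i+1+1 = 2*(i+1) by ring, hcodd, hceven]
      have hlo := hwlo (i+1)
      by_cases hik1 : i + 1 < k
      · rw [hlocmid (i+1) (by omega) hik1] at hlo
        simpa using hlo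
      · have hik : i + 1 = k := by omega
        rw [hlock (i+1) (by omega) (by omega)] at hlo
        have : x' i ≤ max (x' (k-1)) (y' (k-1)) := by
          rw [show k - 1 = i by omega]; exact le_max_left _ _
        linarith
  have hdlt : ∀ j < 2*k, d j < d (j+1) := by
    intro j hj
    rcases Nat.even_or_odd j with ⟨i, rfl⟩ | ⟨i, rfl⟩
    · rw [show i + i = 2*i by ring, hdeven, hdodd]
      have hik : i < k := by omega
      by_cases h0 : i = 0
      · subst h0
        rw [hv0]
        have hhi := hwhi 0
        rw [hic0] at hhi
        exact lt_of_lt_of_le hhi (min_le_right _ _)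
      · rw [hvmid i h0 hik]
        have hhi := huhi i
        simp only [hhiddef] at hhi
        rw [if_neg (by push_neg; omega)] at hhi
        exact hhi
    · rw [show 2*i+1+1 = 2*(i+1) by ring, hdodd, hdeven]
      by_cases hik1 : i + 1 < k
      · rw [hvmid (i+1) (by omega) hik1]
        have hlo := hulo (i+1)
        simp only [hloddef] at hlo
        rw [if_neg (by push_neg; omega)] at hlo
        simpa using hlo
      · have hik : i + 1 = k := by omega
        rw [show i + 1 = k from hik, hvk]
        have hlo := hwlo k
        rw [hlock k (by omega) (by omega)] at hlo
        have : y' i ≤ max (x' (k-1)) (y' (k-1)) := by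
          rw [show k - 1 = i by omega]; exact le_max_right _ _
        linarith
  -- segments
  have hseg : ∀ j < 2*k, ∃ L : List (ℝ × ℝ), Pf.Good n L ∧
      Pf.SA L = c (j+1) - c j ∧ Pf.SB L = d (j+1) - d j := by
    intro j hj
    apply Pf.segment_pairs hn hφ
    · exact Pf.zpows_sub hn (hcz (j+1) (by omega)).1 (hcz j (by omega)).1
    · exact Pf.zpows_sub hn (hdz (j+1) (by omega)).1 (hdz j (by omega)).1
    · linarith [hclt j hj]
    · linarith [hdlt j hj]
    · rw [Pf.phi_sub hn hφ (hcz (j+1) (by omega)).1 (hcz j (by omega)).1,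
        Pf.phi_sub hn hφ (hdz (j+1) (by omega)).1 (hdz j (by omega)).1,
        (hcz (j+1) (by omega)).2, (hcz j (by omega)).2,
        (hdz (j+1) (by omega)).2, (hdz j (by omega)).2]
  obtain ⟨L, hG, hSA, hSB, hhits⟩ := Pf.join hn c d (2*k) hseg
  set A : ℕ → ℝ := fun j => w 0 + Pf.SA (L.take j) with hAdef
  set B : ℕ → ℝ := fun j => w 0 + Pf.SB (L.take j) with hBdef
  have hc0 : c 0 = w 0 := by simpa using hceven 0
  have hd0 : d 0 = w 0 := by
    have h1 := hdeven 0
    simp only [mul_zero] at h1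
    rw [h1, hv0]
  have hck : c (2*k) = w k := hceven k
  have hdk : d (2*k) = w k := by rw [hdeven k, hvk]
  have hstepAB : ∀ j < L.length,
      (∃ p : ℤ, A (j+1) - A j = (n:ℝ)^p) ∧ (∃ q : ℤ, B (j+1) - B j = (n:ℝ)^q) := by
    intro j hj
    have htake : L.take (j+1) = L.take j ++ [L.get ⟨j, hj⟩] := by
      rw [List.take_succ]
      simp [List.getElem?_eq_getElem hj]
    have h1 : Pf.SA (L.take (j+1)) = Pf.SA (L.take j) + (L.get ⟨j,hj⟩).1 := by
      rw [htake, Pf.SA_append]; simp [Pf.SA]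
    have h2 : Pf.SB (L.take (j+1)) = Pf.SB (L.take j) + (L.get ⟨j,hj⟩).2 := by
      rw [htake, Pf.SB_append]; simp [Pf.SB]
    obtain ⟨⟨p, hp⟩, ⟨q, hq⟩⟩ := hG _ (List.get_mem L ⟨j, hj⟩)
    refine ⟨⟨p, ?_⟩, ⟨q, ?_⟩⟩
    · simp only [hAdef]; rw [h1, ← hp]; ring
    · simp only [hBdef]; rw [h2, ← hq]; ring
  have hzAB : ∀ j ≤ L.length, A j ∈ zpows n ∧ B j ∈ zpows n := by
    intro j
    induction j with
    | zero =>
      intro _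
      constructor
      · simp only [hAdef]; simp [Pf.SA]; exact hwz 0
      · simp only [hBdef]; simp [Pf.SB]; exact hwz 0
    | succ j ih =>
      intro hj
      have hj' : j < L.length := by omega
      obtain ⟨⟨p, hp⟩, ⟨q, hq⟩⟩ := hstepAB j hj'
      have ihj := ih (by omega)
      constructor
      · rw [show A (j+1) = A j + (n:ℝ)^p by linarith]
        exact Pf.zpows_add hn ihj.1 (Pf.zpows_zpow hn p)
      · rw [show B (j+1) = B j + (n:ℝ)^q by linarith]
        exact Pf.zpows_add hn ihj.2 (Pf.zpows_zpow hn q)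
  have h00 : A 0 = B 0 := by
    simp only [hAdef, hBdef]
    simp [Pf.SA, Pf.SB]
  have hmm : A L.length = B L.length := by
    simp only [hAdef, hBdef]
    rw [List.take_length, hSA, hSB, hck, hdk, hc0, hd0]
  obtain ⟨f, hfBPL, hfA⟩ := Pf.grid hn L.length A B (fun j hj => (hstepAB j hj).1)
    (fun j hj => (hstepAB j hj).2) h00 hmm hzAB
  refine ⟨f, hfBPL, fun i => ?_⟩
  have hi2 : 2*(i:ℕ)+1 ≤ 2*k := by have := i.isLt; omega
  obtain ⟨t, ht, h1, h2⟩ := hhits (2*(i:ℕ)+1) hi2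
  have hxx : A t = x i := by
    simp only [hAdef]
    rw [h1, hc0, hcodd, hx'val _ i.isLt, Fin.eta]
    ring
  have hyy : B t = y i := by
    simp only [hBdef]
    rw [h2, hd0, hdodd, hy'val _ i.isLt, Fin.eta]
    ring
  rw [← hxx, hfA t ht, hyy]
end
end

section
/- For every integer n ≥ 2 and every k ≥ 1, BPL_n(ℝ) acts approximately order k-transitively on ℝ: given points x₁ < x₂ < ⋯ < x_k in ℝ and closed intervals I₁, I₂, …, I_k with nonempty interiors such that every point of Iᵢ is less than every point of I_{i+1} for each i, there exists f ∈ BPL_n(ℝ) with f(xᵢ) ∈ Iᵢ for all 1 ≤ i ≤ k. -/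
noncomputable section

namespace Stmt4

variable {n : ℕ}


lemma n_pos (hn : 2 ≤ n) : (0:ℝ) < n := by
  have : (0:ℕ) < n := by omega
  exact_mod_cast this

lemma one_lt_n (hn : 2 ≤ n) : (1:ℝ) < n := by
  have : (1:ℕ) < n := by omega
  exact_mod_cast this

lemma n_ne_zero (hn : 2 ≤ n) : (n:ℝ) ≠ 0 := ne_of_gt (n_pos hn)

lemma zpow_pos' (hn : 2 ≤ n) (k : ℤ) : (0:ℝ) < (n:ℝ) ^ k := zpow_pos (n_pos hn) k

lemma intCast_mem_zpows (a : ℤ) : ((a:ℝ)) ∈ zpows n := ⟨a, 0, by simp⟩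

lemma natCast_mem_zpows (a : ℕ) : ((a:ℝ)) ∈ zpows n := ⟨a, 0, by simp⟩

lemma zpow_mem_zpows (b : ℤ) : ((n:ℝ) ^ b) ∈ zpows n := ⟨1, b, by simp⟩

lemma one_mem_zpows : (1:ℝ) ∈ zpows n := ⟨1, 0, by simp⟩

lemma add_mem_zpows (hn : 2 ≤ n) {x y : ℝ} (hx : x ∈ zpows n) (hy : y ∈ zpows n) :
    x + y ∈ zpows n := by
  obtain ⟨a, b, rfl⟩ := hx
  obtain ⟨a', b', rfl⟩ := hy
  set m := min b b' with hm
  refine ⟨a * (n:ℕ) ^ (b - m).toNat + a' * (n:ℕ) ^ (b' - m).toNat, m, ?_⟩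
  have hb : ((b - m).toNat : ℤ) = b - m := Int.toNat_of_nonneg (by omega)
  have hb' : ((b' - m).toNat : ℤ) = b' - m := Int.toNat_of_nonneg (by omega)
  have hne := n_ne_zero hn
  push_cast
  rw [add_mul, mul_assoc, mul_assoc, ← zpow_natCast (n:ℝ), ← zpow_natCast (n:ℝ),
    ← zpow_add₀ hne, ← zpow_add₀ hne, hb, hb']
  ring_nf

lemma neg_mem_zpows {x : ℝ} (hx : x ∈ zpows n) : -x ∈ zpows n := by
  obtain ⟨a, b, rfl⟩ := hx
  exact ⟨-a, b, by push_cast; ring⟩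

lemma sub_mem_zpows (hn : 2 ≤ n) {x y : ℝ} (hx : x ∈ zpows n) (hy : y ∈ zpows n) :
    x - y ∈ zpows n := by
  rw [sub_eq_add_neg]; exact add_mem_zpows hn hx (neg_mem_zpows hy)

lemma mul_mem_zpows (hn : 2 ≤ n) {x y : ℝ} (hx : x ∈ zpows n) (hy : y ∈ zpows n) :
    x * y ∈ zpows n := by
  obtain ⟨a, b, rfl⟩ := hx
  obtain ⟨a', b', rfl⟩ := hy
  refine ⟨a * a', b + b', ?_⟩
  rw [zpow_add₀ (n_ne_zero hn)]
  push_cast; ring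

lemma zpow_mul_mem_zpows (hn : 2 ≤ n) (k : ℤ) {x : ℝ} (hx : x ∈ zpows n) :
    (n:ℝ) ^ k * x ∈ zpows n := mul_mem_zpows hn (zpow_mem_zpows k) hx

/-- density of `ℤ[1/n]` -/
lemma exists_zpows_between (hn : 2 ≤ n) {u v : ℝ} (huv : u < v) :
    ∃ q ∈ zpows n, u < q ∧ q < v := by
  obtain ⟨b, hb⟩ := pow_unbounded_of_one_lt ((v - u)⁻¹) (one_lt_n hn)
  have hnb : (0:ℝ) < (n:ℝ) ^ b := by positivity
  have hlt : ((n:ℝ) ^ b)⁻¹ < v - u := by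
    rw [inv_lt_comm₀ hnb (by linarith)] at *
    · exact hb
  refine ⟨(⌊u * (n:ℝ) ^ b⌋ + 1) * ((n:ℝ) ^ (-(b:ℤ))), ?_, ?_, ?_⟩
  · exact ⟨⌊u * (n:ℝ) ^ b⌋ + 1, -(b:ℤ), by push_cast; ring⟩
  · have h1 : u * (n:ℝ) ^ b < (⌊u * (n:ℝ) ^ b⌋ + 1 : ℝ) := Int.lt_floor_add_one _
    have : (n:ℝ) ^ (-(b:ℤ)) = ((n:ℝ) ^ b)⁻¹ := by
      rw [zpow_neg, zpow_natCast]
    rw [this]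
    calc u = u * (n:ℝ)^b * ((n:ℝ)^b)⁻¹ := by field_simp
      _ < (⌊u * (n:ℝ) ^ b⌋ + 1 : ℝ) * ((n:ℝ)^b)⁻¹ := by
          apply mul_lt_mul_of_pos_right h1 (by positivity)
  · have h2 : (⌊u * (n:ℝ) ^ b⌋ : ℝ) ≤ u * (n:ℝ) ^ b := Int.floor_le _
    have hninv : (n:ℝ) ^ (-(b:ℤ)) = ((n:ℝ) ^ b)⁻¹ := by
      rw [zpow_neg, zpow_natCast]
    rw [hninv]
    have : (⌊u * (n:ℝ) ^ b⌋ + 1 : ℝ) * ((n:ℝ)^b)⁻¹ ≤ (u * (n:ℝ)^b + 1) * ((n:ℝ)^b)⁻¹ := by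
      apply mul_le_mul_of_nonneg_right (by linarith) (by positivity)
    calc (⌊u * (n:ℝ) ^ b⌋ + 1 : ℝ) * ((n:ℝ)^b)⁻¹ ≤ (u * (n:ℝ)^b + 1) * ((n:ℝ)^b)⁻¹ := this
      _ = u + ((n:ℝ)^b)⁻¹ := by field_simp
      _ < v := by linarith

/-- geometric sum -/
def sig (n e : ℕ) : ℕ := ∑ i ∈ Finset.range e, n ^ i

lemma sig_mul (hn : 2 ≤ n) (e : ℕ) : ((sig n e : ℝ)) * ((n:ℝ) - 1) = (n:ℝ) ^ e - 1 := by
  have := geom_sum_mul (n:ℝ) e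
  rw [← this]
  push_cast [sig]
  ring

lemma le_sig (e : ℕ) (hn : 2 ≤ n) : e ≤ sig n e := by
  calc e = ∑ _i ∈ Finset.range e, 1 := by simp
    _ ≤ sig n e := Finset.sum_le_sum fun i _ => Nat.one_le_pow _ _ (by omega)

lemma sig_pos (e : ℕ) (hn : 2 ≤ n) (he : 1 ≤ e) : 0 < sig n e := lt_of_lt_of_le he (le_sig e hn)



/-- piecewise linear function from a list of (length, slope-exponent) pieces -/
def PLfun (n : ℕ) : ℝ → ℝ → List (ℝ × ℤ) → ℝ → ℝ
  | p, v, [], x => v + (x - p)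
  | p, v, (le, e) :: rest, x =>
      if x ≤ p + le then v + (n:ℝ)^e * (x - p)
      else PLfun n (p + le) (v + (n:ℝ)^e * le) rest x

def Len (l : List (ℝ × ℤ)) : ℝ := (l.map Prod.fst).sum
def Val (n : ℕ) (l : List (ℝ × ℤ)) : ℝ := (l.map fun q => (n:ℝ)^q.2 * q.1).sum
def Pos (l : List (ℝ × ℤ)) : Prop := ∀ q ∈ l, 0 < q.1
def Nad (n : ℕ) (l : List (ℝ × ℤ)) : Prop := ∀ q ∈ l, q.1 ∈ zpows n

def breaks : ℝ → List (ℝ × ℤ) → List ℝ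
  | p, [] => [p]
  | p, (le, _) :: rest => p :: breaks (p + le) rest

@[simp] lemma Len_nil : Len [] = 0 := rfl
@[simp] lemma Val_nil : Val n [] = 0 := rfl
@[simp] lemma Len_cons (q : ℝ × ℤ) (l : List (ℝ × ℤ)) : Len (q :: l) = q.1 + Len l := by
  simp [Len]
@[simp] lemma Val_cons (q : ℝ × ℤ) (l : List (ℝ × ℤ)) :
    Val n (q :: l) = (n:ℝ)^q.2 * q.1 + Val n l := by simp [Val]
@[simp] lemma Len_append (l₁ l₂ : List (ℝ × ℤ)) : Len (l₁ ++ l₂) = Len l₁ + Len l₂ := by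
  simp [Len]
@[simp] lemma Val_append (l₁ l₂ : List (ℝ × ℤ)) : Val n (l₁ ++ l₂) = Val n l₁ + Val n l₂ := by
  simp [Val]

lemma Len_nonneg {l : List (ℝ × ℤ)} (h : Pos l) : 0 ≤ Len l := by
  induction l with
  | nil => simp
  | cons q l ih =>
    have h1 := h q (by simp)
    have h2 : Pos l := fun r hr => h r (by simp [hr])
    simp only [Len_cons]
    linarith [ih h2]

lemma Pos_cons_tail {q : ℝ × ℤ} {l : List (ℝ × ℤ)} (h : Pos (q :: l)) : Pos l :=
  fun r hr => h r (by simp [hr])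
lemma Nad_cons_tail {q : ℝ × ℤ} {l : List (ℝ × ℤ)} (h : Nad n (q :: l)) : Nad n l :=
  fun r hr => h r (by simp [hr])

lemma lt_PLfun (hn : 2 ≤ n) {l : List (ℝ × ℤ)} (hl : Pos l) :
    ∀ p v x : ℝ, p < x → v < PLfun n p v l x := by
  induction l with
  | nil => intro p v x hpx; simp only [PLfun]; linarith
  | cons q l ih =>
    obtain ⟨le, e⟩ := q
    intro p v x hpx
    have hle : 0 < le := hl (le, e) (by simp)
    have hpow : (0:ℝ) < (n:ℝ)^e := zpow_pos (n_pos hn) e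
    simp only [PLfun]
    split
    · nlinarith
    · have := ih (Pos_cons_tail hl) (p + le) (v + (n:ℝ)^e * le) x (by linarith [not_le.mp ‹¬ x ≤ p + le›])
      nlinarith

lemma PLfun_strictMonoOn (hn : 2 ≤ n) {l : List (ℝ × ℤ)} (hl : Pos l) :
    ∀ p v x₁ x₂ : ℝ, p ≤ x₁ → x₁ < x₂ → PLfun n p v l x₁ < PLfun n p v l x₂ := by
  induction l with
  | nil => intro p v x₁ x₂ _ h12; simp only [PLfun]; linarith
  | cons q l ih =>
    obtain ⟨le, e⟩ := q
    intro p v x₁ x₂ hp1 h12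
    have hle : 0 < le := hl (le, e) (by simp)
    have hpow : (0:ℝ) < (n:ℝ)^e := zpow_pos (n_pos hn) e
    simp only [PLfun]
    by_cases h2 : x₂ ≤ p + le
    · rw [if_pos (by linarith), if_pos h2]
      nlinarith
    · rw [if_neg h2]
      push_neg at h2
      by_cases h1 : x₁ ≤ p + le
      · rw [if_pos h1]
        have hlt := lt_PLfun hn (Pos_cons_tail hl) (p + le) (v + (n:ℝ)^e * le) x₂ h2
        nlinarith
      · rw [if_neg h1]
        push_neg at h1
        exact ih (Pos_cons_tail hl) (p + le) (v + (n:ℝ)^e * le) x₁ x₂ (le_of_lt h1) h12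

lemma PLfun_surj (hn : 2 ≤ n) {l : List (ℝ × ℤ)} (hl : Pos l) :
    ∀ p v y : ℝ, v < y → ∃ x, p < x ∧ PLfun n p v l x = y := by
  induction l with
  | nil =>
    intro p v y hvy
    exact ⟨p + (y - v), by linarith, by simp only [PLfun]; ring⟩
  | cons q l ih =>
    obtain ⟨le, e⟩ := q
    intro p v y hvy
    have hpow : (0:ℝ) < (n:ℝ)^e := zpow_pos (n_pos hn) e
    have hpow' : (0:ℝ) < (n:ℝ)^(-e) := zpow_pos (n_pos hn) _
    have hee : (n:ℝ)^e * (n:ℝ)^(-e) = 1 := by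
      rw [← zpow_add₀ (n_ne_zero hn)]; simp
    by_cases hy : y ≤ v + (n:ℝ)^e * le
    · refine ⟨p + (n:ℝ)^(-e) * (y - v), by nlinarith, ?_⟩
      simp only [PLfun]
      rw [if_pos (by nlinarith)]
      nlinarith [hee]
    · push_neg at hy
      obtain ⟨x, hx1, hx2⟩ := ih (Pos_cons_tail hl) (p + le) (v + (n:ℝ)^e * le) y hy
      have hle : 0 < le := hl (le, e) (by simp)
      refine ⟨x, by linarith, ?_⟩
      simp only [PLfun]
      rw [if_neg (not_le.mpr hx1)]
      exact hx2

lemma PLfun_zpows (hn : 2 ≤ n) {l : List (ℝ × ℤ)} (hl : Nad n l) :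
    ∀ p v q : ℝ, p ∈ zpows n → v ∈ zpows n → q ∈ zpows n → PLfun n p v l q ∈ zpows n := by
  induction l with
  | nil =>
    intro p v q hp hv hq
    simp only [PLfun]
    exact add_mem_zpows hn hv (sub_mem_zpows hn hq hp)
  | cons r l ih =>
    obtain ⟨le, e⟩ := r
    intro p v q hp hv hq
    have hlem : le ∈ zpows n := hl (le, e) (by simp)
    simp only [PLfun]
    split
    · exact add_mem_zpows hn hv
        (mul_mem_zpows hn (zpow_mem_zpows e) (sub_mem_zpows hn hq hp))
    · exact ih (Nad_cons_tail hl) _ _ _ (add_mem_zpows hn hp hlem)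
        (add_mem_zpows hn hv (mul_mem_zpows hn (zpow_mem_zpows e) hlem)) hq

lemma PLfun_tail (hn : 2 ≤ n) {l : List (ℝ × ℤ)} (hl : Pos l) :
    ∀ p v x : ℝ, p + Len l < x →
      PLfun n p v l x = v + Val n l + (x - (p + Len l)) := by
  induction l with
  | nil => intro p v x _; simp only [PLfun, Len_nil, Val_nil]; ring
  | cons q l ih =>
    obtain ⟨le, e⟩ := q
    intro p v x hx
    have hL : 0 ≤ Len l := Len_nonneg (Pos_cons_tail hl)
    simp only [Len_cons, Val_cons] at hx ⊢
    simp only [PLfun]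
    rw [if_neg (by push_neg; linarith : ¬ x ≤ p + le)]
    rw [ih (Pos_cons_tail hl) (p + le) (v + (n:ℝ)^e * le) x (by linarith)]
    ring

lemma PLfun_append (hn : 2 ≤ n) {l₁ : List (ℝ × ℤ)} (hl : Pos l₁) :
    ∀ (l₂ : List (ℝ × ℤ)) (p v x : ℝ), p + Len l₁ < x →
      PLfun n p v (l₁ ++ l₂) x = PLfun n (p + Len l₁) (v + Val n l₁) l₂ x := by
  induction l₁ with
  | nil => intro l₂ p v x _; simp
  | cons q l ih =>
    obtain ⟨le, e⟩ := q
    intro l₂ p v x hx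
    have hL : 0 ≤ Len l := Len_nonneg (Pos_cons_tail hl)
    simp only [Len_cons, Val_cons] at hx ⊢
    simp only [List.cons_append, PLfun]
    rw [if_neg (by push_neg; linarith : ¬ x ≤ p + le)]
    rw [ih (Pos_cons_tail hl) l₂ (p + le) (v + (n:ℝ)^e * le) x (by linarith),
      add_assoc, add_assoc]

lemma breaks_zpows (hn : 2 ≤ n) {l : List (ℝ × ℤ)} (hl : Nad n l) :
    ∀ p : ℝ, p ∈ zpows n → ∀ z ∈ breaks p l, z ∈ zpows n := by
  induction l with
  | nil => intro p hp z hz; simp only [breaks, List.mem_singleton] at hz; rwa [hz]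
  | cons q l ih =>
    obtain ⟨le, e⟩ := q
    intro p hp z hz
    simp only [breaks, List.mem_cons] at hz
    rcases hz with rfl | hz
    · exact hp
    · exact ih (Nad_cons_tail hl) (p + le) (add_mem_zpows hn hp (hl (le, e) (by simp))) z hz

lemma locDiscrete_list (L : List ℝ) : LocDiscrete {z | z ∈ L} := by
  induction L with
  | nil => intro x; exact ⟨1, one_pos, by simp⟩
  | cons a L ih =>
    intro x
    obtain ⟨ε, hε, hεP⟩ := ih x
    by_cases ha : a = x
    · exact ⟨ε, hε, by
        intro y hy hyx
        simp only [Set.mem_setOf_eq, List.mem_cons] at hy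
        rcases hy with rfl | hy
        · exact ha
        · exact hεP y hy hyx⟩
    · refine ⟨min ε |a - x|, lt_min hε (abs_pos.mpr (sub_ne_zero.mpr ha)), ?_⟩
      intro y hy hyx
      simp only [Set.mem_setOf_eq, List.mem_cons] at hy
      rcases hy with rfl | hy
      · exact absurd (lt_of_lt_of_le hyx (min_le_right _ _)) (lt_irrefl _)
      · exact hεP y hy (lt_of_lt_of_le hyx (min_le_left _ _))

lemma PLfun_lin (hn : 2 ≤ n) {l : List (ℝ × ℤ)} (hl : Pos l) :
    ∀ p v x : ℝ, x ∉ breaks p l →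
      ∃ (k : ℤ) (c : ℝ), ∃ ε > 0, ∀ y : ℝ, |y - x| < ε →
        PLfun n p v l y = (n:ℝ)^k * y + c := by
  induction l with
  | nil =>
    intro p v x _
    refine ⟨0, v - p, 1, one_pos, fun y _ => ?_⟩
    simp only [PLfun, zpow_zero]
    ring
  | cons q l ih =>
    obtain ⟨le, e⟩ := q
    intro p v x hx
    simp only [breaks, List.mem_cons] at hx
    push_neg at hx
    obtain ⟨hxp, hxrest⟩ := hx
    have hxple : x ≠ p + le := by
      intro hc
      exact hxrest (by
        rw [← hc] at *
        cases l with
        | nil => simp [breaks]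
        | cons r l' => simp [breaks])
    rcases lt_or_gt_of_ne hxple with hlt | hgt
    · refine ⟨e, v - (n:ℝ)^e * p, p + le - x, by linarith, fun y hy => ?_⟩
      have : y ≤ p + le := by
        rcases abs_lt.mp hy with ⟨_, h2⟩; linarith
      simp only [PLfun]
      rw [if_pos this]
      ring
    · obtain ⟨k, c, ε, hε, hP⟩ := ih (Pos_cons_tail hl) (p + le) (v + (n:ℝ)^e * le) x hxrest
      refine ⟨k, c, min ε (x - (p + le)), lt_min hε (by linarith), fun y hy => ?_⟩
      have h1 : |y - x| < ε := lt_of_lt_of_le hy (min_le_left _ _)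
      have h2 : ¬ y ≤ p + le := by
        rcases abs_lt.mp (lt_of_lt_of_le hy (min_le_right _ _)) with ⟨hA, _⟩
        push_neg
        linarith
      simp only [PLfun]
      rw [if_neg h2]
      exact hP y h1




/-- the global piecewise linear map -/
def F (n : ℕ) (P : ℝ) (l : List (ℝ × ℤ)) (x : ℝ) : ℝ :=
  if x ≤ P then x else PLfun n P P l x

lemma memBPL_F (hn : 2 ≤ n) {P : ℝ} {l : List (ℝ × ℤ)} (hP : P ∈ zpows n)
    (hpos : Pos l) (hnad : Nad n l) (hval : Val n l = Len l) : MemBPL n (F n P l) := by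
  have hmono : StrictMono (F n P l) := by
    intro x₁ x₂ h12
    unfold F
    by_cases h2 : x₂ ≤ P
    · rw [if_pos (le_of_lt (lt_of_lt_of_le h12 h2)), if_pos h2]; exact h12
    · rw [if_neg h2]
      push_neg at h2
      by_cases h1 : x₁ ≤ P
      · rw [if_pos h1]
        exact lt_of_le_of_lt h1 (lt_PLfun hn hpos P P x₂ h2)
      · rw [if_neg h1]
        push_neg at h1
        exact PLfun_strictMonoOn hn hpos P P x₁ x₂ (le_of_lt h1) h12
  refine ⟨⟨hmono, ?_, ?_, ?_⟩, ?_⟩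
  · -- surjective
    intro y
    by_cases hy : y ≤ P
    · exact ⟨y, by simp [F, hy]⟩
    · push_neg at hy
      obtain ⟨x, hx1, hx2⟩ := PLfun_surj hn hpos P P y hy
      exact ⟨x, by rw [F, if_neg (not_le.mpr hx1)]; exact hx2⟩
  · -- piecewise linear
    refine ⟨{z | z ∈ breaks P l}, ?_, locDiscrete_list _, ?_⟩
    · intro z hz; exact breaks_zpows hn hnad P hP z hz
    · intro x hx
      have hxP : x ≠ P := by
        intro hc
        apply hx
        rw [hc]
        cases l with
        | nil => simp [breaks]
        | cons r l' => simp [breaks]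
      rcases lt_or_gt_of_ne hxP with hlt | hgt
      · refine ⟨0, 0, P - x, by linarith, fun y hy => ?_⟩
        have : y ≤ P := by rcases abs_lt.mp hy with ⟨_, h2⟩; linarith
        rw [F, if_pos this, zpow_zero]
        ring
      · obtain ⟨k, c, ε, hε, hfor⟩ := PLfun_lin hn hpos P P x hx
        refine ⟨k, c, min ε (x - P), lt_min hε (by linarith), fun y hy => ?_⟩
        have h1 : |y - x| < ε := lt_of_lt_of_le hy (min_le_left _ _)
        have h2 : ¬ y ≤ P := by
          rcases abs_lt.mp (lt_of_lt_of_le hy (min_le_right _ _)) with ⟨hA, _⟩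
          push_neg; linarith
        rw [F, if_neg h2]
        exact hfor y h1
  · -- zpows preserved
    intro q hq
    unfold F
    split
    · exact hq
    · exact PLfun_zpows hn hnad P P q hP hP hq
  · -- bounded support
    refine ⟨|P| + |Len l| + 1, fun x hx => ?_⟩
    by_cases hxP : x ≤ P
    · rw [F, if_pos hxP]
    · push_neg at hxP
      have hx0 : 0 ≤ x := by
        by_contra hc
        push_neg at hc
        have : x < P := lt_of_lt_of_le (by cases abs_cases x with
          | inl h => linarith [abs_nonneg (Len l), h.1, le_abs_self P]
          | inr h => linarith [abs_nonneg (Len l), neg_abs_le P]) le_rfl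
        linarith
      have hxbig : P + Len l < x := by
        have h1 : |x| = x := abs_of_nonneg hx0
        have := le_abs_self P
        have := le_abs_self (Len l)
        linarith [hx, h1.symm.le]
      rw [F, if_neg (not_le.mpr hxP), PLfun_tail hn hpos P P x hxbig, hval]
      ring

lemma memBPL_id : MemBPL n id := by
  refine ⟨⟨strictMono_id, Function.surjective_id, ⟨∅, by simp, fun x => ⟨1, one_pos, by simp⟩, ?_⟩, fun q hq => hq⟩, 0, fun x _ => rfl⟩
  intro x _
  exact ⟨0, 0, 1, one_pos, fun y _ => by simp⟩

lemma continuous_of_memBPL {f : ℝ → ℝ} (hf : MemBPL n f) : Continuous f := by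
  obtain ⟨⟨hmono, hsurj, _, _⟩, _⟩ := hf
  have := (StrictMono.orderIsoOfSurjective f hmono hsurj).continuous
  rwa [StrictMono.coe_orderIsoOfSurjective] at this

lemma memBPL_comp (hn : 2 ≤ n) {f g : ℝ → ℝ} (hf : MemBPL n f) (hg : MemBPL n g) :
    MemBPL n (g ∘ f) := by
  obtain ⟨⟨hfm, hfs, ⟨Bf, hBfz, hBfd, hBfl⟩, hfz⟩, Mf, hMf⟩ := hf
  obtain ⟨⟨hgm, hgs, ⟨Bg, hBgz, hBgd, hBgl⟩, hgz⟩, Mg, hMg⟩ := hg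
  have hfc : Continuous f := continuous_of_memBPL ⟨⟨hfm, hfs, ⟨Bf, hBfz, hBfd, hBfl⟩, hfz⟩, Mf, hMf⟩
  have hnz : (n:ℝ) ≠ 0 := n_ne_zero hn
  -- preimage of zpows points under f at non-break points are zpows
  have hpre : ∀ x : ℝ, x ∉ Bf → f x ∈ zpows n → x ∈ zpows n := by
    intro x hx hfx
    obtain ⟨k, c, ε, hε, hlin⟩ := hBfl x hx
    obtain ⟨y₀, hy₀z, hy₀1, hy₀2⟩ := exists_zpows_between hn (show x - ε < x by linarith)
    have hy₀ : |y₀ - x| < ε := by rw [abs_lt]; constructor <;> linarith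
    have hc : c ∈ zpows n := by
      have h1 : f y₀ = (n:ℝ)^k * y₀ + c := hlin y₀ hy₀
      have h2 : c = f y₀ - (n:ℝ)^k * y₀ := by linarith
      rw [h2]
      exact sub_mem_zpows hn (hfz y₀ hy₀z) (mul_mem_zpows hn (zpow_mem_zpows k) hy₀z)
    have h3 : f x = (n:ℝ)^k * x + c := hlin x (by simpa using hε)
    have h4 : x = (n:ℝ)^(-k) * (f x - c) := by
      rw [h3]
      have : (n:ℝ)^k * x + c - c = (n:ℝ)^k * x := by ring
      rw [this, ← mul_assoc, ← zpow_add₀ hnz]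
      simp
    rw [h4]
    exact mul_mem_zpows hn (zpow_mem_zpows _) (sub_mem_zpows hn hfx hc)
  refine ⟨⟨hgm.comp hfm, hgs.comp hfs, ⟨Bf ∪ (f ⁻¹' Bg), ?_, ?_, ?_⟩, fun q hq => hgz _ (hfz q hq)⟩, max Mf Mg, ?_⟩
  · -- ⊆ zpows
    rintro z (hz | hz)
    · exact hBfz hz
    · by_cases hzB : z ∈ Bf
      · exact hBfz hzB
      · exact hpre z hzB (hBgz hz)
  · -- LocDiscrete
    intro x
    obtain ⟨ε₁, hε₁, h₁⟩ := hBfd x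
    obtain ⟨ε₂, hε₂, h₂⟩ := hBgd (f x)
    obtain ⟨δ, hδ, hδP⟩ := Metric.continuous_iff.mp hfc x ε₂ hε₂
    refine ⟨min ε₁ δ, lt_min hε₁ hδ, ?_⟩
    rintro y (hy | hy) hyx
    · exact h₁ y hy (lt_of_lt_of_le hyx (min_le_left _ _))
    · have : dist y x < δ := lt_of_lt_of_le (by rwa [Real.dist_eq]) (min_le_right _ _)
      have hfyx : |f y - f x| < ε₂ := by
        have := hδP y this
        rwa [Real.dist_eq] at this
      have := h₂ (f y) hy hfyx
      exact hfm.injective this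
  · -- linearity
    intro x hx
    simp only [Set.mem_union, not_or, Set.mem_preimage] at hx
    obtain ⟨hx₁, hx₂⟩ := hx
    obtain ⟨k, c, ε₁, hε₁, h₁⟩ := hBfl x hx₁
    obtain ⟨k', c', ε₂, hε₂, h₂⟩ := hBgl (f x) hx₂
    have hkpos : (0:ℝ) < (n:ℝ)^k := zpow_pos (n_pos hn) k
    refine ⟨k + k', (n:ℝ)^k' * c + c', min ε₁ ((n:ℝ)^(-k) * ε₂), lt_min hε₁ (by positivity), ?_⟩
    intro y hy
    have hy₁ : |y - x| < ε₁ := lt_of_lt_of_le hy (min_le_left _ _)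
    have hy₂ : |y - x| < (n:ℝ)^(-k) * ε₂ := lt_of_lt_of_le hy (min_le_right _ _)
    have hfy : f y = (n:ℝ)^k * y + c := h₁ y hy₁
    have hfx : f x = (n:ℝ)^k * x + c := h₁ x (by simpa using hε₁)
    have hdist : |f y - f x| < ε₂ := by
      rw [hfy, hfx]
      have : (n:ℝ)^k * y + c - ((n:ℝ)^k * x + c) = (n:ℝ)^k * (y - x) := by ring
      rw [this, abs_mul, abs_of_pos hkpos]
      calc (n:ℝ)^k * |y - x| < (n:ℝ)^k * ((n:ℝ)^(-k) * ε₂) := by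
            exact mul_lt_mul_of_pos_left hy₂ hkpos
        _ = ε₂ := by
            rw [← mul_assoc, ← zpow_add₀ hnz]
            simp
    have := h₂ (f y) hdist
    simp only [Function.comp_apply]
    rw [this, hfy, zpow_add₀ hnz]
    ring
  · -- bounded support
    intro z hz
    have h1 : f z = z := hMf z (lt_of_le_of_lt (le_max_left _ _) hz)
    have h2 : g z = z := hMg z (lt_of_le_of_lt (le_max_right _ _) hz)
    simp [Function.comp_apply, h1, h2]

lemma choose_gamma (hn : 2 ≤ n) {d C : ℝ} (hd : 0 < d) (hC : 0 < C) :
    ∃ (e : ℕ) (γ : ℝ), 1 ≤ e ∧ γ ∈ zpows n ∧ 0 < γ ∧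
      (sig n e : ℝ) * γ < d ∧ d - (sig n e : ℝ) * γ < C ∧ γ < C := by
  set e : ℕ := ⌈d / C⌉₊ + 1 with he
  have hle : 1 ≤ e := by omega
  have heS : (e : ℝ) ≤ (sig n e : ℝ) := by exact_mod_cast le_sig e hn
  have hdc : d / C < e := by
    calc d / C ≤ ⌈d / C⌉₊ := Nat.le_ceil _
      _ < (e : ℝ) := by exact_mod_cast Nat.lt_succ_self _
  have hdcS : d / C < (sig n e : ℝ) := lt_of_lt_of_le hdc heS
  have hSpos : 0 < (sig n e : ℝ) := lt_trans (by positivity) hdcS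
  obtain ⟨γ, hγz, hγ1, hγ2⟩ :=
    exists_zpows_between hn (show max ((d - C)/(sig n e : ℝ)) 0 < d / (sig n e : ℝ) by
      apply max_lt
      · apply div_lt_div_of_pos_right ?_ hSpos
        · linarith
      · positivity)
  refine ⟨e, γ, hle, hγz, lt_of_le_of_lt (le_max_right _ _) hγ1, ?_, ?_, ?_⟩
  · calc (sig n e : ℝ) * γ < (sig n e : ℝ) * (d / (sig n e : ℝ)) :=
        mul_lt_mul_of_pos_left hγ2 hSpos
      _ = d := by field_simp
  · have h1 : (d - C)/(sig n e : ℝ) < γ := lt_of_le_of_lt (le_max_left _ _) hγ1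
    rw [div_lt_iff₀ hSpos] at h1
    nlinarith
  · have : d / (sig n e : ℝ) < C := by
      rw [div_lt_iff₀ hSpos]
      rw [div_lt_iff₀ hC] at hdcS
      nlinarith
    linarith

lemma segment (hn : 2 ≤ n) {A A' δ : ℝ} (hA : A ∈ zpows n) (hA' : A' ∈ zpows n)
    (hApos : 0 < A) (hA'pos : 0 < A') (hδ : δ ∈ zpows n)
    (heq : A' = A + ((n:ℝ) - 1) * δ) :
    ∃ l : List (ℝ × ℤ), Pos l ∧ Nad n l ∧ Len l = A ∧ Val n l = A' := by
  have hn1 : (1:ℝ) < n := one_lt_n hn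
  have hnz : (n:ℝ) ≠ 0 := n_ne_zero hn
  rcases lt_trichotomy δ 0 with hneg | hzero | hpos
  · -- shrink case
    set d : ℝ := -δ with hd
    have hdpos : 0 < d := by simp [hd]; linarith
    have hdz : d ∈ zpows n := neg_mem_zpows hδ
    have hDA : ((n:ℝ) - 1) * d < A := by nlinarith
    set C : ℝ := (A - ((n:ℝ)-1)*d) / (2*((n:ℝ)+1)) with hC
    have hCpos : 0 < C := div_pos (by linarith) (by linarith)
    have hCkey : ((n:ℝ)+1)*C = (A - ((n:ℝ)-1)*d)/2 := by
      rw [hC]; field_simp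
    obtain ⟨e, γ, he1, hγz, hγpos, h1, h2, h3⟩ := choose_gamma hn hdpos hCpos
    have hs : (sig n e : ℝ) * ((n:ℝ) - 1) = (n:ℝ)^e - 1 := sig_mul hn e
    set γ' : ℝ := d - (sig n e : ℝ) * γ with hγ'
    have hγ'pos : 0 < γ' := by simp only [hγ']; linarith
    have hpowe : (n:ℝ)^e = (n:ℝ)^(e:ℤ) := by rw [zpow_natCast]
    have hpowpos : (0:ℝ) < (n:ℝ)^e := by positivity
    set rest : ℝ := A - (n:ℝ)^e * γ - (n:ℝ) * γ' with hrest
    have hb1 : (n:ℝ)^e * γ < ((n:ℝ)-1)*d + C := by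
      have hkey : (n:ℝ)^e * γ = ((n:ℝ)-1) * ((sig n e : ℝ) * γ) + γ := by
        linear_combination (-γ) * hs
      nlinarith
    have hb2 : (n:ℝ) * γ' < (n:ℝ) * C := mul_lt_mul_of_pos_left h2 (by linarith)
    have hrestpos : 0 < rest := by
      simp only [hrest]
      nlinarith
    refine ⟨[((n:ℝ)^e * γ, -(e:ℤ)), ((n:ℝ) * γ', -1), (rest, 0)], ?_, ?_, ?_, ?_⟩
    · rintro q hq
      simp only [List.mem_cons, List.mem_singleton] at hq
      rcases hq with rfl | rfl | rfl | h
      · exact mul_pos hpowpos hγpos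
      · exact mul_pos (by linarith) hγ'pos
      · exact hrestpos
      · exact absurd h List.not_mem_nil
    · have hne : (n:ℝ)^e * γ ∈ zpows n := by
        rw [hpowe]; exact mul_mem_zpows hn (zpow_mem_zpows _) hγz
      have hγ'z : γ' ∈ zpows n :=
        sub_mem_zpows hn hdz (mul_mem_zpows hn (natCast_mem_zpows _) hγz)
      have hnγ' : (n:ℝ) * γ' ∈ zpows n := mul_mem_zpows hn (natCast_mem_zpows n) hγ'z
      rintro q hq
      simp only [List.mem_cons, List.mem_singleton] at hq
      rcases hq with rfl | rfl | rfl | h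
      · exact hne
      · exact hnγ'
      · exact sub_mem_zpows hn (sub_mem_zpows hn hA hne) hnγ'
      · exact absurd h List.not_mem_nil
    · simp only [Len_cons, Len_nil, hrest]
      ring
    · simp only [Val_cons, Val_nil]
      have e1 : (n:ℝ)^(-(e:ℤ)) * ((n:ℝ)^e * γ) = γ := by
        rw [hpowe, ← mul_assoc, ← zpow_add₀ hnz]
        simp
      have e2 : (n:ℝ)^(-1:ℤ) * ((n:ℝ) * γ') = γ' := by
        rw [zpow_neg_one, inv_mul_cancel_left₀ hnz]
      rw [e1, e2, zpow_zero]
      simp only [hrest, hγ']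
      have hA'd : A' = A - ((n:ℝ)-1)*d := by rw [heq, hd]; ring
      rw [hA'd]
      linear_combination γ * hs
  · -- identity case
    refine ⟨[(A, 0)], ?_, ?_, ?_, ?_⟩
    · rintro q hq
      simp only [List.mem_singleton] at hq
      subst hq; exact hApos
    · rintro q hq
      simp only [List.mem_singleton] at hq
      subst hq; exact hA
    · simp [Len]
    · simp only [Val_cons, Val_nil, zpow_zero]
      rw [heq, hzero]
      ring
  · -- grow case
    set C : ℝ := min δ (A/4) with hC
    have hCpos : 0 < C := lt_min hpos (by linarith)
    obtain ⟨e, γ, he1, hγz, hγpos, h1, h2, h3⟩ := choose_gamma hn hpos hCpos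
    have hs : (sig n e : ℝ) * ((n:ℝ) - 1) = (n:ℝ)^e - 1 := sig_mul hn e
    set γ' : ℝ := δ - (sig n e : ℝ) * γ with hγ'
    have hγ'pos : 0 < γ' := by simp only [hγ']; linarith
    set rest : ℝ := A - γ - γ' with hrest
    have hrestpos : 0 < rest := by
      have hCA : C ≤ A/4 := min_le_right _ _
      simp only [hrest]
      linarith
    have hpowe : (n:ℝ)^e = (n:ℝ)^(e:ℤ) := by rw [zpow_natCast]
    refine ⟨[(γ, (e:ℤ)), (γ', 1), (rest, 0)], ?_, ?_, ?_, ?_⟩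
    · rintro q hq
      simp only [List.mem_cons, List.mem_singleton] at hq
      rcases hq with rfl | rfl | rfl | h
      · exact hγpos
      · exact hγ'pos
      · exact hrestpos
      · exact absurd h List.not_mem_nil
    · have hγ'z : γ' ∈ zpows n :=
        sub_mem_zpows hn hδ (mul_mem_zpows hn (natCast_mem_zpows _) hγz)
      rintro q hq
      simp only [List.mem_cons, List.mem_singleton] at hq
      rcases hq with rfl | rfl | rfl | h
      · exact hγz
      · exact hγ'z
      · exact sub_mem_zpows hn (sub_mem_zpows hn hA hγz) hγ'z
      · exact absurd h List.not_mem_nil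
    · simp only [Len_cons, Len_nil, hrest]
      ring
    · simp only [Val_cons, Val_nil, zpow_one, zpow_zero]
      rw [← hpowe, heq]
      simp only [hrest, hγ']
      linear_combination (-γ) * hs

lemma mover (hn : 2 ≤ n) {lo y α β : ℝ} (h1 : lo < y) (h2 : lo < α) (h3 : α < β) :
    ∃ g : ℝ → ℝ, MemBPL n g ∧ g y ∈ Set.Ioo α β ∧ ∀ z : ℝ, z ≤ lo → g z = z := by
  have hn1 : (1:ℝ) < n := one_lt_n hn
  have hnz : (n:ℝ) ≠ 0 := n_ne_zero hn
  -- P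
  obtain ⟨P, hPz, hP1, hP2⟩ := exists_zpows_between hn (show lo < min y α from lt_min h1 h2)
  have hPy : P < y := lt_of_lt_of_le hP2 (min_le_left _ _)
  have hPα : P < α := lt_of_lt_of_le hP2 (min_le_right _ _)
  -- m
  obtain ⟨m, hmz, hm1, hm2⟩ := exists_zpows_between hn hPy
  -- s and t
  obtain ⟨s, hsz, hs1, hs2⟩ := exists_zpows_between hn
    (show (α - m)/((n:ℝ)-1) < (β - m)/((n:ℝ)-1) from by
      apply div_lt_div_of_pos_right (by linarith) (by linarith))
  set t : ℝ := m + ((n:ℝ)-1)*s with ht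
  have htz : t ∈ zpows n := add_mem_zpows hn hmz
    (mul_mem_zpows hn (sub_mem_zpows hn (natCast_mem_zpows n) one_mem_zpows) hsz)
  have hαt : α < t := by
    rw [div_lt_iff₀ (show (0:ℝ) < (n:ℝ)-1 by linarith)] at hs1
    simp only [ht]; linarith
  have htβ : t < β := by
    rw [lt_div_iff₀ (show (0:ℝ) < (n:ℝ)-1 by linarith)] at hs2
    simp only [ht]; linarith
  -- m'
  obtain ⟨m', hm'z, hm'1, hm'2⟩ := exists_zpows_between hn (show y < y + 1 by linarith)
  have hmm' : m < m' := by linarith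
  -- e2
  have hβt : (0:ℝ) < β - t := by linarith
  obtain ⟨e2, he2⟩ := pow_unbounded_of_one_lt ((m' - m)/(β - t)) hn1
  set u : ℝ := (n:ℝ)^(-(e2:ℤ)) * (m' - m) with hu_def
  have hupos : 0 < u := mul_pos (zpow_pos (n_pos hn) _) (by linarith)
  have hcast : (n:ℝ)^(e2:ℕ) = (n:ℝ)^(e2:ℤ) := by rw [zpow_natCast]
  have hzpos : (0:ℝ) < (n:ℝ)^(e2:ℤ) := zpow_pos (n_pos hn) _
  have hnegpos : (0:ℝ) < (n:ℝ)^(-(e2:ℤ)) := zpow_pos (n_pos hn) _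
  have hu : (n:ℝ)^(e2:ℤ) * u = m' - m := by
    rw [hu_def, ← mul_assoc, ← zpow_add₀ hnz]
    simp
  have huβ : u < β - t := by
    rw [div_lt_iff₀ hβt] at he2
    rw [hcast] at he2
    -- m' - m < n^{e2} * (β - t), multiply by n^{-e2}
    have := mul_lt_mul_of_pos_left he2 hnegpos
    rw [hu_def]
    calc (n:ℝ)^(-(e2:ℤ)) * (m' - m) < (n:ℝ)^(-(e2:ℤ)) * ((n:ℝ)^(e2:ℤ) * (β - t)) := this
      _ = β - t := by rw [← mul_assoc, ← zpow_add₀ hnz]; simp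
  -- first segment
  obtain ⟨l₁, hPos1, hNad1, hLen1, hVal1⟩ := segment hn
    (sub_mem_zpows hn hmz hPz) (sub_mem_zpows hn htz hPz)
    (show (0:ℝ) < m - P by linarith) (show (0:ℝ) < t - P by linarith) hsz
    (show t - P = (m - P) + ((n:ℝ)-1)*s by rw [ht]; ring)
  -- fm' and second segment target
  set fm' : ℝ := t + u with hfm'
  have hfm'z : fm' ∈ zpows n := add_mem_zpows hn htz
    (mul_mem_zpows hn (zpow_mem_zpows _) (sub_mem_zpows hn hm'z hmz))
  -- R
  obtain ⟨R, hRz, hR1, hR2⟩ := exists_zpows_between hn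
    (show max m' fm' < max m' fm' + 1 by linarith)
  have hRm' : m' < R := lt_of_le_of_lt (le_max_left _ _) hR1
  have hRfm' : fm' < R := lt_of_le_of_lt (le_max_right _ _) hR1
  -- δ₂
  set δ₂ : ℝ := (sig n e2 : ℝ) * u - s with hδ₂
  have hδ₂z : δ₂ ∈ zpows n := sub_mem_zpows hn
    (mul_mem_zpows hn (natCast_mem_zpows _)
      (mul_mem_zpows hn (zpow_mem_zpows _) (sub_mem_zpows hn hm'z hmz))) hsz
  have hs2c : (sig n e2 : ℝ) * ((n:ℝ)-1) = (n:ℝ)^(e2:ℤ) - 1 := by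
    rw [← hcast]; exact sig_mul hn e2
  have hexp : ((n:ℝ)-1) * δ₂ = (m' - m) - u - ((n:ℝ)-1)*s := by
    rw [hδ₂]
    linear_combination u * hs2c + hu
  have heq₂ : R - fm' = (R - m') + ((n:ℝ)-1)*δ₂ := by
    rw [hfm', ht] at *
    linarith [hexp]
  obtain ⟨l₂, hPos2, hNad2, hLen2, hVal2⟩ := segment hn
    (sub_mem_zpows hn hRz hm'z) (sub_mem_zpows hn hRz hfm'z)
    (show (0:ℝ) < R - m' by linarith) (show (0:ℝ) < R - fm' by linarith) hδ₂z heq₂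
  -- the full list
  set l : List (ℝ × ℤ) := l₁ ++ ((m' - m, -(e2:ℤ)) :: l₂) with hl
  have hPos : Pos l := by
    intro q hq
    rw [hl] at hq
    rcases List.mem_append.mp hq with hq | hq
    · exact hPos1 q hq
    · rcases List.mem_cons.mp hq with rfl | hq
      · exact (show (0:ℝ) < m' - m by linarith)
      · exact hPos2 q hq
  have hNad : Nad n l := by
    intro q hq
    rw [hl] at hq
    rcases List.mem_append.mp hq with hq | hq
    · exact hNad1 q hq
    · rcases List.mem_cons.mp hq with rfl | hq
      · exact sub_mem_zpows hn hm'z hmz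
      · exact hNad2 q hq
  have hVL : Val n l = Len l := by
    rw [hl]
    simp only [Val_append, Val_cons, Len_append, Len_cons, hLen1, hVal1, hLen2, hVal2]
    rw [hfm', hu_def]
    ring
  refine ⟨F n P l, memBPL_F hn hPz hPos hNad hVL, ?_, ?_⟩
  · -- g y ∈ Ioo α β
    have hyP : ¬ y ≤ P := not_le.mpr hPy
    rw [F, if_neg hyP]
    rw [PLfun_append hn hPos1 _ P P y (by rw [hLen1]; linarith)]
    rw [hLen1, hVal1, show P + (m - P) = m by ring, show P + (t - P) = t by ring]
    simp only [PLfun]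
    rw [if_pos (show y ≤ m + (m' - m) by linarith)]
    constructor
    · have : (0:ℝ) < (n:ℝ)^(-(e2:ℤ)) * (y - m) := mul_pos hnegpos (by linarith)
      linarith
    · have hlt : (n:ℝ)^(-(e2:ℤ)) * (y - m) < u := by
        rw [hu_def]
        exact mul_lt_mul_of_pos_left (by linarith) hnegpos
      linarith
  · -- identity below lo
    intro z hz
    rw [F, if_pos (by linarith : z ≤ P)]

end Stmt4

/-- `BPLₙ(ℝ)` acts approximately order `k`-transitively on `ℝ` for every
`k ≥ 1`: given `x₁ < ⋯ < x_k` in `ℝ` and closed intervals `I₁ < ⋯ < I_k` with nonempty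
interiors (`Iᵢ = [aᵢ, bᵢ]` with `aᵢ < bᵢ`, and every point of `Iᵢ` less than every point
of `Iⱼ` for `i < j`), some `f ∈ BPLₙ(ℝ)` takes each `xᵢ` into `Iᵢ`. -/

theorem stmt_4 (n : ℕ) (hn : 2 ≤ n) (k : ℕ) (hk : 1 ≤ k)
    (x a b : Fin k → ℝ) (hx : StrictMono x)
    (hab : ∀ i, a i < b i)
    (hord : ∀ i j : Fin k, i < j → b i < a j) :
    ∃ f : ℝ → ℝ, MemBPL n f ∧ ∀ i, f (x i) ∈ Set.Icc (a i) (b i) := by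
  have key : ∀ i : ℕ, i ≤ k → ∃ f : ℝ → ℝ, MemBPL n f ∧
      ∀ j : Fin k, (j:ℕ) < i → f (x j) ∈ Set.Icc (a j) (b j) := by
    intro i
    induction i with
    | zero => exact fun _ => ⟨id, Stmt4.memBPL_id, fun j hj => absurd hj (Nat.not_lt_zero _)⟩
    | succ i ih =>
      intro hik
      obtain ⟨f, hf, hplaced⟩ := ih (Nat.le_of_succ_le hik)
      have hik' : i < k := hik
      set I : Fin k := ⟨i, hik'⟩ with hI
      have hmonof : StrictMono f := hf.1.1
      by_cases hi0 : i = 0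
      · subst hi0
        set lo : ℝ := min (f (x I)) (a I) - 1 with hlo
        obtain ⟨g, hg, hgy, hgid⟩ := Stmt4.mover hn
          (show lo < f (x I) by
            simp only [hlo]
            have := min_le_left (f (x I)) (a I); linarith)
          (show lo < a I by
            simp only [hlo]
            have := min_le_right (f (x I)) (a I); linarith)
          (hab I)
        refine ⟨g ∘ f, Stmt4.memBPL_comp hn hf hg, ?_⟩
        intro j hj
        have hj0 : j = I := by
          apply Fin.ext
          simp only [hI]
          omega
        subst hj0
        exact ⟨le_of_lt hgy.1, le_of_lt hgy.2⟩
      · have hi1 : 1 ≤ i := Nat.one_le_iff_ne_zero.mpr hi0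
        set I' : Fin k := ⟨i - 1, by omega⟩ with hI'
        have hI'I : I' < I := by
          rw [Fin.lt_def]
          simp only [hI, hI']
          omega
        have hfI' := hplaced I' (by simp only [hI']; omega)
        have hlo1 : f (x I') < f (x I) := hmonof (hx hI'I)
        have hlo2 : f (x I') < a I := lt_of_le_of_lt hfI'.2 (hord I' I hI'I)
        obtain ⟨g, hg, hgy, hgid⟩ := Stmt4.mover hn hlo1 hlo2 (hab I)
        refine ⟨g ∘ f, Stmt4.memBPL_comp hn hf hg, ?_⟩
        intro j hj
        by_cases hji : (j:ℕ) < i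
        · have hxle : x j ≤ x I' := by
            apply hx.monotone
            rw [Fin.le_def]
            simp only [hI']
            omega
          have hle : f (x j) ≤ f (x I') := hmonof.monotone hxle
          have : (g ∘ f) (x j) = f (x j) := hgid _ hle
          rw [this]
          exact hplaced j hji
        · have hj' : j = I := by
            apply Fin.ext
            simp only [hI]
            omega
          subst hj'
          exact ⟨le_of_lt hgy.1, le_of_lt hgy.2⟩
  obtain ⟨f, hf, hp⟩ := key k le_rfl
  exact ⟨f, hf, fun i => hp i i.isLt⟩
end
end

section
/- Let n ≥ 2 and r ≥ 1 be integers. Let x₁, x₂, …, x_k be distinct points of S_r arranged in counterclockwise order (i.e., admitting lifts t₁ < t₂ < ⋯ < t_k < t₁ + r in ℝ), and let I₁, I₂, …, I_k be pairwise disjoint closed arcs with nonempty interiors in S_r, also arranged in counterclockwise order. Then there is an element f ∈ BT_{n,r} with f(xᵢ) ∈ Iᵢ for all 1 ≤ i ≤ k. -/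
noncomputable section

/-- Piecewise linearity data on the circle `ℝ/rℤ`, expressed for an `r`-periodic lift
`F : ℝ → ℝ`: there is an `r`-periodic break set `B ⊆ ℤ[1/n]`, finite in each period,
off which `F` is locally affine with slopes integral powers of `n`. -/
def CircPL (n : ℕ) (r : ℝ) (F : ℝ → ℝ) : Prop :=
  ∃ B : Set ℝ,
    (B ∩ Set.Ico (0 : ℝ) r).Finite ∧ (∀ x ∈ B, x + r ∈ B ∧ x - r ∈ B) ∧ B ⊆ zpows n ∧
    ∀ x ∉ B, ∃ (k : ℤ) (c : ℝ), ∃ ε > 0, ∀ y : ℝ, |y - x| < ε → F y = (n : ℝ) ^ k * y + c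

/-- Membership in `T_{n,r}`: an orientation-preserving homeomorphism of the circle
`S_r = ℝ/rℤ` (encoded by a strictly monotone surjective lift commuting with `x ↦ x + r`),
piecewise linear with finitely many breaks, all breaks in `ℤ[1/n]`, all slopes integral
powers of `n`, and mapping (the image of) `ℤ[1/n]` into itself. -/
def MemT (n : ℕ) (r : ℝ) (f : AddCircle r → AddCircle r) : Prop :=
  ∃ F : ℝ → ℝ,
    (∀ x : ℝ, f (x : AddCircle r) = ((F x : ℝ) : AddCircle r)) ∧
    (∀ x : ℝ, F (x + r) = F x + r) ∧
    StrictMono F ∧ Function.Surjective F ∧ CircPL n r F ∧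
    (∀ q ∈ zpows n, F q ∈ zpows n)

/-- The generating set of `BT_{n,r}`: elements of `T_{n,r}` that restrict to the identity
on some nonempty open arc of `S_r`. -/
def BTgen (n : ℕ) (r : ℝ) : Set (Equiv.Perm (AddCircle r)) :=
  {f : Equiv.Perm (AddCircle r) | MemT n r ⇑f ∧
    ∃ u v : ℝ, u < v ∧ ∀ w ∈ Set.Ioo u v, f ((w : ℝ) : AddCircle r) = ((w : ℝ) : AddCircle r)}

/-- `BT_{n,r}`, the subgroup of `T_{n,r}` generated by the elements that are the identity
on some nonempty open arc. -/
def BTgrp (n : ℕ) (r : ℝ) : Subgroup (Equiv.Perm (AddCircle r)) :=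
  Subgroup.closure (BTgen n r)

namespace Stmt5

variable {n : ℕ}

lemma ncast_pos (hn : 2 ≤ n) : (0:ℝ) < (n:ℝ) := by
  have : (0:ℕ) < n := by omega
  exact_mod_cast this

lemma ncast_ne (hn : 2 ≤ n) : (n:ℝ) ≠ 0 := ne_of_gt (ncast_pos hn)

lemma one_lt_ncast (hn : 2 ≤ n) : (1:ℝ) < (n:ℝ) := by
  have : (1:ℕ) < n := by omega
  exact_mod_cast this

lemma intCast_mem_zpows (m : ℤ) : ((m:ℝ)) ∈ zpows n := ⟨m, 0, by simp⟩

lemma natCast_mem_zpows (m : ℕ) : ((m:ℝ)) ∈ zpows n := by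
  simpa using intCast_mem_zpows (n := n) (m : ℤ)

lemma zpow_mem_zpows (b : ℤ) : (n:ℝ)^b ∈ zpows n := ⟨1, b, by simp⟩

lemma pow_mem_zpows (e : ℕ) : (n:ℝ)^e ∈ zpows n := by
  simpa [zpow_natCast] using zpow_mem_zpows (n := n) (e : ℤ)

lemma add_mem_zpows (hn : 2 ≤ n) {x y : ℝ} (hx : x ∈ zpows n) (hy : y ∈ zpows n) :
    x + y ∈ zpows n := by
  obtain ⟨A, B, rfl⟩ := hx
  obtain ⟨A', B', rfl⟩ := hy
  set m := min B B' with hm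
  have h1 : ((n:ℝ))^((B - m).toNat : ℤ) = (n:ℝ)^(B - m) := by
    congr 1; omega
  have h2 : ((n:ℝ))^((B' - m).toNat : ℤ) = (n:ℝ)^(B' - m) := by
    congr 1; omega
  refine ⟨A * (n:ℕ)^(B - m).toNat + A' * (n:ℕ)^(B' - m).toNat, m, ?_⟩
  have hne := ncast_ne hn
  push_cast
  rw [← zpow_natCast (n:ℝ) (B - m).toNat, ← zpow_natCast (n:ℝ) (B' - m).toNat, h1, h2,
    add_mul, mul_assoc, mul_assoc, ← zpow_add₀ hne, ← zpow_add₀ hne]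
  have e1 : B - m + m = B := by omega
  have e2 : B' - m + m = B' := by omega
  rw [e1, e2]

lemma neg_mem_zpows {x : ℝ} (hx : x ∈ zpows n) : -x ∈ zpows n := by
  obtain ⟨A, B, rfl⟩ := hx
  exact ⟨-A, B, by push_cast; ring⟩

lemma sub_mem_zpows (hn : 2 ≤ n) {x y : ℝ} (hx : x ∈ zpows n) (hy : y ∈ zpows n) :
    x - y ∈ zpows n := by
  simpa [sub_eq_add_neg] using add_mem_zpows hn hx (neg_mem_zpows hy)

lemma mul_mem_zpows (hn : 2 ≤ n) {x y : ℝ} (hx : x ∈ zpows n) (hy : y ∈ zpows n) :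
    x * y ∈ zpows n := by
  obtain ⟨A, B, rfl⟩ := hx
  obtain ⟨A', B', rfl⟩ := hy
  refine ⟨A * A', B + B', ?_⟩
  rw [zpow_add₀ (ncast_ne hn)]
  push_cast
  ring

/-- density of `ℤ[1/n]` -/
lemma exists_zpows_mem_Ioo (hn : 2 ≤ n) {p q : ℝ} (h : p < q) :
    ∃ x ∈ zpows n, p < x ∧ x < q := by
  obtain ⟨m, hm⟩ := pow_unbounded_of_one_lt ((q - p)⁻¹) (one_lt_ncast hn)
  have hnp := ncast_pos hn
  have hpow : (0:ℝ) < (n:ℝ)^m := by positivity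
  have hlt : ((n:ℝ)^m)⁻¹ < q - p := by
    have h0 : (0:ℝ) < (q - p)⁻¹ := inv_pos.2 (by linarith)
    have := inv_strictAnti₀ h0 hm
    rwa [inv_inv] at this
  set c : ℝ := ((⌊p * (n:ℝ)^m⌋ + 1 : ℤ) : ℝ) with hc
  have hfl : p * (n:ℝ)^m < c := by
    rw [hc]; push_cast; exact Int.lt_floor_add_one _
  have hfl2 : c ≤ p * (n:ℝ)^m + 1 := by
    rw [hc]; push_cast
    have := Int.floor_le (p * (n:ℝ)^m)
    linarith
  have hzp : ((n:ℝ))^(-(m:ℤ)) = ((n:ℝ)^m)⁻¹ := by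
    rw [zpow_neg, zpow_natCast]
  have hxval : ((⌊p * (n:ℝ)^m⌋ + 1 : ℤ) : ℝ) * (n:ℝ)^(-(m:ℤ)) = c / (n:ℝ)^m := by
    rw [hzp, div_eq_mul_inv]
  refine ⟨((⌊p * (n:ℝ)^m⌋ + 1 : ℤ)) * (n:ℝ)^(-(m:ℤ)), ⟨_, _, rfl⟩, ?_, ?_⟩
  · rw [hxval, lt_div_iff₀ hpow]
    linarith
  · rw [hxval, div_lt_iff₀ hpow]
    have : (p + ((n:ℝ)^m)⁻¹) * (n:ℝ)^m = p * (n:ℝ)^m + 1 := by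
      field_simp
    nlinarith [mul_lt_mul_of_pos_right (show p + ((n:ℝ)^m)⁻¹ < q by linarith) hpow]

end Stmt5
set_option linter.unusedSectionVars false
set_option linter.unusedVariables false

namespace Stmt5

/-- basic piecewise map: identity outside `[u,v]`, slope `n^e` on `[u,u+a]`,
translation by `(n^e-1)a` on `[u+a, v-n^e a]`, slope `n^{-e}` on `[v - n^e a, v]`. -/
def gb (n : ℕ) (u a v : ℝ) (e : ℕ) (x : ℝ) : ℝ :=
  max x (min (x + ((n:ℝ)^e - 1)*a)
    (min (u + (n:ℝ)^e*(x-u)) (v - ((n:ℝ)^e)⁻¹*(v-x))))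

section gb

variable {n : ℕ} {u a v : ℝ} {e : ℕ}

lemma hN0 (hn : 2 ≤ n) : (0:ℝ) < (n:ℝ)^e := by positivity
lemma hN1 (hn : 2 ≤ n) : (1:ℝ) ≤ (n:ℝ)^e := one_le_pow₀ (by exact_mod_cast Nat.one_le_of_lt hn)
lemma hNI (hn : 2 ≤ n) : (0:ℝ) < ((n:ℝ)^e)⁻¹ := inv_pos.2 (hN0 hn)
lemma hNI1 (hn : 2 ≤ n) : ((n:ℝ)^e)⁻¹ ≤ 1 := by
  rw [inv_le_one_iff₀]; right; exact hN1 hn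
lemma hNmul (hn : 2 ≤ n) : ((n:ℝ)^e)⁻¹ * (n:ℝ)^e = 1 :=
  inv_mul_cancel₀ (ne_of_gt (hN0 hn))

lemma gb_strictMono (hn : 2 ≤ n) (ha : 0 ≤ a) : StrictMono (gb n u a v e) := by
  have h1 : StrictMono (fun x : ℝ => x + ((n:ℝ)^e - 1)*a) := fun x y h => by
    dsimp; linarith
  have h2 : StrictMono (fun x : ℝ => u + (n:ℝ)^e*(x-u)) := fun x y h => by
    dsimp; nlinarith [hN0 (e := e) hn]
  have h3 : StrictMono (fun x : ℝ => v - ((n:ℝ)^e)⁻¹*(v-x)) := fun x y h => by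
    dsimp; nlinarith [hNI (e := e) hn]
  intro x y hxy
  unfold gb
  exact max_lt_max hxy (min_lt_min (h1 hxy) (min_lt_min (h2 hxy) (h3 hxy)))

lemma gb_ge_self (x : ℝ) : x ≤ gb n u a v e x := le_max_left _ _

section branches

variable (hn : 2 ≤ n) (ha : 0 < a) (hs : u + a < v - (n:ℝ)^e*a)
include hn ha hs

lemma gbA {x : ℝ} (h1 : u ≤ x) (h2 : x ≤ u + a) :
    gb n u a v e x = u + (n:ℝ)^e*(x-u) := by
  have i1 := hN1 (e := e) hn
  have i2 := hNI (e := e) hn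
  have i3 := hNI1 (e := e) hn
  have i4 := hNmul (e := e) hn
  have c21 : u + (n:ℝ)^e*(x-u) ≤ x + ((n:ℝ)^e - 1)*a := by nlinarith
  have c23 : u + (n:ℝ)^e*(x-u) ≤ v - ((n:ℝ)^e)⁻¹*(v-x) := by nlinarith
  have cx : x ≤ u + (n:ℝ)^e*(x-u) := by nlinarith
  unfold gb
  rw [min_eq_left c23, min_eq_right c21, max_eq_right cx]

lemma gbB {x : ℝ} (h1 : u + a ≤ x) (h2 : x ≤ v - (n:ℝ)^e*a) :
    gb n u a v e x = x + ((n:ℝ)^e - 1)*a := by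
  have i1 := hN1 (e := e) hn
  have i2 := hNI (e := e) hn
  have i3 := hNI1 (e := e) hn
  have i4 := hNmul (e := e) hn
  have c12 : x + ((n:ℝ)^e - 1)*a ≤ u + (n:ℝ)^e*(x-u) := by nlinarith
  have c13 : x + ((n:ℝ)^e - 1)*a ≤ v - ((n:ℝ)^e)⁻¹*(v-x) := by nlinarith
  have cx : x ≤ x + ((n:ℝ)^e - 1)*a := by nlinarith
  unfold gb
  rw [min_eq_left (le_min c12 c13), max_eq_right cx]

lemma gbC {x : ℝ} (h1 : v - (n:ℝ)^e*a ≤ x) (h2 : x ≤ v) :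
    gb n u a v e x = v - ((n:ℝ)^e)⁻¹*(v-x) := by
  have i1 := hN1 (e := e) hn
  have i2 := hNI (e := e) hn
  have i3 := hNI1 (e := e) hn
  have i4 := hNmul (e := e) hn
  have c32 : v - ((n:ℝ)^e)⁻¹*(v-x) ≤ u + (n:ℝ)^e*(x-u) := by nlinarith
  have c31 : v - ((n:ℝ)^e)⁻¹*(v-x) ≤ x + ((n:ℝ)^e - 1)*a := by nlinarith
  have cx : x ≤ v - ((n:ℝ)^e)⁻¹*(v-x) := by nlinarith
  unfold gb
  rw [min_eq_right c32, min_eq_right c31, max_eq_right cx]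

lemma gbD {x : ℝ} (h2 : v ≤ x) : gb n u a v e x = x := by
  have i2 := hNI (e := e) hn
  have i3 := hNI1 (e := e) hn
  have c3x : v - ((n:ℝ)^e)⁻¹*(v-x) ≤ x := by nlinarith
  unfold gb
  exact max_eq_left (le_trans (min_le_right _ _) (le_trans (min_le_right _ _) c3x))

lemma gbE {x : ℝ} (h2 : x ≤ u) : gb n u a v e x = x := by
  have i1 := hN1 (e := e) hn
  have c2x : u + (n:ℝ)^e*(x-u) ≤ x := by nlinarith
  unfold gb
  exact max_eq_left (le_trans (min_le_right _ _)
    (le_trans (min_le_left _ _) c2x))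

lemma gb_lt_top (hvr : ∀ y : ℝ, v < y → True) {R x : ℝ} (hvR : v < R) (hxR : x < R) :
    gb n u a v e x < R := by
  have i2 := hNI (e := e) hn
  have i3 := hNI1 (e := e) hn
  have c3 : v - ((n:ℝ)^e)⁻¹*(v-x) < R := by nlinarith
  calc gb n u a v e x ≤ max x (v - ((n:ℝ)^e)⁻¹*(v-x)) := by
        apply max_le_max le_rfl
        exact le_trans (min_le_right _ _) (min_le_right _ _)
    _ < R := max_lt hxR c3

end branches

end gb

end Stmt5
namespace Stmt5

/-- representative of `x` in `[u, u+r)` -/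
def prd (r u x : ℝ) : ℝ := x - r * ⌊(x - u)/r⌋

def mover (n : ℕ) (r u a v : ℝ) (e : ℕ) (x : ℝ) : ℝ :=
  gb n u a v e (prd r u x) + r * ⌊(x - u)/r⌋

section prd

variable {r u : ℝ} (hr : 0 < r)
include hr

lemma prd_mem (x : ℝ) : u ≤ prd r u x ∧ prd r u x < u + r := by
  have h1 : (⌊(x - u)/r⌋ : ℝ) ≤ (x - u)/r := Int.floor_le _
  have h2 : (x - u)/r < ⌊(x - u)/r⌋ + 1 := Int.lt_floor_add_one _
  have h3 : r * (⌊(x - u)/r⌋ : ℝ) ≤ x - u := by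
    rw [mul_comm, ← le_div_iff₀ hr]; exact h1
  have h4 : x - u < r * ((⌊(x - u)/r⌋ : ℝ) + 1) := by
    rw [mul_comm, ← div_lt_iff₀ hr]; exact h2
  constructor
  · unfold prd; linarith
  · unfold prd; linarith

lemma flr_char {x : ℝ} {m : ℤ} (h1 : u ≤ x - r*m) (h2 : x - r*m < u + r) :
    ⌊(x - u)/r⌋ = m := by
  rw [Int.floor_eq_iff]
  constructor
  · rw [le_div_iff₀ hr]; linarith
  · rw [div_lt_iff₀ hr]; push_cast; linarith

lemma prd_char {x : ℝ} {m : ℤ} (h1 : u ≤ x - r*m) (h2 : x - r*m < u + r) :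
    prd r u x = x - r*m := by
  unfold prd; rw [flr_char hr h1 h2]

lemma prd_eq_self {x : ℝ} (h1 : u ≤ x) (h2 : x < u + r) : prd r u x = x := by
  have := prd_char hr (x := x) (m := 0) (by simpa using h1) (by simpa using h2)
  simpa using this

lemma flr_add_int (x : ℝ) (m : ℤ) : ⌊(x + m*r - u)/r⌋ = ⌊(x - u)/r⌋ + m := by
  apply flr_char hr
  · have := (prd_mem hr (u := u) x).1
    unfold prd at this
    push_cast
    ring_nf
    ring_nf at this
    linarith
  · have := (prd_mem hr (u := u) x).2
    unfold prd at this
    push_cast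
    ring_nf
    ring_nf at this
    linarith

lemma prd_add_int (x : ℝ) (m : ℤ) : prd r u (x + m*r) = prd r u x := by
  unfold prd
  rw [flr_add_int hr]
  push_cast
  ring

end prd

section mover

variable {n : ℕ} {r u a v : ℝ} {e : ℕ}
variable (hn : 2 ≤ n) (hr : 0 < r) (ha : 0 < a)
  (hs : u + a < v - (n:ℝ)^e*a) (hvr : v < u + r)
include hn hr ha hs hvr

lemma mover_uv : u < v := by
  have := hN1 (n := n) (e := e) hn
  nlinarith

lemma mover_eq_gb {x : ℝ} (h1 : u ≤ x) (h2 : x < u + r) :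
    mover n r u a v e x = gb n u a v e x := by
  unfold mover
  rw [prd_eq_self hr h1 h2, flr_char hr (m := 0) (by simpa using h1) (by simpa using h2)]
  simp

lemma mover_period (x : ℝ) : mover n r u a v e (x + r) = mover n r u a v e x + r := by
  unfold mover
  have h1 := prd_add_int (u := u) hr x 1
  have h2 := flr_add_int (u := u) hr x 1
  have h1' : prd r u (x + r) = prd r u x := by simpa using h1
  have h2' : ⌊(x + r - u)/r⌋ = ⌊(x - u)/r⌋ + 1 := by simpa using h2
  rw [h1', h2']
  push_cast
  ring

lemma mover_map_per (x : ℝ) :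
    u ≤ gb n u a v e (prd r u x) ∧ gb n u a v e (prd r u x) < u + r := by
  obtain ⟨p1, p2⟩ := prd_mem hr (u := u) x
  constructor
  · exact le_trans p1 (gb_ge_self _)
  · exact gb_lt_top hn ha hs (fun _ _ => trivial) (by linarith) p2

lemma mover_strictMono : StrictMono (mover n r u a v e) := by
  intro x y hxy
  have hfl : ⌊(x - u)/r⌋ ≤ ⌊(y - u)/r⌋ := by
    apply Int.floor_le_floor
    gcongr <;> linarith
  have hgb := gb_strictMono (u := u) (a := a) (v := v) (e := e) hn (le_of_lt ha)
  rcases eq_or_lt_of_le hfl with heq | hlt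
  · have hpx : prd r u x < prd r u y := by
      unfold prd
      rw [heq]
      linarith
    unfold mover
    rw [heq]
    have := hgb hpx
    linarith
  · have b1 := (mover_map_per hn hr ha hs hvr x).2
    have b2 := (mover_map_per hn hr ha hs hvr y).1
    have hcast : (⌊(x - u)/r⌋ : ℝ) + 1 ≤ (⌊(y - u)/r⌋ : ℝ) := by
      exact_mod_cast hlt
    have : r * (⌊(x - u)/r⌋ : ℝ) + r ≤ r * (⌊(y - u)/r⌋ : ℝ) := by
      nlinarith
    unfold mover
    linarith

lemma gb_surj_aux {y0 : ℝ} (hy1 : u ≤ y0) (hy2 : y0 < u + r) :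
    ∃ x0, u ≤ x0 ∧ x0 < u + r ∧ gb n u a v e x0 = y0 := by
  have i1 := hN1 (n := n) (e := e) hn
  have i0 := hN0 (n := n) (e := e) hn
  have i2 := hNI (n := n) (e := e) hn
  have i3 := hNI1 (n := n) (e := e) hn
  have i4 := hNmul (n := n) (e := e) hn
  rcases le_or_gt y0 (u + (n:ℝ)^e * a) with h1 | h1
  · refine ⟨u + ((n:ℝ)^e)⁻¹*(y0 - u), by nlinarith, by nlinarith, ?_⟩
    rw [gbA hn ha hs (by nlinarith) (by nlinarith)]
    rw [show u + ((n:ℝ)^e)⁻¹*(y0 - u) - u = ((n:ℝ)^e)⁻¹*(y0 - u) from by ring,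
      ← mul_assoc, mul_inv_cancel₀ (ne_of_gt i0), one_mul]
    ring
  · rcases le_or_gt y0 (v - a) with h2 | h2
    · refine ⟨y0 - ((n:ℝ)^e - 1)*a, by nlinarith, by nlinarith, ?_⟩
      rw [gbB hn ha hs (by nlinarith) (by nlinarith)]
      ring
    · rcases le_or_gt y0 v with h3 | h3
      · refine ⟨v - (n:ℝ)^e*(v - y0), by nlinarith, by nlinarith, ?_⟩
        rw [gbC hn ha hs (by nlinarith) (by nlinarith)]
        rw [show v - (v - (n:ℝ)^e*(v - y0)) = (n:ℝ)^e*(v - y0) from by ring,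
          ← mul_assoc, inv_mul_cancel₀ (ne_of_gt i0), one_mul]
        ring
      · exact ⟨y0, by nlinarith, hy2, gbD hn ha hs (le_of_lt h3)⟩

lemma mover_surjective : Function.Surjective (mover n r u a v e) := by
  intro y
  obtain ⟨p1, p2⟩ := prd_mem hr (u := u) y
  obtain ⟨x0, hx1, hx2, hx3⟩ := gb_surj_aux hn hr ha hs hvr p1 p2
  refine ⟨x0 + ⌊(y - u)/r⌋ * r, ?_⟩
  unfold mover
  rw [prd_add_int hr, prd_eq_self hr hx1 hx2, hx3]
  rw [flr_add_int hr, flr_char hr (m := 0) (by simpa using hx1) (by simpa using hx2)]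
  unfold prd
  push_cast
  ring

lemma mover_fixed {x : ℝ} (hx : ∀ m : ℤ, x + m*r ∉ Set.Ioo u v) :
    mover n r u a v e x = x := by
  obtain ⟨p1, p2⟩ := prd_mem hr (u := u) x
  have hxp : prd r u x = x + (-⌊(x - u)/r⌋)*r := by
    unfold prd; push_cast; ring
  have hnotin := hx (-⌊(x - u)/r⌋)
  push_cast at hnotin
  rw [← hxp] at hnotin
  have : gb n u a v e (prd r u x) = prd r u x := by
    rcases le_or_gt (prd r u x) u with h | h
    · exact gbE hn ha hs h
    · have : ¬ (prd r u x < v) := fun hc => hnotin ⟨h, hc⟩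
      exact gbD hn ha hs (not_lt.1 this)
  unfold mover
  rw [this]
  unfold prd
  ring

end mover

end Stmt5
namespace Stmt5

section moverprops

variable {n : ℕ} {r u a v : ℝ} {e : ℕ}
variable (hn : 2 ≤ n) (hr : 0 < r) (ha : 0 < a)
  (hs : u + a < v - (n:ℝ)^e*a) (hvr : v < u + r)
include hn hr ha hs hvr

lemma inv_pow_zpows : ((n:ℝ)^e)⁻¹ = (n:ℝ)^(-(e:ℤ)) := by
  rw [zpow_neg, zpow_natCast]

lemma mover_zpows (hu : u ∈ zpows n) (haz : a ∈ zpows n) (hvz : v ∈ zpows n)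
    (hrz : r ∈ zpows n) {q : ℝ} (hq : q ∈ zpows n) :
    mover n r u a v e q ∈ zpows n := by
  obtain ⟨p1, p2⟩ := prd_mem hr (u := u) q
  have hx0 : prd r u q ∈ zpows n := by
    unfold prd
    exact sub_mem_zpows hn hq (mul_mem_zpows hn hrz (intCast_mem_zpows _))
  set x := prd r u q with hxdef
  have hNz : ((n:ℝ)^e) ∈ zpows n := pow_mem_zpows e
  have hNIz : ((n:ℝ)^e)⁻¹ ∈ zpows n := by
    rw [inv_pow_zpows hn hr ha hs hvr]
    exact zpow_mem_zpows _
  have hgb : gb n u a v e x ∈ zpows n := by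
    rcases le_or_gt x (u + a) with h1 | h1
    · rw [gbA hn ha hs p1 h1]
      exact add_mem_zpows hn hu (mul_mem_zpows hn hNz (sub_mem_zpows hn hx0 hu))
    · rcases le_or_gt x (v - (n:ℝ)^e*a) with h2 | h2
      · rw [gbB hn ha hs (le_of_lt h1) h2]
        have one_mem : (1:ℝ) ∈ zpows n := by
          simpa using intCast_mem_zpows (n := n) 1
        exact add_mem_zpows hn hx0
          (mul_mem_zpows hn (sub_mem_zpows hn hNz one_mem) haz)
      · rcases le_or_gt x v with h3 | h3
        · rw [gbC hn ha hs (le_of_lt h2) h3]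
          exact sub_mem_zpows hn hvz
            (mul_mem_zpows hn hNIz (sub_mem_zpows hn hvz hx0))
        · rw [gbD hn ha hs (le_of_lt h3)]
          exact hx0
  unfold mover
  exact add_mem_zpows hn hgb (mul_mem_zpows hn hrz (intCast_mem_zpows _))

lemma mover_circPL (hu : u ∈ zpows n) (haz : a ∈ zpows n) (hvz : v ∈ zpows n)
    (hrz : r ∈ zpows n) : CircPL n r (mover n r u a v e) := by
  classical
  have i1 := hN1 (n := n) (e := e) hn
  have i0 := hN0 (n := n) (e := e) hn
  refine ⟨{x | ∃ m : ℤ, x - m*r ∈ ({u, u + a, v - (n:ℝ)^e*a, v} : Set ℝ)}, ?_, ?_, ?_, ?_⟩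
  · apply Set.Finite.subset
      (Set.Finite.image (fun w => w - r*⌊w/r⌋)
        (Set.toFinite ({u, u + a, v - (n:ℝ)^e*a, v} : Set ℝ)))
    rintro x ⟨⟨m, hw⟩, hx1, hx2⟩
    refine ⟨x - m*r, hw, ?_⟩
    have hfl : ⌊(x - m*r)/r⌋ = -m := by
      have heq : (x - m*r)/r = x/r + ((-m : ℤ) : ℝ) := by push_cast; field_simp; ring
      rw [heq, Int.floor_add_intCast]
      have h0 : ⌊x/r⌋ = 0 := by
        rw [Int.floor_eq_zero_iff]
        constructor
        · positivity
        · rw [div_lt_one hr]; exact hx2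
      omega
    dsimp only
    rw [hfl]
    push_cast
    ring
  · rintro x ⟨m, hw⟩
    constructor
    · refine ⟨m+1, ?_⟩
      have : x + r - ((m+1 : ℤ) : ℝ)*r = x - m*r := by push_cast; ring
      rw [this]; exact hw
    · refine ⟨m-1, ?_⟩
      have : x - r - ((m-1 : ℤ) : ℝ)*r = x - m*r := by push_cast; ring
      rw [this]; exact hw
  · rintro x ⟨m, hw⟩
    have hwz : x - m*r ∈ zpows n := by
      rcases hw with h|h|h|h
      · rw [h]; exact hu
      · rw [h]; exact add_mem_zpows hn hu haz
      · rw [h]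
        exact sub_mem_zpows hn hvz (mul_mem_zpows hn (pow_mem_zpows e) haz)
      · rw [h]; exact hvz
    have : x = (x - m*r) + m*r := by ring
    rw [this]
    exact add_mem_zpows hn hwz (mul_mem_zpows hn (intCast_mem_zpows _) hrz)
  · intro x hx
    set kx := ⌊(x - u)/r⌋ with hkx
    obtain ⟨p1, p2⟩ := prd_mem hr (u := u) x
    have hx0 : prd r u x = x - kx*r := by unfold prd; rw [← hkx]; ring
    have hne : ∀ w ∈ ({u, u + a, v - (n:ℝ)^e*a, v} : Set ℝ), prd r u x ≠ w := by
      intro w hwmem heq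
      exact hx ⟨kx, by rw [← hx0, heq]; exact hwmem⟩
    have ne1 : prd r u x ≠ u := hne u (by simp)
    have ne2 : prd r u x ≠ u + a := hne (u+a) (by simp)
    have ne3 : prd r u x ≠ v - (n:ℝ)^e*a := hne _ (by simp)
    have ne4 : prd r u x ≠ v := hne v (by simp)
    -- helper to produce the affine data on an open subinterval (lo, hi) of (u, u+r)
    have key : ∀ lo hi : ℝ, u ≤ lo → hi ≤ u + r → lo < prd r u x → prd r u x < hi →
        ∀ K : ℤ, ∀ C : ℝ, (∀ y0, lo < y0 → y0 < hi → gb n u a v e y0 = (n:ℝ)^K * y0 + C) →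
        ∃ (K' : ℤ) (C' : ℝ), ∃ ε > 0, ∀ y : ℝ, |y - x| < ε →
          mover n r u a v e y = (n:ℝ)^K' * y + C' := by
      intro lo hi hlo hhi h1 h2 K C hform
      refine ⟨K, C + r*kx - (n:ℝ)^K * (r*kx), min (prd r u x - lo) (hi - prd r u x),
        lt_min (by linarith) (by linarith), ?_⟩
      intro y hy
      rw [abs_lt] at hy
      have hxval : x - r*kx = prd r u x := by rw [hx0]; ring
      have hylo : lo < y - r*kx := by
        have h3 := min_le_left (prd r u x - lo) (hi - prd r u x)
        linarith [hy.1]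
      have hyhi : y - r*kx < hi := by
        have h3 := min_le_right (prd r u x - lo) (hi - prd r u x)
        linarith [hy.2]
      have hyin1 : u ≤ y - r*kx := le_trans hlo (le_of_lt hylo)
      have hyin2 : y - r*kx < u + r := lt_of_lt_of_le hyhi hhi
      have hprdy : prd r u y = y - r*kx := prd_char hr hyin1 hyin2
      have hflry : ⌊(y - u)/r⌋ = kx := flr_char hr hyin1 hyin2
      unfold mover
      rw [hprdy, hflry, hform _ hylo hyhi]
      ring
    have iua : u < u + a := by linarith
    have hNa : 0 < (n:ℝ)^e * a := by positivity
    have hx0u : u < prd r u x := lt_of_le_of_ne p1 (Ne.symm ne1)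
    rcases lt_trichotomy (prd r u x) (u + a) with h|h|h
    · refine key u (u+a) le_rfl (by linarith) hx0u h (e:ℤ) (u - (n:ℝ)^e*u) ?_
      intro y0 hh1 hh2
      rw [gbA hn ha hs (le_of_lt hh1) (le_of_lt hh2), zpow_natCast]
      ring
    · exact absurd h ne2
    · rcases lt_trichotomy (prd r u x) (v - (n:ℝ)^e*a) with h'|h'|h'
      · refine key (u+a) (v - (n:ℝ)^e*a) (le_of_lt iua) (by linarith) h h'
          0 (((n:ℝ)^e - 1)*a) ?_
        intro y0 hh1 hh2
        rw [gbB hn ha hs (le_of_lt hh1) (le_of_lt hh2), zpow_zero]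
        ring
      · exact absurd h' ne3
      · rcases lt_trichotomy (prd r u x) v with h''|h''|h''
        · refine key (v - (n:ℝ)^e*a) v (by linarith) (by linarith) h' h''
            (-(e:ℤ)) (v - ((n:ℝ)^e)⁻¹*v) ?_
          intro y0 hh1 hh2
          rw [gbC hn ha hs (le_of_lt hh1) (le_of_lt hh2),
            ← inv_pow_zpows hn hr ha hs hvr]
          ring
        · exact absurd h'' ne4
        · refine key v (u+r) (by linarith) le_rfl h'' p2 0 0 ?_
          intro y0 hh1 hh2
          rw [gbD hn ha hs (le_of_lt hh1), zpow_zero]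
          ring

end moverprops

end Stmt5
namespace Stmt5

section circle

variable {r : ℝ} {F : ℝ → ℝ}

lemma iter_period (hper : ∀ x, F (x + r) = F x + r) :
    ∀ (m : ℤ) (x : ℝ), F (x + m*r) = F x + m*r := by
  intro m
  induction m using Int.induction_on with
  | zero => simp
  | succ i ih =>
    intro x
    have h1 : x + (((i:ℤ) + 1 : ℤ) : ℝ)*r = (x + (i:ℤ)*r) + r := by push_cast; ring
    rw [h1, hper, ih]
    push_cast; ring
  | pred i ih =>
    intro x
    have h1 : x + ((-(i:ℤ)-1 : ℤ) : ℝ)*r + r = x + ((-(i:ℤ) : ℤ) : ℝ)*r := by push_cast; ring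
    have hh := hper (x + ((-(i:ℤ)-1 : ℤ) : ℝ)*r)
    rw [h1] at hh
    have h2 := ih x
    push_cast at h2 hh ⊢
    linarith

/-- the induced map on the circle -/
def cmap (F : ℝ → ℝ) (hper : ∀ x, F (x + r) = F x + r) :
    AddCircle r → AddCircle r :=
  Quotient.map' F (by
    intro x y hxy
    rw [QuotientAddGroup.leftRel_apply] at hxy ⊢
    obtain ⟨k, hk⟩ := (AddSubgroup.mem_zmultiples_iff).1 hxy
    refine (AddSubgroup.mem_zmultiples_iff).2 ⟨k, ?_⟩
    have hy : y = x + k*r := by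
      rw [zsmul_eq_mul] at hk
      linarith
    rw [hy, iter_period hper k x, zsmul_eq_mul]
    ring)

lemma cmap_mk (hper : ∀ x, F (x + r) = F x + r) (x : ℝ) :
    cmap F hper ((x : ℝ) : AddCircle r) = ((F x : ℝ) : AddCircle r) := rfl

lemma cmap_bijective (hper : ∀ x, F (x + r) = F x + r) (hmono : StrictMono F)
    (hsurj : Function.Surjective F) : Function.Bijective (cmap F hper) := by
  constructor
  · intro A B hAB
    induction A using QuotientAddGroup.induction_on with | H x =>
    induction B using QuotientAddGroup.induction_on with | H y =>
    rw [cmap_mk hper, cmap_mk hper] at hAB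
    rw [QuotientAddGroup.eq] at hAB ⊢
    obtain ⟨k, hk⟩ := (AddSubgroup.mem_zmultiples_iff).1 hAB
    rw [zsmul_eq_mul] at hk
    have hFy : F y = F (x + k*r) := by
      rw [iter_period hper k x]; linarith
    have : y = x + k*r := hmono.injective hFy
    refine (AddSubgroup.mem_zmultiples_iff).2 ⟨k, ?_⟩
    rw [zsmul_eq_mul, this]
    ring
  · intro B
    induction B using QuotientAddGroup.induction_on with | H y =>
    obtain ⟨x, hx⟩ := hsurj y
    exact ⟨((x : ℝ) : AddCircle r), by rw [cmap_mk hper, hx]⟩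

/-- permutation of the circle induced by a periodic strictly monotone surjection -/
def permOf (F : ℝ → ℝ) (hper : ∀ x, F (x + r) = F x + r) (hmono : StrictMono F)
    (hsurj : Function.Surjective F) : Equiv.Perm (AddCircle r) :=
  Equiv.ofBijective _ (cmap_bijective hper hmono hsurj)

lemma permOf_apply (hper : ∀ x, F (x + r) = F x + r) (hmono : StrictMono F)
    (hsurj : Function.Surjective F) (x : ℝ) :
    permOf F hper hmono hsurj ((x : ℝ) : AddCircle r) = ((F x : ℝ) : AddCircle r) := by
  unfold permOf
  rw [Equiv.ofBijective_apply]
  exact cmap_mk hper x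

end circle

end Stmt5
namespace Stmt5

lemma moveOne {n : ℕ} {r : ℝ} (hn : 2 ≤ n) (hr : 0 < r) (hrz : r ∈ zpows n)
    {L x T₁ T₂ : ℝ} (hLx : L < x) (hxT : x ≤ T₁) (hT : T₁ < T₂) (hTr : T₂ ≤ L + r) :
    ∃ f : Equiv.Perm (AddCircle r), f ∈ BTgen n r ∧
      (∃ s, T₁ < s ∧ s < T₂ ∧ f ((x : ℝ) : AddCircle r) = ((s : ℝ) : AddCircle r)) ∧
      (∀ w : ℝ, (∀ m : ℤ, w + m*r ∉ Set.Ioo L T₂) →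
        f ((w : ℝ) : AddCircle r) = ((w : ℝ) : AddCircle r)) := by
  set w3 := T₂ - T₁ with hw3
  have hw3p : 0 < w3 := by simp [hw3]; linarith
  set q₁ := T₁ + w3/3 with hq₁
  set q₂ := T₁ + 2*w3/3 with hq₂
  set ρ := min ((x - L)/2) (w3/12) with hρ
  have hρp : 0 < ρ := lt_min (by linarith) (by linarith)
  have hρ1 : ρ ≤ (x - L)/2 := min_le_left _ _
  have hρ2 : ρ ≤ w3/12 := min_le_right _ _
  -- choose the exponent e
  obtain ⟨e₀, he₀⟩ := pow_unbounded_of_one_lt (r/ρ + 1) (one_lt_ncast hn)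
  set e := e₀ + 1 with he
  have he1 : 1 ≤ e := by omega
  set N := (n:ℝ)^e with hN
  have hNbig : r/ρ + 1 < N := by
    calc r/ρ + 1 < (n:ℝ)^e₀ := he₀
      _ ≤ N := by
        rw [hN]
        apply pow_le_pow_right₀ (by exact_mod_cast Nat.one_le_of_lt hn)
        omega
  have hN1' : 1 < N := by
    have : 0 < r/ρ := div_pos hr hρp
    linarith
  have hNr : r < ρ*(N - 1) := by
    have h1 : r/ρ < N - 1 := by linarith
    calc r = ρ * (r/ρ) := by field_simp
      _ < ρ*(N-1) := by apply mul_lt_mul_of_pos_left h1 hρp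
  -- choose a (= w₀)
  have hq₁x : x < q₁ := by rw [hq₁]; linarith
  have hq₁T : T₁ < q₁ := by rw [hq₁]; linarith
  have hq₂T : q₂ < T₂ := by rw [hq₂]; linarith
  have hNpos : (0:ℝ) < N - 1 := by linarith
  have hdivlt : (q₁ - x)/(N-1) < (q₂ - x)/(N-1) := by
    rw [div_lt_div_iff₀ hNpos hNpos]
    have : q₁ < q₂ := by rw [hq₁, hq₂]; linarith
    nlinarith
  obtain ⟨a, haz, ha1, ha2⟩ := exists_zpows_mem_Ioo hn hdivlt
  have hap : 0 < a := lt_trans (div_pos (by linarith) hNpos) ha1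
  set τ := (N - 1)*a with hτ
  have hτ1 : q₁ - x < τ := by
    rw [hτ]
    calc q₁ - x = (N-1) * ((q₁ - x)/(N-1)) := by field_simp
      _ < (N-1)*a := by exact mul_lt_mul_of_pos_left ha1 hNpos
  have hτ2 : τ < q₂ - x := by
    rw [hτ]
    calc (N-1)*a < (N-1)*((q₂ - x)/(N-1)) := mul_lt_mul_of_pos_left ha2 hNpos
      _ = q₂ - x := by field_simp
  have hq₂r : q₂ - x < r := by
    have : q₂ < T₂ := by rw [hq₂]; linarith
    linarith
  have haρ : a < ρ := by
    have h1 : a < (q₂ - x)/(N-1) := ha2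
    have h2 : (q₂ - x)/(N-1) < r/(N-1) := by
      rw [div_lt_div_iff₀ hNpos hNpos]
      nlinarith
    have h3 : r/(N-1) < ρ := by
      rw [div_lt_iff₀ hNpos]
      linarith [hNr]
    linarith
  -- choose u and v
  obtain ⟨u, huz, hu1, hu2⟩ := exists_zpows_mem_Ioo hn (show L < x - a by linarith)
  have hxτa : x + τ + a < T₂ := by
    have : q₂ + ρ < T₂ := by rw [hq₂]; linarith
    linarith
  obtain ⟨v, hvz, hv1, hv2⟩ := exists_zpows_mem_Ioo hn hxτa
  have hNa : N*a = τ + a := by rw [hτ]; ring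
  have hs : u + a < v - N*a := by
    rw [hNa]
    linarith
  have hvr : v < u + r := by linarith
  -- the mover permutation
  have hper := mover_period (n := n) (e := e) hn hr hap hs hvr
  have hmono := mover_strictMono (n := n) (e := e) hn hr hap hs hvr
  have hsurj := mover_surjective (n := n) (e := e) hn hr hap hs hvr
  refine ⟨permOf _ hper hmono hsurj, ⟨⟨mover n r u a v e, permOf_apply hper hmono hsurj,
      hper, hmono, hsurj, mover_circPL hn hr hap hs hvr huz haz hvz hrz,
      fun q hq => mover_zpows hn hr hap hs hvr huz haz hvz hrz hq⟩, v, u + r, hvr, ?_⟩,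
    ⟨x + τ, by linarith, by linarith, ?_⟩, ?_⟩
  · intro w hw
    rw [permOf_apply hper hmono hsurj]
    congr 1
    rw [mover_eq_gb hn hr hap hs hvr (le_trans (le_of_lt (mover_uv hn hr hap hs hvr))
      (le_of_lt hw.1)) hw.2]
    exact gbD hn hap hs (le_of_lt hw.1)
  · rw [permOf_apply hper hmono hsurj]
    congr 1
    rw [mover_eq_gb hn hr hap hs hvr (by linarith) (by linarith)]
    rw [gbB hn hap hs (by linarith) (by rw [hNa]; linarith)]
  · intro w hw
    rw [permOf_apply hper hmono hsurj]
    congr 1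
    apply mover_fixed hn hr hap hs hvr
    intro m hm
    exact hw m ⟨by linarith [hm.1], by linarith [hm.2]⟩

end Stmt5
namespace Stmt5

lemma UP {n : ℕ} {r : ℝ} (hn : 2 ≤ n) (hr : 0 < r) (hrz : r ∈ zpows n) (m : ℕ) :
    ∀ (c C : ℝ) (z α β : Fin m → ℝ),
      C ≤ c + r →
      StrictMono z →
      (∀ i, c < z i) →
      (∀ i, c < α i) →
      (∀ i, α i < β i) →
      (∀ i j, i < j → β i ≤ α j) →
      (∀ i, β i ≤ C) →
      (∀ i, z i < β i) →
      ∃ f : Equiv.Perm (AddCircle r), f ∈ BTgrp n r ∧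
        (∀ i, ∃ s, α i < s ∧ s < β i ∧
          f ((z i : ℝ) : AddCircle r) = ((s : ℝ) : AddCircle r)) ∧
        (∀ w : ℝ, C ≤ w → w ≤ c + r →
          f ((w : ℝ) : AddCircle r) = ((w : ℝ) : AddCircle r)) := by
  induction m with
  | zero =>
    intro c C z α β _ _ _ _ _ _ _ _
    exact ⟨1, one_mem _, fun i => i.elim0, fun w _ _ => rfl⟩
  | succ m IH =>
    intro c C z α β hC hmono hcz hcα hαβ hord hβC hzβ
    set top := Fin.last m with htop
    obtain ⟨A, hAc, hAz, hAlt⟩ : ∃ A, c ≤ A ∧ (∀ i : Fin m, z i.castSucc ≤ A) ∧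
        A < z top := by
      rcases Nat.eq_zero_or_pos m with hm | hm
      · subst hm
        exact ⟨c, le_rfl, fun i => i.elim0, hcz top⟩
      · obtain ⟨m', rfl⟩ : ∃ m', m = m' + 1 := ⟨m - 1, by omega⟩
        refine ⟨max c (z (Fin.castSucc (Fin.last m'))), le_max_left _ _, ?_, ?_⟩
        · intro i
          refine le_trans ?_ (le_max_right _ _)
          exact hmono.monotone (by
            apply Fin.castSucc_le_castSucc_iff.2
            exact Fin.le_last i)
        · apply max_lt (hcz top)
          exact hmono (Fin.castSucc_lt_last _)
    set L := (A + z top)/2 with hL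
    have hLA : A < L := by rw [hL]; linarith
    have hLz : L < z top := by rw [hL]; linarith
    have hcL : c < L := lt_of_le_of_lt hAc hLA
    obtain ⟨g, hgGen, ⟨s, hs1, hs2, hsap⟩, hgfix⟩ :=
      moveOne hn hr hrz hLz (le_max_right (α top) (z top))
        (max_lt (hαβ top) (hzβ top)) (by linarith [hβC top])
    have hαs : α top < s := lt_of_le_of_lt (le_max_left _ _) hs1
    have hzs : z top < s := lt_of_le_of_lt (le_max_right _ _) hs1
    have hsC : s < C := lt_of_lt_of_le hs2 (hβC top)
    obtain ⟨f', hf'mem, hf'move, hf'fix⟩ :=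
      IH c s (fun i => z i.castSucc) (fun i => α i.castSucc) (fun i => β i.castSucc)
        (by linarith)
        (fun i j hij => hmono (by exact Fin.castSucc_lt_castSucc_iff.2 hij))
        (fun i => hcz _) (fun i => hcα _) (fun i => hαβ _)
        (fun i j hij => hord _ _ (by exact Fin.castSucc_lt_castSucc_iff.2 hij))
        (fun i => le_of_lt (lt_of_le_of_lt
          (hord i.castSucc top (Fin.castSucc_lt_last _)) hαs))
        (fun i => hzβ _)
    refine ⟨f' * g, mul_mem hf'mem (Subgroup.subset_closure hgGen), ?_, ?_⟩
    · intro i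
      induction i using Fin.lastCases with
      | last =>
        refine ⟨s, hαs, hs2, ?_⟩
        rw [Equiv.Perm.mul_apply, hsap]
        exact hf'fix s le_rfl (by linarith)
      | cast j =>
        obtain ⟨sj, hj1, hj2, hj3⟩ := hf'move j
        refine ⟨sj, hj1, hj2, ?_⟩
        rw [Equiv.Perm.mul_apply]
        have hzjA : z j.castSucc ≤ A := hAz j
        have hzjc : c < z j.castSucc := hcz _
        have hzjC : z j.castSucc < C := lt_of_lt_of_le (hzβ _) (hβC _)
        have hgw : g ((z j.castSucc : ℝ) : AddCircle r)
            = ((z j.castSucc : ℝ) : AddCircle r) := by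
          apply hgfix
          intro mm hmem
          rcases lt_trichotomy mm 0 with h | h | h
          · have hm1 : (mm:ℝ) ≤ -1 := by exact_mod_cast (by omega : mm ≤ -1)
            have : (mm:ℝ)*r ≤ -r := by nlinarith
            linarith [hmem.1]
          · subst h
            simp only [Int.cast_zero, zero_mul, add_zero] at hmem
            linarith [hmem.1]
          · have hm1 : (1:ℝ) ≤ (mm:ℝ) := by exact_mod_cast (by omega : 1 ≤ mm)
            have : r ≤ (mm:ℝ)*r := by nlinarith
            linarith [hmem.2, hβC top]
        rw [hgw]
        exact hj3
    · intro w hw1 hw2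
      rw [Equiv.Perm.mul_apply]
      have hgw : g ((w:ℝ) : AddCircle r) = ((w:ℝ) : AddCircle r) := by
        apply hgfix
        intro mm hmem
        rcases lt_trichotomy mm 0 with h | h | h
        · have hm1 : (mm:ℝ) ≤ -1 := by exact_mod_cast (by omega : mm ≤ -1)
          have : (mm:ℝ)*r ≤ -r := by nlinarith
          have hβ := hβC top
          linarith [hmem.1]
        · subst h
          simp only [Int.cast_zero, zero_mul, add_zero] at hmem
          linarith [hmem.2, hβC top]
        · have hm1 : (1:ℝ) ≤ (mm:ℝ) := by exact_mod_cast (by omega : 1 ≤ mm)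
          have : r ≤ (mm:ℝ)*r := by nlinarith
          linarith [hmem.2, hβC top]
      rw [hgw]
      exact hf'fix w (by linarith) hw2

end Stmt5
namespace Stmt5

lemma avoidLat {r : ℝ} (hr : 0 < r) (L R D : ℝ) (hLR : L < R) (hRL : R - L ≤ r) :
    ∃ p, L < p ∧ p < R ∧ ∀ m : ℤ, (R - L)/8 ≤ |p - (D + m*r)| := by
  by_contra hcon
  push_neg at hcon
  have hq := hcon (L + (R-L)/4) (by linarith) (by linarith)
  have hq' := hcon (L + 3*(R-L)/4) (by linarith) (by linarith)
  obtain ⟨m₁, hm₁⟩ := hq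
  obtain ⟨m₂, hm₂⟩ := hq'
  rw [abs_lt] at hm₁ hm₂
  set M := m₂ - m₁ with hM
  have hMr : ((M:ℝ))*r = (m₂:ℝ)*r - (m₁:ℝ)*r := by rw [hM]; push_cast; ring
  rcases lt_trichotomy M 0 with h | h | h
  · have : (M:ℝ) ≤ -1 := by exact_mod_cast (by omega : M ≤ -1)
    nlinarith [hm₁.1, hm₁.2, hm₂.1, hm₂.2]
  · rw [h] at hMr
    push_cast at hMr
    nlinarith [hm₁.1, hm₁.2, hm₂.1, hm₂.2]
  · have : (1:ℝ) ≤ (M:ℝ) := by exact_mod_cast (by omega : 1 ≤ M)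
    nlinarith [hm₁.1, hm₁.2, hm₂.1, hm₂.2]

end Stmt5
namespace Stmt5

lemma coe_add_int {r : ℝ} (x : ℝ) (mm : ℤ) :
    ((x + mm*r : ℝ) : AddCircle r) = ((x : ℝ) : AddCircle r) := by
  rw [QuotientAddGroup.eq]
  refine AddSubgroup.mem_zmultiples_iff.2 ⟨-mm, ?_⟩
  rw [zsmul_eq_mul]; push_cast; ring

end Stmt5

set_option maxHeartbeats 2000000 in
/-- Given distinct points `x₁, …, x_k` of `S_r` in counterclockwise order
(with lifts `t₁ < ⋯ < t_k < t₁ + r`) and pairwise disjoint closed arcs `I₁, …, I_k` with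
nonempty interiors in counterclockwise order, some `f ∈ BT_{n,r}` takes each `xᵢ` into `Iᵢ`. -/
theorem stmt_5 (n : ℕ) (hn : 2 ≤ n) (r : ℕ) (hr : 1 ≤ r) (k : ℕ) (hk : 0 < k)
    (t a b : Fin k → ℝ)
    (htmono : StrictMono t) (htr : ∀ i, t i < t ⟨0, hk⟩ + r)
    (hab : ∀ i, a i < b i)
    (hord : ∀ i j : Fin k, i < j → b i < a j)
    (harc : ∀ i, b i < a ⟨0, hk⟩ + r) :
    ∃ f : Equiv.Perm (AddCircle (r : ℝ)), f ∈ BTgrp n (r : ℝ) ∧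
      ∀ i, ∃ s ∈ Set.Icc (a i) (b i),
        f ((t i : ℝ) : AddCircle (r : ℝ)) = ((s : ℝ) : AddCircle (r : ℝ)) := by
  classical
  open Stmt5 in
  set rr : ℝ := (r : ℝ) with hrrdef
  have hrr : (0:ℝ) < rr := by
    rw [hrrdef]
    have : (0:ℕ) < r := hr
    exact_mod_cast this
  have hrz : rr ∈ zpows n := Stmt5.natCast_mem_zpows r
  set i0 : Fin k := ⟨0, hk⟩ with hi0
  set lst : Fin k := ⟨k-1, by omega⟩ with hlst
  have ht0 : ∀ i, t i0 ≤ t i := fun i => htmono.monotone (by simp [hi0, Fin.le_def])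
  have htl : ∀ i, t i ≤ t lst := fun i => htmono.monotone
    (by simp [hlst, Fin.le_def]; omega)
  have hlt0 : ∀ i : Fin k, i ≠ i0 → i0 < i := by
    intro i hi
    rw [Fin.lt_def]
    simp [hi0]
    rcases Nat.eq_zero_or_pos i.1 with h | h
    · exact absurd (Fin.ext (by simp [hi0, h])) hi
    · exact h
  have hltl : ∀ i : Fin k, i ≠ lst → i < lst := by
    intro i hi
    rw [Fin.lt_def]
    simp only [hlst]
    have h2 := i.2
    rcases Nat.lt_or_ge i.1 (k-1) with h | h
    · exact h
    · exact absurd (Fin.ext (by simp [hlst]; omega)) hi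
  have ha0 : ∀ i, a i0 ≤ a i := by
    intro i
    rcases eq_or_ne i i0 with h | h
    · rw [h]
    · exact le_of_lt (lt_trans (hab i0) (hord i0 i (hlt0 i h)))
  have hbl : ∀ i, b i ≤ b lst := by
    intro i
    rcases eq_or_ne i lst with h | h
    · rw [h]
    · exact le_of_lt (lt_trans (hord i lst (hltl i h)) (hab lst))
  have hgap : t lst < t i0 + rr := htr lst
  set δ : ℝ := (t i0 + rr - t lst)/2 with hδdef
  have hδ : 0 < δ := by rw [hδdef]; linarith
  have hδr : δ ≤ rr/2 := by
    rw [hδdef]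
    have := ht0 lst
    linarith
  set γ : ℝ := (a i0 + rr - b lst)/2 with hγdef
  have hγ : 0 < γ := by
    rw [hγdef]
    have := harc lst
    linarith
  set D : ℝ := b lst + γ with hDdef
  obtain ⟨p, hp1, hp2, hpavoid0⟩ := Stmt5.avoidLat hrr (t lst) (t lst + δ/2) D
    (by linarith) (by linarith)
  set Δ : ℝ := δ/16 with hΔdef
  have hΔ : 0 < Δ := by rw [hΔdef]; linarith
  have hpavoid : ∀ mm : ℤ, Δ ≤ |p - (D + mm*rr)| := by
    intro mm
    have h := hpavoid0 mm
    have : (t lst + δ/2 - t lst)/8 = Δ := by rw [hΔdef]; ring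
    rwa [this] at h
  -- the lattice shift
  set m : ℤ := ⌊(p + rr - D)/rr⌋ with hmdef
  set E : ℝ := D + m*rr with hEdef
  have hEbounds : p < E ∧ E ≤ p + rr := by
    have h1 : ((m:ℝ)) ≤ (p + rr - D)/rr := Int.floor_le _
    have h2 : (p + rr - D)/rr < (m:ℝ) + 1 := Int.lt_floor_add_one _
    rw [le_div_iff₀ hrr] at h1
    rw [div_lt_iff₀ hrr] at h2
    constructor
    · rw [hEdef]; nlinarith
    · rw [hEdef]; nlinarith
  have hE1 : p + Δ ≤ E := by
    have h := hpavoid m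
    rcases abs_cases (p - (D + m*rr)) with ⟨heq, _⟩ | ⟨heq, _⟩
    · rw [heq] at h
      rw [hEdef]
      linarith [hEbounds.1]
    · rw [heq] at h
      rw [hEdef]
      linarith
  have hE2 : E ≤ p + rr - Δ := by
    have h := hpavoid (m - 1)
    have hcast : ((m - 1 : ℤ):ℝ) = (m:ℝ) - 1 := by push_cast; ring
    rw [hcast] at h
    rcases abs_cases (p - (D + ((m:ℝ) - 1)*rr)) with ⟨heq, _⟩ | ⟨heq, _⟩
    · rw [heq] at h
      rw [hEdef]
      linarith
    · rw [heq] at h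
      rw [hEdef]
      linarith [hEbounds.2]
  set η : ℝ := min (δ/32) γ with hηdef
  have hη : 0 < η := lt_min (by linarith) hγ
  have hη1 : η ≤ δ/32 := min_le_left _ _
  have hη2 : η ≤ γ := min_le_right _ _
  -- slot width helpers
  have hkcast : (1:ℝ) ≤ (k:ℝ) := by exact_mod_cast hk
  have hden : (0:ℝ) < 2*(k:ℝ) + 2 := by linarith
  have hicast : ∀ i : Fin k, ((i.1:ℝ)) + 1 ≤ (k:ℝ) := by
    intro i
    have := i.2
    exact_mod_cast this
  have hijcast : ∀ i j : Fin k, i < j → ((i.1:ℝ)) + 1 ≤ (j.1:ℝ) := by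
    intro i j hij
    have : i.1 + 1 ≤ j.1 := hij
    exact_mod_cast this
  -- Phase A
  set hA : ℝ := Δ/(2*(k:ℝ)+2) with hhAdef
  have hAp : 0 < hA := div_pos hΔ hden
  have hAtot : ∀ i : Fin k, (2*(i.1:ℝ)+2)*hA ≤ Δ := by
    intro i
    have h1 : (2*(i.1:ℝ)+2) ≤ 2*(k:ℝ)+2 := by have := hicast i; linarith
    calc (2*(i.1:ℝ)+2)*hA ≤ (2*(k:ℝ)+2)*hA :=
          mul_le_mul_of_nonneg_right h1 (le_of_lt hAp)
      _ = Δ := by rw [hhAdef]; field_simp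
  have hUPA := Stmt5.UP hn hrr hrz k (t i0 - δ) (t i0 - δ + rr) t
    (fun i => p + (2*(i.1:ℝ)+1)*hA) (fun i => p + (2*(i.1:ℝ)+2)*hA)
    le_rfl htmono
    (fun i => by (try dsimp only); have := ht0 i; linarith)
    (fun i => by
      (try dsimp only)
      have := htl i0
      nlinarith [hAp, (show (0:ℝ) ≤ 2*(i.1:ℝ)+1 by positivity)])
    (fun i => by (try dsimp only); nlinarith [hAp])
    (fun i j hij => by
      (try dsimp only)
      have h1 := hijcast i j hij
      have : (2*(i.1:ℝ)+2) ≤ (2*(j.1:ℝ)+1) := by linarith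
      have := mul_le_mul_of_nonneg_right this (le_of_lt hAp)
      linarith)
    (fun i => by
      (try dsimp only)
      have h1 := hAtot i
      have hwin : t i0 - δ + rr = t lst + δ := by rw [hδdef]; ring
      rw [hwin]
      have : p + Δ ≤ t lst + δ := by
        rw [hΔdef]
        linarith
      linarith)
    (fun i => by
      (try dsimp only)
      have := htl i
      nlinarith [hAp, (show (0:ℝ) ≤ 2*(i.1:ℝ)+2 by positivity)])
  obtain ⟨fA, hfAmem, hfAmove, _⟩ := hUPA
  choose y hy0 hy20 hy3 using hfAmove
  have hy1 : ∀ i : Fin k, p + (2*(i.1:ℝ)+1)*hA < y i := hy0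
  have hy2 : ∀ i : Fin k, y i < p + (2*(i.1:ℝ)+2)*hA := hy20
  have hyup : ∀ i, y i < p + Δ := by
    intro i
    have := hAtot i
    linarith [hy2 i]
  have hylow : ∀ i, p < y i := by
    intro i
    have := hy1 i
    nlinarith [hAp, (show (0:ℝ) ≤ 2*(i.1:ℝ)+1 by positivity)]
  -- Phase R
  set hR : ℝ := η/(2*(k:ℝ)+2) with hhRdef
  have hRp : 0 < hR := div_pos hη hden
  have hRtot : ∀ i : Fin k, (2*(i.1:ℝ)+2)*hR ≤ η := by
    intro i
    have h1 : (2*(i.1:ℝ)+2) ≤ 2*(k:ℝ)+2 := by have := hicast i; linarith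
    calc (2*(i.1:ℝ)+2)*hR ≤ (2*(k:ℝ)+2)*hR :=
          mul_le_mul_of_nonneg_right h1 (le_of_lt hRp)
      _ = η := by rw [hhRdef]; field_simp
  have hymono : StrictMono y := by
    intro i j hij
    have h1 := hy2 i
    have h2 := hy1 j
    have h3 := hijcast i j hij
    have : (2*(i.1:ℝ)+2) ≤ (2*(j.1:ℝ)+1) := by linarith
    have := mul_le_mul_of_nonneg_right this (le_of_lt hAp)
    linarith
  have hUPR := Stmt5.UP hn hrr hrz k p (p + rr) y
    (fun i => E + (2*(i.1:ℝ)+1)*hR) (fun i => E + (2*(i.1:ℝ)+2)*hR)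
    le_rfl hymono
    (fun i => hylow i)
    (fun i => by (try dsimp only); nlinarith [hRp, hE1, hΔ, (show (0:ℝ) ≤ 2*(i.1:ℝ)+1 by positivity)])
    (fun i => by (try dsimp only); nlinarith [hRp])
    (fun i j hij => by
      (try dsimp only)
      have h1 := hijcast i j hij
      have : (2*(i.1:ℝ)+2) ≤ (2*(j.1:ℝ)+1) := by linarith
      have := mul_le_mul_of_nonneg_right this (le_of_lt hRp)
      linarith)
    (fun i => by
      (try dsimp only)
      have h1 := hRtot i
      have : η ≤ Δ := by rw [hΔdef]; linarith
      linarith [hE2])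
    (fun i => by
      (try dsimp only)
      have h1 := hyup i
      nlinarith [hRp, hE1, (show (0:ℝ) ≤ 2*(i.1:ℝ)+1 by positivity)])
  obtain ⟨fR, hfRmem, hfRmove, _⟩ := hUPR
  choose y' hy'0 hy'20 hy'3 using hfRmove
  have hy'1 : ∀ i : Fin k, E + (2*(i.1:ℝ)+1)*hR < y' i := hy'0
  have hy'2 : ∀ i : Fin k, y' i < E + (2*(i.1:ℝ)+2)*hR := hy'20
  have hy'up : ∀ i, y' i < E + η := by
    intro i
    have := hRtot i
    linarith [hy'2 i]
  have hy'low : ∀ i, E < y' i := by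
    intro i
    have := hy'1 i
    nlinarith [hRp, (show (0:ℝ) ≤ 2*(i.1:ℝ)+1 by positivity)]
  have hy'mono : StrictMono y' := by
    intro i j hij
    have h1 := hy'2 i
    have h2 := hy'1 j
    have h3 := hijcast i j hij
    have : (2*(i.1:ℝ)+2) ≤ (2*(j.1:ℝ)+1) := by linarith
    have := mul_le_mul_of_nonneg_right this (le_of_lt hRp)
    linarith
  -- Phase B
  set S : ℝ := ((m:ℝ)+1)*rr with hSdef
  have haE : ∀ i, E + γ ≤ a i + S := by
    intro i
    linarith [hEdef, hSdef, hDdef, hγdef, ha0 i]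
  have hbD : ∀ i, b i + S ≤ E + rr := by
    intro i
    linarith [hEdef, hSdef, hDdef, hbl i, hγ]
  have hUPB := Stmt5.UP hn hrr hrz k E (E + rr) y'
    (fun i => a i + S) (fun i => b i + S)
    le_rfl hy'mono
    (fun i => hy'low i)
    (fun i => by (try dsimp only); have := haE i; linarith)
    (fun i => by (try dsimp only); have := hab i; linarith)
    (fun i j hij => by (try dsimp only); have := hord i j hij; linarith)
    (fun i => hbD i)
    (fun i => by
      (try dsimp only)
      have h1 := hy'up i
      have h2 := haE i
      have := hab i
      linarith [hη2])
  obtain ⟨fB, hfBmem, hfBmove, _⟩ := hUPB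
  choose s' hs'0 hs'20 hs'3 using hfBmove
  have hs'1 : ∀ i : Fin k, a i + S < s' i := hs'0
  have hs'2 : ∀ i : Fin k, s' i < b i + S := hs'20
  refine ⟨fB * fR * fA, mul_mem (mul_mem hfBmem hfRmem) hfAmem, ?_⟩
  intro i
  refine ⟨s' i - S, ⟨by linarith [hs'1 i], by linarith [hs'2 i]⟩, ?_⟩
  rw [Equiv.Perm.mul_apply, Equiv.Perm.mul_apply, hy3 i, hy'3 i, hs'3 i]
  have hcoe := Stmt5.coe_add_int (r := rr) (s' i - S) (m+1)
  have hval : (s' i - S) + ((m+1:ℤ):ℝ)*rr = s' i := by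
    push_cast
    linarith [hSdef]
  rw [hval] at hcoe
  exact hcoe
end
end
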